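/- arXiv:2006.03421 — 8 statements merged into one kernel-verified Lean document; each statement's English description precedes it below -/
import Mathlib

section
/- Let U be a topological space, ι an index set, and k ∈ ι. For X ⊆ ᶦU define I_k(X) = {s ∈ ᶦU : s(k) ∈ int {a ∈ U : s[k↦a] ∈ X}}. Then for all X, Y ⊆ ᶦU: (i) I_k(X) ⊆ X; (ii) I_k(X ∩ Y) = I_k(X) ∩ I_k(Y); (iii) I_k(X) ⊆ I_k(I_k(X)); (iv) I_k(ᶦU) = ᶦU. Hence I_k is an S4 interior operator on ℘(ᶦU), so topological cylindric set algebras satisfy the interior-operator axioms (2)–(5) of topological cylindric algebras. -/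
/-- The concrete interior operator
`I_k(X) = {s : s(k) ∈ int {a ∈ U : s[k↦a] ∈ X}}` on `℘(ᶦU)`. -/
def intOp {U : Type*} [TopologicalSpace U] {ι : Type*} [DecidableEq ι]
    (k : ι) (X : Set (ι → U)) : Set (ι → U) :=
  {s | s k ∈ interior {a : U | Function.update s k a ∈ X}}

/-- `I_k` is an S4 interior operator on `℘(ᶦU)`:
(i) `I_k(X) ⊆ X`; (ii) `I_k(X ∩ Y) = I_k(X) ∩ I_k(Y)`;
(iii) `I_k(X) ⊆ I_k(I_k(X))`; (iv) `I_k(ᶦU) = ᶦU`. -/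
theorem intOp_is_interior_operator {U : Type*} [TopologicalSpace U] {ι : Type*}
    [DecidableEq ι] (k : ι) :
    (∀ X : Set (ι → U), intOp k X ⊆ X) ∧
    (∀ X Y : Set (ι → U), intOp k (X ∩ Y) = intOp k X ∩ intOp k Y) ∧
    (∀ X : Set (ι → U), intOp k X ⊆ intOp k (intOp k X)) ∧
    intOp k (Set.univ : Set (ι → U)) = Set.univ := by
  refine ⟨?_, ?_, ?_, ?_⟩
  · intro X s hs
    have := interior_subset hs
    simpa [Function.update_eq_self] using this
  · intro X Y
    ext s
    simp only [intOp, Set.mem_setOf_eq, Set.mem_inter_iff]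
    rw [show {a : U | Function.update s k a ∈ X ∧ Function.update s k a ∈ Y} = {a : U | Function.update s k a ∈ X} ∩ {a : U | Function.update s k a ∈ Y} from rfl, interior_inter, Set.mem_inter_iff]
  · intro X s hs
    have key : {a : U | Function.update s k a ∈ intOp k X} =
        interior {a : U | Function.update s k a ∈ X} := by
      ext a
      simp only [Set.mem_setOf_eq, intOp, Function.update_self,
        Function.update_idem]
    show s k ∈ interior {a : U | Function.update s k a ∈ intOp k X}
    rw [key, interior_interior]
    exact hs
  · ext s
    simp [intOp]
end

section
/- Let U be a topological space, ι an index set, and i, j ∈ ι with i ≠ j. Suppose X ⊆ ᶦU is independent of coordinate j, i.e., for every s ∈ X and every a ∈ U, s[j↦a] ∈ X. Define the substitution operator S(Y) = {s ∈ ᶦU : s[i↦s(j)] ∈ Y} for Y ⊆ ᶦU, and the interior operators I_i, I_j as usual. Then S(I_i(X)) = I_j(S(X)). (This is the concrete verification of axiom (7) of topological cylindric algebras, s_j^i I_i p = I_j s_j^i p for j ∉ Δp, in topological cylindric set algebras.) -/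
/-- The concrete substitution operator `S(Y) = {s : s[i↦s(j)] ∈ Y}`. -/
def subOp {U : Type*} {ι : Type*} [DecidableEq ι] (i j : ι)
    (Y : Set (ι → U)) : Set (ι → U) :=
  {s | Function.update s i (s j) ∈ Y}

/-- If `X ⊆ ᶦU` is independent of coordinate `j` and `i ≠ j`, then
`S(I_i(X)) = I_j(S(X))`. This is the concrete verification of the axiom
`s_j^i I_i p = I_j s_j^i p` for `j ∉ Δp`. -/
theorem subOp_intOp_comm {U : Type*} [TopologicalSpace U] {ι : Type*} [DecidableEq ι]
    (i j : ι) (hij : i ≠ j) (X : Set (ι → U))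
    (hX : ∀ s ∈ X, ∀ a : U, Function.update s j a ∈ X) :
    subOp i j (intOp i X) = intOp j (subOp i j X) := by
  ext s
  simp only [subOp, intOp, Set.mem_setOf_eq, Function.update_self, Function.update_idem]
  have hset : {a : U | Function.update s i a ∈ X}
      = {a : U | Function.update (Function.update s j a) i a ∈ X} := by
    ext a
    simp only [Set.mem_setOf_eq, Function.update_comm hij.symm]
    constructor
    · intro h
      exact hX _ h a
    · intro h
      have h2 := hX _ h (s j)
      rwa [Function.update_idem, ← Function.update_of_ne hij.symm a s,
        Function.update_eq_self] at h2
  rw [hset]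
end

section
/- Let W be a set, (U_i)_{i∈I} a family of pairwise disjoint subsets of W, and ι an index set with at least two elements. Let V = ⋃_{i∈I} ᶦU_i ⊆ ᶦW, where ᶦU_i denotes the set of functions ι → W whose range is contained in U_i. For k ∈ ι and X ⊆ V define the relativized cylindrification c_k(X) = {s ∈ V : ∃ t ∈ X such that t(m) = s(m) for all m ∈ ι with m ≠ k}. Then for every j ∈ I, every k ∈ ι and every X ⊆ V: c_k(X) ∩ ᶦU_j = {s ∈ ᶦU_j : ∃ t ∈ X ∩ ᶦU_j such that t(m) = s(m) for all m ≠ k}. Hence the map X ↦ (X ∩ ᶦU_i)_{i∈I} from ℘(V) to ∏_{i∈I} ℘(ᶦU_i) commutes with cylindrifications. -/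
/-- Let `V = ⋃_{i∈I} ᶦU_i` with the `U_i` pairwise disjoint subsets of `W`, and `ι`
having at least two elements.  Relativized cylindrification
`c_k(X) = {s ∈ V : ∃ t ∈ X, t(m) = s(m) for all m ≠ k}` satisfies, for every `j ∈ I`,
`k ∈ ι` and `X ⊆ V`:
`c_k(X) ∩ ᶦU_j = {s ∈ ᶦU_j : ∃ t ∈ X ∩ ᶦU_j, t(m) = s(m) for all m ≠ k}`.
Hence `X ↦ (X ∩ ᶦU_i)_i` commutes with cylindrifications. -/
theorem cyl_inter_component {W I ι : Type*} (hι : ∃ a b : ι, a ≠ b)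
    (U : I → Set W) (hdis : Pairwise fun i i' => Disjoint (U i) (U i'))
    (V : Set (ι → W)) (hV : V = ⋃ i, {s : ι → W | ∀ m, s m ∈ U i})
    (j : I) (k : ι) (X : Set (ι → W)) (hX : X ⊆ V) :
    ({s ∈ V | ∃ t ∈ X, ∀ m, m ≠ k → t m = s m} ∩ {s : ι → W | ∀ m, s m ∈ U j}) =
      {s : ι → W | (∀ m, s m ∈ U j) ∧
        ∃ t ∈ X ∩ {u : ι → W | ∀ m, u m ∈ U j}, ∀ m, m ≠ k → t m = s m} := by
  ext s
  simp only [Set.mem_inter_iff, Set.mem_setOf_eq, Set.mem_sep_iff]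
  constructor
  · rintro ⟨⟨hsV, t, htX, hagree⟩, hsj⟩
    refine ⟨hsj, t, ⟨htX, ?_⟩, hagree⟩
    -- t ∈ V, so t ∈ ᶦU_i for some i
    obtain ⟨_, ⟨i, rfl⟩, hti⟩ := hV ▸ hX htX
    -- pick m ≠ k using hι
    obtain ⟨a, b, hab⟩ := hι
    obtain ⟨m, hm⟩ : ∃ m : ι, m ≠ k := by
      by_cases ha : a = k
      · exact ⟨b, fun h => hab (ha ▸ h ▸ rfl)⟩
      · exact ⟨a, ha⟩
    have hij : i = j := by
      by_contra hne
      exact (hdis hne).ne_of_mem (hti m) (hagree m hm ▸ hsj m) rfl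
    exact hij ▸ hti
  · rintro ⟨hsj, t, ⟨htX, _⟩, hagree⟩
    exact ⟨⟨hV ▸ Set.mem_iUnion.mpr ⟨j, hsj⟩, t, htX, hagree⟩, hsj⟩
end

section
/- Let B be a countable Boolean algebra with ⊥ ≠ ⊤. Call a set D of nonzero elements of B dense if for every b ∈ B with b ≠ ⊥ there exists d ∈ D with d ≤ b. Then for every family 𝒟 of dense subsets of B with |𝒟| < cov K, there exists a proper filter G of B (⊤ ∈ G, ⊥ ∉ G, closed under binary meets, upward closed) such that G ∩ D ≠ ∅ for every D ∈ 𝒟. (Martin's axiom for countable Boolean algebras holds for families of fewer than cov K dense sets.) -/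
/- ### Auxiliary: the map `gg u = u / (1 + |u|)` and a partition machinery on `ℝ` -/

noncomputable def gg (u : ℝ) : ℝ := u / (1 + |u|)
noncomputable def hh (y : ℝ) : ℝ := y / (1 - |y|)

lemma one_add_abs_pos (u : ℝ) : 0 < 1 + |u| := by positivity

lemma gg_strictMono : StrictMono gg := by
  intro u v huv
  unfold gg
  rw [div_lt_div_iff₀ (one_add_abs_pos u) (one_add_abs_pos v)]
  nlinarith [abs_nonneg u, abs_nonneg v, le_abs_self u, neg_abs_le u, le_abs_self v,
    neg_abs_le v, abs_mul_abs_self u, abs_mul_abs_self v, abs_nonneg (u*v), abs_mul u v,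
    neg_abs_le (u*v), le_abs_self (u*v)]

lemma gg_lt_one (u : ℝ) : gg u < 1 := by
  unfold gg
  rw [div_lt_one (one_add_abs_pos u)]
  linarith [le_abs_self u]

lemma neg_one_lt_gg (u : ℝ) : -1 < gg u := by
  unfold gg
  rw [lt_div_iff₀ (one_add_abs_pos u)]
  nlinarith [neg_abs_le u]

lemma gg_hh {y : ℝ} (hy : |y| < 1) : gg (hh y) = y := by
  unfold gg hh
  have h1 : 0 < 1 - |y| := by linarith
  have : |y / (1 - |y|)| = |y| / (1 - |y|) := by
    rw [abs_div, abs_of_pos h1]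
  rw [this]
  field_simp
  ring

lemma gg_le_iff {y : ℝ} (hy : |y| < 1) (u : ℝ) : gg u ≤ y ↔ u ≤ hh y := by
  conv_lhs => rw [← gg_hh hy]
  exact gg_strictMono.le_iff_le

lemma lt_gg_iff {y : ℝ} (hy : |y| < 1) (u : ℝ) : y < gg u ↔ hh y < u := by
  conv_lhs => rw [← gg_hh hy]
  exact gg_strictMono.lt_iff_lt

lemma gg_gap (k : ℤ) : gg ((k : ℝ) + 1) - gg (k : ℝ) ≤ 1 := by
  unfold gg
  rcases le_or_gt 0 (k : ℝ) with h | h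
  · rw [abs_of_nonneg h, abs_of_nonneg (by linarith : (0:ℝ) ≤ (k:ℝ) + 1)]
    have h1 : 0 < 1 + (k:ℝ) := by linarith
    have h2 : 0 < 1 + ((k:ℝ) + 1) := by linarith
    rw [div_sub_div _ _ (ne_of_gt h2) (ne_of_gt h1), div_le_one (by positivity)]
    nlinarith
  · have hk1 : (k : ℝ) + 1 ≤ 0 := by
      have h' : k < 0 := by exact_mod_cast h
      have h'' : k + 1 ≤ 0 := by omega
      exact_mod_cast h''
    rw [abs_of_neg h, abs_of_nonpos hk1]
    have h1 : 0 < 1 + -(k:ℝ) := by linarith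
    have h2 : 0 < 1 + -((k:ℝ)+1) := by linarith
    have t1 : ((k:ℝ)+1)/(1 + -((k:ℝ)+1)) ≤ 0 := div_nonpos_of_nonpos_of_nonneg hk1 h2.le
    have t2 : -((k:ℝ)/(1 + -(k:ℝ))) ≤ 1 := by
      rw [neg_div']
      rw [div_le_one h1]
      linarith
    linarith

noncomputable def pt (a b u : ℝ) : ℝ := (a+b)/2 + (b-a)/2 * gg u


lemma pt_lt_pt {a b : ℝ} (hab : a < b) {u v : ℝ} (h : u < v) : pt a b u < pt a b v := by
  unfold pt
  have := gg_strictMono h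
  nlinarith

lemma lt_pt {a b : ℝ} (hab : a < b) (u : ℝ) : a < pt a b u := by
  unfold pt; nlinarith [neg_one_lt_gg u]

lemma pt_lt {a b : ℝ} (hab : a < b) (u : ℝ) : pt a b u < b := by
  unfold pt; nlinarith [gg_lt_one u]

lemma pt_gap {a b : ℝ} (hab : a < b) (k : ℤ) : pt a b ((k:ℝ)+1) - pt a b (k:ℝ) ≤ (b-a)/2 := by
  unfold pt; nlinarith [gg_gap k]

lemma pt_cover {a b : ℝ} (hab : a < b) {x : ℝ} (hx : x ∈ Set.Ioo a b) :
    ∃ k : ℤ, pt a b (k:ℝ) ≤ x ∧ x ≤ pt a b ((k:ℝ)+1) := by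
  obtain ⟨h1, h2⟩ := hx
  set y : ℝ := (2*x - (a+b))/(b-a) with hy
  have hba : (0:ℝ) < b - a := by linarith
  have hy1 : |y| < 1 := by
    rw [abs_lt, hy]
    constructor
    · rw [lt_div_iff₀ hba]; linarith
    · rw [div_lt_one hba]; linarith
  refine ⟨⌊hh y⌋, ?_, ?_⟩
  · have : gg (⌊hh y⌋ : ℝ) ≤ y := (gg_le_iff hy1 _).mpr (Int.floor_le _)
    unfold pt
    have hxy : (b-a)/2 * y = x - (a+b)/2 := by rw [hy]; field_simp [hba.ne']
    nlinarith
  · have : y < gg ((⌊hh y⌋ : ℝ) + 1) := (lt_gg_iff hy1 _).mpr (Int.lt_floor_add_one _)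
    unfold pt
    have hxy : (b-a)/2 * y = x - (a+b)/2 := by rw [hy]; field_simp [hba.ne']
    nlinarith

noncomputable def ab : List ℤ → ℝ × ℝ
  | [] => (0, 1)
  | [k] => ((k : ℝ), (k : ℝ) + 1)
  | k :: m :: t => (pt (ab (m :: t)).1 (ab (m :: t)).2 (k:ℝ),
      pt (ab (m :: t)).1 (ab (m :: t)).2 ((k:ℝ)+1))

lemma ab_one (k : ℤ) : ab [k] = ((k : ℝ), (k : ℝ) + 1) := rfl

lemma ab_cons_cons (k m : ℤ) (t : List ℤ) :
    ab (k :: m :: t) = (pt (ab (m :: t)).1 (ab (m :: t)).2 (k:ℝ),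
      pt (ab (m :: t)).1 (ab (m :: t)).2 ((k:ℝ)+1)) := rfl

noncomputable def II (s : List ℤ) : Set ℝ :=
  if s = [] then Set.univ else Set.Ioo (ab s).1 (ab s).2

lemma II_nil : II [] = Set.univ := rfl

lemma II_cons (k : ℤ) (s : List ℤ) : II (k :: s) = Set.Ioo (ab (k :: s)).1 (ab (k :: s)).2 :=
  if_neg (by simp)

lemma II_open (s : List ℤ) : IsOpen (II s) := by
  unfold II; split <;> [exact isOpen_univ; exact isOpen_Ioo]

lemma ab_lt : ∀ (s : List ℤ), s ≠ [] →
    (ab s).1 < (ab s).2 ∧ (ab s).2 - (ab s).1 ≤ (1/2)^(s.length - 1)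
  | [], h => absurd rfl h
  | [k], _ => by simp [ab_one]
  | k :: m :: t, _ => by
    obtain ⟨h1, h2⟩ := ab_lt (m :: t) (by simp)
    rw [ab_cons_cons]
    refine ⟨pt_lt_pt h1 (by linarith), ?_⟩
    have h3 := pt_gap h1 k
    have hl : (k :: m :: t).length - 1 = ((m :: t).length - 1) + 1 := by
      simp [List.length_cons]
    rw [hl, pow_succ]
    have h4 : ((ab (m::t)).2 - (ab (m::t)).1)/2 ≤ (1/2)^((m::t).length - 1) * (1/2) := by
      rw [mul_one_div]
      linarith
    dsimp only
    linarith

lemma II_child_closure (k : ℤ) (s : List ℤ) : closure (II (k :: s)) ⊆ II s := by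
  match s with
  | [] => simp [II_nil]
  | m :: t =>
    have h1 := (ab_lt (m :: t) (by simp)).1
    rw [II_cons, II_cons, ab_cons_cons]
    dsimp only
    have hk : pt (ab (m::t)).1 (ab (m::t)).2 (k:ℝ) < pt (ab (m::t)).1 (ab (m::t)).2 ((k:ℝ)+1) :=
      pt_lt_pt h1 (by linarith)
    rw [closure_Ioo hk.ne]
    exact Set.Icc_subset_Ioo (lt_pt h1 _) (pt_lt h1 _)

lemma II_child_subset (k : ℤ) (s : List ℤ) : II (k :: s) ⊆ II s :=
  subset_closure.trans (II_child_closure k s)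

lemma II_disjoint : ∀ (s : List ℤ) (k k' : ℤ), k ≠ k' → II (k :: s) ∩ II (k' :: s) = ∅ := by
  have key : ∀ (s : List ℤ) (k k' : ℤ), k < k' → II (k :: s) ∩ II (k' :: s) = ∅ := by
    intro s k k' hkk
    have hle : (k:ℝ) + 1 ≤ (k':ℝ) := by exact_mod_cast hkk
    rw [II_cons, II_cons]
    match s with
    | [] =>
      rw [ab_one, ab_one]
      dsimp only
      apply Set.eq_empty_of_forall_notMem
      rintro x ⟨⟨_, hx2⟩, ⟨hx3, _⟩⟩
      linarith
    | m :: t =>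
      have h1 := (ab_lt (m :: t) (by simp)).1
      rw [ab_cons_cons, ab_cons_cons]
      dsimp only
      apply Set.eq_empty_of_forall_notMem
      rintro x ⟨⟨_, hx2⟩, ⟨hx3, _⟩⟩
      have : pt (ab (m::t)).1 (ab (m::t)).2 ((k:ℝ)+1) ≤ pt (ab (m::t)).1 (ab (m::t)).2 (k':ℝ) := by
        rcases eq_or_lt_of_le hle with h | h
        · rw [h]
        · exact (pt_lt_pt h1 h).le
      linarith
  intro s k k' hkk
  rcases lt_or_gt_of_ne hkk with h | h
  · exact key s k k' h
  · rw [Set.inter_comm]; exact key s k' k h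

lemma II_dense (s : List ℤ) {x : ℝ} (hx : x ∈ II s) :
    x ∈ closure (⋃ k : ℤ, II (k :: s)) := by
  match s with
  | [] =>
    have h : x ∈ Set.Icc ((⌊x⌋:ℝ)) ((⌊x⌋:ℝ)+1) := ⟨Int.floor_le x, (Int.lt_floor_add_one x).le⟩
    have hcl : Set.Icc ((⌊x⌋:ℝ)) ((⌊x⌋:ℝ)+1) = closure (II (⌊x⌋ :: [])) := by
      rw [II_cons, ab_one]
      exact (closure_Ioo (by norm_num)).symm
    exact closure_mono (Set.subset_iUnion (fun k : ℤ => II (k :: ([]:List ℤ))) ⌊x⌋) (hcl ▸ h)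
  | m :: t =>
    have h1 := (ab_lt (m :: t) (by simp)).1
    rw [II_cons] at hx
    obtain ⟨k, hk1, hk2⟩ := pt_cover h1 hx
    have hcl : x ∈ closure (II (k :: m :: t)) := by
      rw [II_cons, ab_cons_cons]
      dsimp only
      rw [closure_Ioo (pt_lt_pt h1 (by linarith : (k:ℝ) < (k:ℝ)+1)).ne]
      exact ⟨hk1, hk2⟩
    exact closure_mono (Set.subset_iUnion (fun k : ℤ => II (k :: m :: t)) k) hcl


lemma II_nonempty (s : List ℤ) : (II s).Nonempty := by
  match s with
  | [] => rw [II_nil]; exact Set.univ_nonempty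
  | k :: t =>
    rw [II_cons]
    exact Set.nonempty_Ioo.mpr (ab_lt (k :: t) (by simp)).1


noncomputable def badS (s : List ℤ) : Set ℝ := II s \ ⋃ k : ℤ, II (k :: s)

lemma badS_def (s : List ℤ) : badS s = II s \ ⋃ k : ℤ, II (k :: s) := rfl

lemma badS_nwd (s : List ℤ) : IsNowhereDense (badS s) := by
  have hC : badS s ⊆ closure (II s) \ ⋃ k : ℤ, II (k :: s) :=
    Set.diff_subset_diff_left subset_closure
  have hCc : IsClosed (closure (II s) \ ⋃ k : ℤ, II (k :: s)) :=
    isClosed_closure.sdiff (isOpen_iUnion fun k => II_open _)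
  have hcl : closure (badS s) ⊆ closure (II s) \ ⋃ k : ℤ, II (k :: s) :=
    closure_minimal hC hCc
  rw [IsNowhereDense, Set.eq_empty_iff_forall_notMem]
  intro x hx
  have hxC : x ∈ closure (II s) \ ⋃ k : ℤ, II (k :: s) :=
    hcl (interior_subset hx)
  -- interior (closure badS) is an open nbhd of x inside closure (II s)
  have hxcl : x ∈ closure (II s) := hxC.1
  have hO : IsOpen (interior (closure (badS s))) := isOpen_interior
  obtain ⟨y, hy1, hy2⟩ := (mem_closure_iff.mp hxcl) _ hO hx
  -- y ∈ interior(closure badS) ∩ II s; II_dense gives a child point in this open set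
  have hyo : y ∈ interior (closure (badS s)) ∩ II s := ⟨hy1, hy2⟩
  obtain ⟨z, hz1, hz2⟩ := (mem_closure_iff.mp (II_dense s hy2)) _
    (hO.inter (II_open s)) hyo
  exact (hcl (interior_subset hz1.1)).2 hz2

lemma II_inj : ∀ (s t : List ℤ), s.length = t.length →
    ∀ {x : ℝ}, x ∈ II s → x ∈ II t → s = t
  | [], [], _, _, _, _ => rfl
  | [], t :: ts, h, _, _, _ => by simp at h
  | s :: ss, [], h, _, _, _ => by simp at h
  | k :: ss, k' :: ts, h, x, hxs, hxt => by
    have hlen : ss.length = ts.length := by simpa using h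
    have hss : ss = ts := II_inj ss ts hlen (II_child_subset k ss hxs) (II_child_subset k' ts hxt)
    subst hss
    by_cases hk : k = k'
    · rw [hk]
    · exact absurd (Set.mem_inter hxs hxt) (by rw [II_disjoint ss k k' hk]; simp)

noncomputable def branch (x : ℝ) (hx : ∀ s : List ℤ, x ∈ II s → ∃ k : ℤ, x ∈ II (k :: s)) :
    ∀ _ : ℕ, {s : List ℤ // x ∈ II s}
  | 0 => ⟨[], by rw [II_nil]; trivial⟩
  | n+1 => ⟨(hx _ (branch x hx n).2).choose :: (branch x hx n).1,
      (hx _ (branch x hx n).2).choose_spec⟩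

lemma branch_length (x : ℝ) (hx : ∀ s : List ℤ, x ∈ II s → ∃ k : ℤ, x ∈ II (k :: s)) :
    ∀ n : ℕ, ((branch x hx n).1).length = n := by
  intro n
  induction n with
  | zero => rfl
  | succ m ih => simp [branch, ih]

lemma branch_mono (x : ℝ) (hx : ∀ s : List ℤ, x ∈ II s → ∃ k : ℤ, x ∈ II (k :: s)) (n : ℕ) :
    ∃ k : ℤ, (branch x hx (n+1)).1 = k :: (branch x hx n).1 :=
  ⟨_, rfl⟩

lemma chase {α β : ℝ} (hab : α < β) : ∃ s : List ℤ, II s ⊆ Set.Ioo α β := by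
  set δ : ℝ := (β - α)/3 with hδ
  have hδpos : 0 < δ := by rw [hδ]; linarith
  have hmid : α + δ < β - δ := by rw [hδ]; linarith
  -- recursive chain of nodes meeting (α+δ, β-δ)
  have step : ∀ s : List ℤ, (II s ∩ Set.Ioo (α+δ) (β-δ)).Nonempty →
      ∃ k : ℤ, (II (k :: s) ∩ Set.Ioo (α+δ) (β-δ)).Nonempty := by
    rintro s ⟨y, hy1, hy2⟩
    obtain ⟨z, hz1, hz2⟩ := (mem_closure_iff.mp (II_dense s hy1)) _ isOpen_Ioo hy2
    obtain ⟨_, ⟨k, rfl⟩, hzk⟩ := hz2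
    exact ⟨k, z, hzk, hz1⟩
  have base : (II ([]:List ℤ) ∩ Set.Ioo (α+δ) (β-δ)).Nonempty := by
    refine ⟨(α+β)/2, ?_, ?_, ?_⟩
    · rw [II_nil]; trivial
    · rw [hδ]; linarith
    · rw [hδ]; linarith
  have chain : ∀ n : ℕ, ∃ s : List ℤ, s.length = n ∧ (II s ∩ Set.Ioo (α+δ) (β-δ)).Nonempty := by
    intro n
    induction n with
    | zero => exact ⟨[], rfl, base⟩
    | succ m ih =>
      obtain ⟨s, hlen, hne⟩ := ih
      obtain ⟨k, hk⟩ := step s hne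
      exact ⟨k :: s, by simp [hlen], hk⟩
  obtain ⟨n, hn⟩ := exists_pow_lt_of_lt_one hδpos (by norm_num : (1:ℝ)/2 < 1)
  obtain ⟨s, hlen, y, hy1, hy2⟩ := chain (n+1)
  have hsne : s ≠ [] := by rintro rfl; simp at hlen
  obtain ⟨h1, h2⟩ := ab_lt s hsne
  have hlen' : s.length - 1 = n := by omega
  rw [hlen'] at h2
  refine ⟨s, ?_⟩
  obtain ⟨k, t, rfl⟩ : ∃ k ts, s = k :: ts := by
    cases s with
    | nil => exact absurd rfl hsne
    | cons a b => exact ⟨a, b, rfl⟩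
  rw [II_cons] at hy1 ⊢
  intro z hz
  obtain ⟨hz1, hz2⟩ := hz
  obtain ⟨hy11, hy12⟩ := hy1
  obtain ⟨hy21, hy22⟩ := hy2
  constructor
  · linarith
  · linarith

/-- `cov K`: the least cardinality of a family of nowhere dense subsets of `ℝ`
whose union is all of `ℝ`. -/
noncomputable def covK : Cardinal :=
  sInf {c : Cardinal | ∃ (ι : Type) (A : ι → Set ℝ),
    (∀ i, IsNowhereDense (A i)) ∧ (⋃ i, A i) = Set.univ ∧ c = Cardinal.mk ι}

lemma covK_set_nonempty : {c : Cardinal | ∃ (ι : Type) (A : ι → Set ℝ),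
    (∀ i, IsNowhereDense (A i)) ∧ (⋃ i, A i) = Set.univ ∧ c = Cardinal.mk ι}.Nonempty := by
  refine ⟨Cardinal.mk ℝ, ℝ, fun x => {x}, fun x => ?_, ?_, rfl⟩
  · rw [IsNowhereDense, closure_singleton, interior_singleton]
  · ext x; simp

lemma aleph0_lt_covK : Cardinal.aleph0 < covK := by
  by_contra h
  push_neg at h
  have hmem := csInf_mem covK_set_nonempty
  obtain ⟨ι₀, A, hnwd, hcov, hmk⟩ := hmem
  have hcnt : Countable ι₀ := by
    rw [← Cardinal.mk_le_aleph0_iff, ← hmk]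
    exact h
  have hdense : ∀ i, Dense ((closure (A i))ᶜ) := fun i =>
    interior_eq_empty_iff_dense_compl.mp (hnwd i)
  have hopen : ∀ i, IsOpen ((closure (A i))ᶜ) := fun i => isClosed_closure.isOpen_compl
  have hD : Dense (⋂ i, (closure (A i))ᶜ) := dense_iInter_of_isOpen hopen hdense
  obtain ⟨x, hx⟩ := hD.nonempty
  have hx2 : x ∈ ⋃ i, A i := hcov ▸ Set.mem_univ x
  obtain ⟨_, ⟨i, rfl⟩, hxi⟩ := hx2
  exact (Set.mem_iInter.mp hx i) (subset_closure hxi)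

lemma covK_le {ι : Type} (A : ι → Set ℝ) (hnwd : ∀ i, IsNowhereDense (A i))
    (hcov : (⋃ i, A i) = Set.univ) : covK ≤ Cardinal.mk ι :=
  csInf_le (OrderBot.bddBelow _) ⟨ι, A, hnwd, hcov, rfl⟩

/-- A set `D` of nonzero elements of a Boolean algebra `B` is dense if every
nonzero `b ∈ B` lies above some `d ∈ D`. -/
def DenseSub {B : Type*} [BooleanAlgebra B] (D : Set B) : Prop :=
  (∀ d ∈ D, d ≠ ⊥) ∧ ∀ b : B, b ≠ ⊥ → ∃ d ∈ D, d ≤ b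

attribute [local instance] Classical.propDecidable

noncomputable def condB {B : Type} [BooleanAlgebra B] (e : ℤ → {p : B // p ≠ ⊥}) : List ℤ → B
  | [] => ⊤
  | k :: s => if ((e k : B)) ≤ condB e s then (e k : B) else condB e s

lemma condB_ne_bot {B : Type} [BooleanAlgebra B] [Nontrivial B] (e : ℤ → {p : B // p ≠ ⊥}) : ∀ s, condB e s ≠ ⊥
  | [] => by simp [condB]
  | k :: s => by
    rw [condB]
    split
    · exact (e k).2
    · exact condB_ne_bot e s

lemma condB_cons_le {B : Type} [BooleanAlgebra B] [Nontrivial B] (e : ℤ → {p : B // p ≠ ⊥}) (k : ℤ) (s : List ℤ) :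
    condB e (k :: s) ≤ condB e s := by
  rw [condB]; split <;> [assumption; exact le_refl _]

lemma condB_reach {B : Type} [BooleanAlgebra B] [Nontrivial B] (e : ℤ → {p : B // p ≠ ⊥}) (he : Function.Surjective e)
    {q : B} (hq : q ≠ ⊥) (s : List ℤ) (hle : q ≤ condB e s) :
    ∃ k : ℤ, condB e (k :: s) = q := by
  obtain ⟨k, hk⟩ := he ⟨q, hq⟩
  refine ⟨k, ?_⟩
  rw [condB, hk, if_pos hle]

/-- Martin's axiom for countable Boolean algebras holds for families of fewer than
`cov K` dense sets: if `B` is a countable nontrivial Boolean algebra and `𝒟` is a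
family of fewer than `cov K` dense subsets of `B`, then there is a proper filter `G`
of `B` meeting every member of `𝒟`. -/
theorem MA_countable_below_covK {B : Type} [BooleanAlgebra B] [Countable B] [Nontrivial B]
    (ι : Type) (𝒟 : ι → Set B) (hcard : Cardinal.mk ι < covK)
    (hdense : ∀ i, DenseSub (𝒟 i)) :
    ∃ G : Set B, ⊤ ∈ G ∧ ⊥ ∉ G ∧ (∀ a ∈ G, ∀ b ∈ G, a ⊓ b ∈ G) ∧
      (∀ a ∈ G, ∀ b : B, a ≤ b → b ∈ G) ∧ ∀ i, ∃ d ∈ 𝒟 i, d ∈ G := by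
  by_cases hatom : ∃ a : B, IsAtom a
  · -- atom case: principal filter at the atom
    obtain ⟨a, ha⟩ := hatom
    refine ⟨{b | a ≤ b}, le_top, fun h => ha.1 (le_bot_iff.mp h), fun p hp q hq => le_inf hp hq,
      fun p hp q hpq => le_trans hp hpq, fun i => ?_⟩
    obtain ⟨d, hd, hda⟩ := (hdense i).2 a ha.1
    rcases (ha.le_iff.mp hda) with h | h
    · exact absurd h ((hdense i).1 d hd)
    · exact ⟨d, hd, h.ge⟩
  · -- atomless case
    push_neg at hatom
    set P := {p : B // p ≠ ⊥} with hP
    have hsplit : ∀ p : B, p ≠ ⊥ → ∃ q : B, q ≠ ⊥ ∧ q < p := by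
      intro p hp
      have := hatom p
      rw [IsAtom, not_and_or] at this
      rcases this with h | h
      · exact absurd hp (by simpa using h)
      · push_neg at h
        obtain ⟨q, hq1, hq2⟩ := h
        exact ⟨q, hq2, hq1⟩
    -- P is infinite
    haveI : Infinite P := by
      set next : P → P := fun p => ⟨(hsplit p.1 p.2).choose, (hsplit p.1 p.2).choose_spec.1⟩
        with hnext_def
      have hnext : ∀ p : P, (next p : B) < (p : B) := fun p => (hsplit p.1 p.2).choose_spec.2
      set f : ℕ → P := fun n => next^[n] ⟨⊤, top_ne_bot⟩ with hf_def
      have hf : ∀ n, (f (n+1) : B) < (f n : B) := by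
        intro n
        have : f (n+1) = next (f n) := Function.iterate_succ_apply' next n _
        rw [this]
        exact hnext (f n)
      have hanti : StrictAnti (fun n => (f n : B)) := strictAnti_nat_of_succ_lt hf
      exact Infinite.of_injective f (fun m n hmn => hanti.injective (by rw [hmn]))
    haveI : Encodable P := Encodable.ofCountable P
    haveI : Denumerable P := Denumerable.ofEncodableOfInfinite P
    set e : ℤ → P := fun k => (Denumerable.eqv P).symm ((Denumerable.eqv ℤ) k) with he_def
    have he : Function.Surjective e :=
      (Denumerable.eqv P).symm.surjective.comp (Denumerable.eqv ℤ).surjective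
    -- the open dense sets
    set U : ι → Set ℝ := fun i => ⋃ s ∈ {s : List ℤ | ∃ d ∈ 𝒟 i, condB e s ≤ d}, II s with hU
    have hUopen : ∀ i, IsOpen (U i) := fun i => isOpen_biUnion (fun s _ => II_open s)
    have hUdense : ∀ i, Dense (U i) := by
      intro i
      rw [dense_iff_inter_open]
      rintro O hO ⟨x, hx⟩
      obtain ⟨ε, hε, hball⟩ := Metric.isOpen_iff.mp hO x hx
      rw [Real.ball_eq_Ioo] at hball
      obtain ⟨s, hs⟩ := chase (by linarith : x - ε < x + ε)
      obtain ⟨d, hd, hdle⟩ := (hdense i).2 (condB e s) (condB_ne_bot e s)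
      obtain ⟨k, hk⟩ := condB_reach e he ((hdense i).1 d hd) s hdle
      obtain ⟨w, hw⟩ := II_nonempty (k :: s)
      refine ⟨w, hball (hs (II_child_subset k s hw)), ?_⟩
      exact Set.mem_biUnion ⟨d, hd, hk.le⟩ hw
    -- the covering family cannot cover ℝ
    set F : ι ⊕ List ℤ → Set ℝ := Sum.elim (fun i => (U i)ᶜ) badS with hF
    have hFnwd : ∀ j, IsNowhereDense (F j) := by
      rintro (i | s)
      · show IsNowhereDense (U i)ᶜ
        rw [IsNowhereDense, (hUopen i).isClosed_compl.closure_eq,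
          interior_eq_empty_iff_dense_compl, compl_compl]
        exact hUdense i
      · exact badS_nwd s
    have hnotcov : (⋃ j, F j) ≠ Set.univ := by
      intro hcov
      have h1 : covK ≤ Cardinal.mk (ι ⊕ List ℤ) := covK_le F hFnwd hcov
      have h2 : Cardinal.mk (ι ⊕ List ℤ) = Cardinal.mk ι + Cardinal.aleph0 := by
        rw [Cardinal.mk_sum, Cardinal.lift_id, Cardinal.lift_id, Cardinal.mk_list_eq_aleph0]
      rw [h2] at h1
      exact absurd (Cardinal.add_lt_of_lt aleph0_lt_covK.le hcard aleph0_lt_covK)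
        (not_lt.mpr h1)
    obtain ⟨x, hxnot⟩ : ∃ x : ℝ, x ∉ ⋃ j, F j := by
      by_contra h
      push_neg at h
      exact hnotcov (Set.eq_univ_of_forall h)
    have hxU : ∀ i, x ∈ U i := by
      intro i
      by_contra h
      exact hxnot (Set.mem_iUnion.mpr ⟨Sum.inl i, h⟩)
    have hxbad : ∀ s : List ℤ, x ∈ II s → ∃ k : ℤ, x ∈ II (k :: s) := by
      intro s hxs
      by_contra h
      push_neg at h
      refine hxnot (Set.mem_iUnion.mpr ⟨Sum.inr s, ?_⟩)
      show x ∈ badS s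
      rw [badS_def]
      exact ⟨hxs, by simpa using h⟩
    -- the generic filter
    set σ : ℕ → List ℤ := fun n => (branch x hxbad n).1 with hσ
    have hanti : ∀ n m, n ≤ m → condB e (σ m) ≤ condB e (σ n) := by
      have hstep : ∀ n, condB e (σ (n+1)) ≤ condB e (σ n) := by
        intro n
        obtain ⟨k, hk⟩ := branch_mono x hxbad n
        show condB e (branch x hxbad (n+1)).1 ≤ _
        rw [hk]
        exact condB_cons_le e k _
      intro n m hnm
      exact antitone_nat_of_succ_le (f := fun n => condB e (σ n)) hstep hnm
    refine ⟨{b : B | ∃ n, condB e (σ n) ≤ b}, ⟨0, le_top⟩, ?_, ?_, ?_, ?_⟩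
    · rintro ⟨n, hn⟩
      exact condB_ne_bot e (σ n) (le_bot_iff.mp hn)
    · rintro p ⟨n, hn⟩ q ⟨m, hm⟩
      refine ⟨max n m, le_inf ?_ ?_⟩
      · exact le_trans (hanti n (max n m) (le_max_left n m)) hn
      · exact le_trans (hanti m (max n m) (le_max_right n m)) hm
    · rintro p ⟨n, hn⟩ q hpq
      exact ⟨n, le_trans hn hpq⟩
    · intro i
      obtain ⟨s, hsgood, hxs⟩ := Set.mem_iUnion₂.mp (hxU i)
      obtain ⟨d, hd, hdle⟩ := hsgood
      refine ⟨d, hd, s.length, ?_⟩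
      have : s = σ s.length :=
        II_inj s (σ s.length) (branch_length x hxbad s.length).symm hxs (branch x hxbad s.length).2
      rw [← this]
      exact hdle
end

section
/- There exist a countable Boolean algebra B with ⊥ ≠ ⊤ and a family 𝒟 of dense subsets of B with |𝒟| = cov K (where D ⊆ B ∖ {⊥} is dense if for every b ≠ ⊥ there exists d ∈ D with d ≤ b) such that no proper filter G of B (⊤ ∈ G, ⊥ ∉ G, closed under binary meets, upward closed) satisfies G ∩ D ≠ ∅ for every D ∈ 𝒟. Hence cov K is the largest cardinal κ such that Martin's axiom for countable Boolean algebras holds for all families of fewer than κ dense sets. -/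
namespace MAaux

open Set

noncomputable def eL : Option ℚ → EReal := fun o => o.elim ⊥ (fun q => ((q : ℝ) : EReal))
noncomputable def eR : Option ℚ → EReal := fun o => o.elim ⊤ (fun q => ((q : ℝ) : EReal))

def J (a b : EReal) : Set ℝ := {x | a ≤ (x : ℝ) ∧ ((x : ℝ) : EReal) < b}

def decode (F : Finset (Option ℚ × Option ℚ)) : Set ℝ :=
  ⋃ p ∈ F, J (eL p.1) (eR p.2)

def S : Set (Set ℝ) := Set.range decode

lemma J_ss (a b : ℚ) : J (eL (some a)) (eR (some b)) = Set.Ico (a : ℝ) b := by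
  ext x; simp [J, eL, eR, Set.mem_Ico, EReal.coe_le_coe_iff, EReal.coe_lt_coe_iff]

lemma J_sn (a : ℚ) : J (eL (some a)) (eR none) = Set.Ici (a : ℝ) := by
  ext x; simp [J, eL, eR, EReal.coe_le_coe_iff, EReal.coe_lt_top]

lemma J_ns (b : ℚ) : J (eL none) (eR (some b)) = Set.Iio (b : ℝ) := by
  ext x; simp [J, eL, eR, EReal.coe_lt_coe_iff]

lemma J_nn : J (eL none) (eR none) = Set.univ := by
  ext x; simp [J, eL, eR, EReal.coe_lt_top]

lemma empty_mem : (∅ : Set ℝ) ∈ S := ⟨∅, by simp [decode]⟩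

lemma univ_mem : (Set.univ : Set ℝ) ∈ S :=
  ⟨{(none, none)}, by simp [decode, J_nn]⟩

lemma Ico_mem (q r : ℚ) : Set.Ico (q : ℝ) r ∈ S :=
  ⟨{(some q, some r)}, by simp [decode, J_ss]⟩

lemma union_mem {s t : Set ℝ} (hs : s ∈ S) (ht : t ∈ S) : s ∪ t ∈ S := by
  obtain ⟨F, rfl⟩ := hs; obtain ⟨F', rfl⟩ := ht
  exact ⟨F ∪ F', Finset.set_biUnion_union F F' _⟩

lemma J_inter (a b c d : EReal) : J a b ∩ J c d = J (a ⊔ c) (b ⊓ d) := by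
  ext x
  simp only [J, Set.mem_inter_iff, Set.mem_setOf_eq, sup_le_iff, lt_inf_iff]
  tauto

def maxL : Option ℚ → Option ℚ → Option ℚ
  | none, b => b
  | a, none => a
  | some q, some r => some (max q r)

def minR : Option ℚ → Option ℚ → Option ℚ
  | none, b => b
  | a, none => a
  | some q, some r => some (min q r)

lemma eL_maxL (a b : Option ℚ) : eL (maxL a b) = eL a ⊔ eL b := by
  rcases a with _ | q <;> rcases b with _ | r <;>
    simp [maxL, eL] <;>
  · rcases le_total q r with h | h <;>
      simp [max_eq_right h, max_eq_left h, EReal.coe_le_coe_iff,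
        sup_eq_right.2, sup_eq_left.2, Rat.cast_le.2 h]

lemma eR_minR (a b : Option ℚ) : eR (minR a b) = eR a ⊓ eR b := by
  rcases a with _ | q <;> rcases b with _ | r <;>
    simp [minR, eR] <;>
  · rcases le_total q r with h | h <;>
      simp [min_eq_left h, min_eq_right h, EReal.coe_le_coe_iff,
        inf_eq_left.2, inf_eq_right.2, Rat.cast_le.2 h]

lemma inter_mem {s t : Set ℝ} (hs : s ∈ S) (ht : t ∈ S) : s ∩ t ∈ S := by
  obtain ⟨F, rfl⟩ := hs; obtain ⟨F', rfl⟩ := ht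
  refine ⟨(F ×ˢ F').image fun pq => (maxL pq.1.1 pq.2.1, minR pq.1.2 pq.2.2), ?_⟩
  ext x
  constructor
  · intro hx
    simp only [decode, Set.mem_iUnion, Finset.mem_image] at hx
    obtain ⟨p, ⟨pq, hpq, rfl⟩, hxp⟩ := hx
    rw [Finset.mem_product] at hpq
    simp only [eL_maxL, eR_minR, ← J_inter] at hxp
    simp only [decode, Set.mem_inter_iff, Set.mem_iUnion]
    exact ⟨⟨pq.1, hpq.1, hxp.1⟩, ⟨pq.2, hpq.2, hxp.2⟩⟩
  · intro hx
    simp only [decode, Set.mem_inter_iff, Set.mem_iUnion] at hx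
    obtain ⟨⟨p, hp, hxp⟩, ⟨p', hp', hxp'⟩⟩ := hx
    simp only [decode, Set.mem_iUnion, Finset.mem_image]
    refine ⟨(maxL p.1 p'.1, minR p.2 p'.2), ⟨(p, p'), Finset.mem_product.2 ⟨hp, hp'⟩, rfl⟩, ?_⟩
    simp only [eL_maxL, eR_minR, ← J_inter]
    exact ⟨hxp, hxp'⟩

def compl1 : Option ℚ × Option ℚ → Finset (Option ℚ × Option ℚ) :=
  fun p => (p.1.elim ∅ fun q => {(none, some q)}) ∪ (p.2.elim ∅ fun q => {(some q, none)})

lemma compl_J (p : Option ℚ × Option ℚ) :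
    (J (eL p.1) (eR p.2))ᶜ = decode (compl1 p) := by
  obtain ⟨a, b⟩ := p
  rcases a with _ | q <;> rcases b with _ | r
  · rw [J_nn]; simp [decode, compl1]
  · rw [J_ns, Set.compl_Iio]; simp [decode, compl1, J_sn]
  · rw [J_sn, Set.compl_Ici]; simp [decode, compl1, J_ns]
  · rw [J_ss, ← Set.Ici_inter_Iio, Set.compl_inter, Set.compl_Ici, Set.compl_Iio]
    simp [decode, compl1, J_ns, J_sn, Set.union_comm]

lemma compl_mem {s : Set ℝ} (hs : s ∈ S) : sᶜ ∈ S := by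
  obtain ⟨F, rfl⟩ := hs
  classical
  induction F using Finset.induction_on with
  | empty => simpa [decode] using univ_mem
  | @insert p F hp ih =>
      have : decode (insert p F) = J (eL p.1) (eR p.2) ∪ decode F := by
        simp [decode, Finset.set_biUnion_insert]
      rw [this, Set.compl_union]
      exact inter_mem (compl_J p ▸ ⟨compl1 p, rfl⟩) ih

def B : Type := {s : Set ℝ // s ∈ S}

instance : Max B := ⟨fun a b => ⟨a.1 ∪ b.1, union_mem a.2 b.2⟩⟩
instance : Min B := ⟨fun a b => ⟨a.1 ∩ b.1, inter_mem a.2 b.2⟩⟩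
instance : Top B := ⟨⟨Set.univ, univ_mem⟩⟩
instance : Bot B := ⟨⟨∅, empty_mem⟩⟩
noncomputable instance : Compl B := ⟨fun a => ⟨a.1ᶜ, compl_mem a.2⟩⟩
noncomputable instance : SDiff B :=
  ⟨fun a b => ⟨a.1 \ b.1, by rw [Set.diff_eq]; exact inter_mem a.2 (compl_mem b.2)⟩⟩
noncomputable instance : HImp B :=
  ⟨fun a b => ⟨a.1 ⇨ b.1, by rw [himp_eq]; exact union_mem b.2 (compl_mem a.2)⟩⟩

instance : LE B := ⟨fun a b => a.1 ≤ b.1⟩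
instance : LT B := ⟨fun a b => a.1 < b.1⟩

noncomputable instance : BooleanAlgebra B :=
  Function.Injective.booleanAlgebra (Subtype.val) Subtype.val_injective
    Iff.rfl Iff.rfl (fun _ _ => rfl) (fun _ _ => rfl) rfl rfl (fun _ => rfl) (fun _ _ => rfl) (fun _ _ => rfl)

instance : Countable B := (Set.countable_range decode).to_subtype

lemma le_iff {a b : B} : a ≤ b ↔ a.1 ⊆ b.1 := by
  constructor
  · intro h
    have h2 : a ⊓ b = a := inf_eq_left.2 h
    have h3 : a.1 ∩ b.1 = a.1 := congrArg Subtype.val h2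
    exact Set.inter_eq_left.1 h3
  · intro h
    exact inf_eq_left.1 (Subtype.ext (Set.inter_eq_left.2 h))

lemma eq_bot_iff_val {b : B} : b = ⊥ ↔ b.1 = ∅ :=
  ⟨fun h => by rw [h]; rfl, fun h => Subtype.ext h⟩

lemma exists_Ico_subset {b : B} (hne : b.1.Nonempty) :
    ∃ q r : ℚ, q < r ∧ Set.Ico (q : ℝ) r ⊆ b.1 := by
  obtain ⟨F, hF⟩ := b.2
  obtain ⟨x, hx⟩ := hne
  rw [← hF] at hx
  simp only [decode, Set.mem_iUnion] at hx
  obtain ⟨p, hpF, hxp⟩ := hx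
  have hsub : J (eL p.1) (eR p.2) ⊆ b.1 := by
    rw [← hF]; exact Set.subset_biUnion_of_mem (u := fun p => J (eL p.1) (eR p.2)) hpF
  obtain ⟨a, c⟩ := p
  rcases a with _ | q <;> rcases c with _ | r
  · exact ⟨0, 1, by norm_num, fun y _ => hsub (by rw [J_nn]; exact Set.mem_univ y)⟩
  · refine ⟨r - 1, r, by linarith, fun y hy => hsub ?_⟩
    rw [J_ns]; exact hy.2
  · refine ⟨q, q + 1, by linarith, fun y hy => hsub ?_⟩
    rw [J_sn]; exact hy.1
  · rw [J_ss] at hsub hxp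
    have : (q : ℝ) < r := lt_of_le_of_lt hxp.1 hxp.2
    exact ⟨q, r, by exact_mod_cast this, hsub⟩

end MAaux

/-- `cov K` is sharp for Martin's axiom for countable Boolean algebras: there exist a
countable nontrivial Boolean algebra `B` and a family of `cov K` many dense subsets of
`B` such that no proper filter of `B` meets them all. -/
theorem MA_countable_fails_at_covK :
    ∃ (B : Type) (_ : BooleanAlgebra B), Countable B ∧ Nontrivial B ∧
      ∃ (ι : Type) (𝒟 : ι → Set B), Cardinal.mk ι = covK ∧ (∀ i, DenseSub (𝒟 i)) ∧
        ¬ ∃ G : Set B, ⊤ ∈ G ∧ ⊥ ∉ G ∧ (∀ a ∈ G, ∀ b ∈ G, a ⊓ b ∈ G) ∧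
          (∀ a ∈ G, ∀ b : B, a ≤ b → b ∈ G) ∧ ∀ i, ∃ d ∈ 𝒟 i, d ∈ G := by
  classical
  have hne : {c : Cardinal | ∃ (ι : Type) (A : ι → Set ℝ),
      (∀ i, IsNowhereDense (A i)) ∧ (⋃ i, A i) = Set.univ ∧ c = Cardinal.mk ι}.Nonempty := by
    refine ⟨Cardinal.mk ℝ, ℝ, fun x => {x}, fun x => ?_, by simp [Set.iUnion_of_singleton], rfl⟩
    unfold IsNowhereDense
    rw [closure_singleton, interior_singleton]
  obtain ⟨ι, A, hND, hcov, hcard⟩ := csInf_mem hne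
  set D : ι → Set MAaux.B := fun i =>
    {b : MAaux.B | ∃ q r : ℚ, q < r ∧ b.1 = Set.Ico (q : ℝ) r ∧
      Set.Icc (q : ℝ) r ∩ closure (A i) = ∅} with hD
  refine ⟨MAaux.B, inferInstance, inferInstance, ?_, ι, D, hcard.symm, ?_, ?_⟩
  · -- nontrivial
    refine ⟨⟨⊥, ⊤, fun h => ?_⟩⟩
    have h1 : (∅ : Set ℝ) = Set.univ := congrArg Subtype.val h
    exact absurd (h1 ▸ Set.mem_univ (0 : ℝ)) (Set.notMem_empty 0)
  · -- density
    intro i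
    constructor
    · rintro d ⟨q, r, hqr, hval, -⟩
      intro hbot
      rw [MAaux.eq_bot_iff_val, hval] at hbot
      exact absurd hbot (Set.nonempty_iff_ne_empty.1 (Set.nonempty_Ico.2 (by exact_mod_cast hqr)))
    · intro b hb
      have hbne : b.1.Nonempty := by
        rw [Set.nonempty_iff_ne_empty]
        exact fun h => hb (MAaux.eq_bot_iff_val.2 h)
      obtain ⟨q, r, hqr, hsub⟩ := MAaux.exists_Ico_subset hbne
      have hqr' : (q : ℝ) < r := by exact_mod_cast hqr
      have hIoo : ¬ (Set.Ioo (q : ℝ) r ⊆ closure (A i)) := by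
        intro hsub'
        have h2 := isOpen_Ioo.subset_interior_iff.2 hsub'
        rw [hND i] at h2
        exact (Set.nonempty_Ioo.2 hqr').ne_empty (Set.subset_empty_iff.1 h2)
      obtain ⟨x, hxI, hxC⟩ := Set.not_subset.1 hIoo
      have hopen : IsOpen (Set.Ioo (q : ℝ) r ∩ (closure (A i))ᶜ) :=
        isOpen_Ioo.inter isClosed_closure.isOpen_compl
      obtain ⟨ε, hε, hball⟩ := Metric.isOpen_iff.1 hopen x ⟨hxI, hxC⟩
      obtain ⟨q', hq'1, hq'2⟩ := exists_rat_btwn (sub_lt_self x hε)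
      obtain ⟨r', hr'1, hr'2⟩ := exists_rat_btwn (lt_add_of_pos_right x hε)
      have hq'r' : (q' : ℝ) < r' := lt_trans hq'2 hr'1
      have hIcc : Set.Icc (q' : ℝ) r' ⊆ Metric.ball x ε := by
        intro y hy
        rw [Metric.mem_ball, Real.dist_eq, abs_sub_lt_iff]
        obtain ⟨h1, h2⟩ := hy
        constructor <;> linarith
      have hIccU : Set.Icc (q' : ℝ) r' ⊆ Set.Ioo (q : ℝ) r ∩ (closure (A i))ᶜ :=
        fun y hy => hball (hIcc hy)
      refine ⟨⟨Set.Ico (q' : ℝ) r', MAaux.Ico_mem q' r'⟩,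
        ⟨q', r', by exact_mod_cast hq'r', rfl, ?_⟩, ?_⟩
      · exact Set.eq_empty_iff_forall_notMem.2 fun y hy => (hIccU hy.1).2 hy.2
      · refine MAaux.le_iff.2 ?_
        intro y hy
        have := (hIccU (Set.Ico_subset_Icc_self hy)).1
        exact hsub ⟨le_of_lt this.1, this.2⟩
  · -- no filter meets all dense sets
    rintro ⟨G, hTop, hBot, hMeet, hUp, hHit⟩
    choose d hdD hdG using hHit
    choose q r hqr hval hdisj using hdD
    have hι : Nonempty ι := by
      have h0 : (0 : ℝ) ∈ ⋃ i, A i := hcov ▸ Set.mem_univ 0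
      obtain ⟨i, -⟩ := Set.mem_iUnion.1 h0
      exact ⟨i⟩
    obtain ⟨i₀⟩ := hι
    have hfin : ∀ u : Finset ι,
        (Set.Icc ((q i₀ : ℝ)) (r i₀) ∩ ⋂ i ∈ u, Set.Icc ((q i : ℝ)) (r i)).Nonempty := by
      intro u
      have hinfG : u.inf d ∈ G := by
        induction u using Finset.induction_on with
        | empty => simpa using hTop
        | @insert a u ha ih => rw [Finset.inf_insert]; exact hMeet _ (hdG a) _ ih
      have hmG : d i₀ ⊓ u.inf d ∈ G := hMeet _ (hdG i₀) _ hinfG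
      have hmne : (d i₀ ⊓ u.inf d : MAaux.B).1.Nonempty := by
        rw [Set.nonempty_iff_ne_empty]
        intro h
        exact hBot (MAaux.eq_bot_iff_val.2 h ▸ hmG)
      obtain ⟨x, hx⟩ := hmne
      have hxi : ∀ i, d i₀ ⊓ u.inf d ≤ d i → x ∈ Set.Icc ((q i : ℝ)) (r i) := by
        intro i hle
        have hmem := MAaux.le_iff.1 hle hx
        rw [hval i] at hmem
        exact Set.Ico_subset_Icc_self hmem
      refine ⟨x, hxi i₀ inf_le_left, Set.mem_iInter₂.2 fun i hi =>
        hxi i (le_trans inf_le_right (Finset.inf_le hi))⟩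
    obtain ⟨x, -, hxall⟩ := IsCompact.inter_iInter_nonempty isCompact_Icc
      (fun i => Set.Icc ((q i : ℝ)) (r i)) (fun i => isClosed_Icc) hfin
    have hxU : x ∈ ⋃ i, A i := hcov ▸ Set.mem_univ x
    obtain ⟨i, hxi⟩ := Set.mem_iUnion.1 hxU
    have hxIcc : x ∈ Set.Icc ((q i : ℝ)) (r i) := Set.mem_iInter.1 hxall i
    have hmem : x ∈ Set.Icc ((q i : ℝ)) (r i) ∩ closure (A i) := ⟨hxIcc, subset_closure hxi⟩
    rw [hdisj i] at hmem
    exact Set.notMem_empty x hmem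
end

section
/- Let L be a countable first-order language, T a consistent L-theory, λ a cardinal with λ < 2^ℵ₀, and for each i < λ let Γ_i be a complete non-principal type over T in finitely many free variables. Then T has a model that omits every Γ_i, i.e., a model M such that for each i < λ no tuple of M satisfies every formula in Γ_i. (When the non-principal types to be omitted are maximal, fewer than continuum many types can be omitted.) -/
open FirstOrder FirstOrder.Language

universe u v


/-- A formula `φ(x₀,…,x_{n−1})` is consistent with `T` if some `n`-tuple in some
model of `T` satisfies it. -/
def ConsistentWith {L : FirstOrder.Language.{u, v}} (T : L.Theory) {n : ℕ}
    (φ : L.Formula (Fin n)) : Prop :=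
  ∃ (M : Theory.ModelType.{u, v, max u v} T) (v : Fin n → M), φ.Realize v

/-- A set `Γ` of formulas in the free variables `x₀,…,x_{n−1}` is non-principal
over `T` if for every formula `φ` consistent with `T` there is `γ ∈ Γ` such that
`φ ⊓ ∼γ` is consistent with `T`. -/
def NonPrincipal {L : FirstOrder.Language.{u, v}} (T : L.Theory) {n : ℕ}
    (Γ : Set (L.Formula (Fin n))) : Prop :=
  ∀ φ : L.Formula (Fin n), ConsistentWith T φ →
    ∃ γ ∈ Γ, ConsistentWith T (φ ⊓ γ.not)

/-- `Γ` is a complete `n`-type of `T`: every finite subset of `Γ` is simultaneously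
satisfiable by a single `n`-tuple in some model of `T`, and for every formula `ψ`
either `ψ ∈ Γ` or `∼ψ ∈ Γ`. -/
def IsCompleteType {L : FirstOrder.Language.{u, v}} (T : L.Theory) {n : ℕ}
    (Γ : Set (L.Formula (Fin n))) : Prop :=
  (∀ Γ₀ : Finset (L.Formula (Fin n)), ↑Γ₀ ⊆ Γ →
    ∃ (M : Theory.ModelType.{u, v, max u v} T) (v : Fin n → M),
      ∀ γ ∈ Γ₀, Formula.Realize γ v) ∧
  ∀ ψ : L.Formula (Fin n), ψ ∈ Γ ∨ ψ.not ∈ Γ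

attribute [local instance] Classical.propDecidable

namespace OmitAux

variable {L : FirstOrder.Language.{u, v}} (T : L.Theory)

/-- Satisfiability (together with `T`) of a finite set of formulas with variables in `ℕ`. -/
def VSat (Θ : Finset (L.Formula ℕ)) : Prop :=
  ∃ (M : Theory.ModelType.{u, v, max u v} T) (w : ℕ → M), ∀ φ ∈ Θ, φ.Realize w

variable {T}

theorem VSat.mono {Θ Θ' : Finset (L.Formula ℕ)} (h : VSat T Θ) (hs : Θ' ⊆ Θ) : VSat T Θ' := by
  obtain ⟨M, w, hw⟩ := h
  exact ⟨M, w, fun φ hφ => hw φ (hs hφ)⟩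

theorem vSat_empty (hT : T.IsSatisfiable) : VSat T ∅ := by
  obtain ⟨M⟩ := hT
  exact ⟨M, fun _ => Classical.choice M.nonempty', by simp⟩

/-- Realization of a formula only depends on values at free variables. -/
theorem realize_congr_freeVar {M : Type*} [L.Structure M] {φ : L.Formula ℕ} {w w' : ℕ → M}
    (h : ∀ a ∈ φ.freeVarFinset, w a = w' a) : φ.Realize w ↔ φ.Realize w' := by
  have hsub : ↑φ.freeVarFinset ⊆ (↑φ.freeVarFinset : Set ℕ) := subset_refl _
  have h1 := BoundedFormula.realize_restrictFreeVar' (M := M) hsub (v := w) (xs := default)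
  have h2 := BoundedFormula.realize_restrictFreeVar' (M := M) hsub (v := w') (xs := default)
  have : w ∘ (Subtype.val : (↑φ.freeVarFinset : Set ℕ) → ℕ)
      = w' ∘ (Subtype.val : (↑φ.freeVarFinset : Set ℕ) → ℕ) := by
    funext a
    exact h a.1 (by exact_mod_cast a.2)
  show BoundedFormula.Realize φ w default ↔ BoundedFormula.Realize φ w' default
  rw [← h1, ← h2, this]

/-- Same, over any variable type. -/
theorem realize_congr_freeVar' {α : Type*} [DecidableEq α] {M : Type*} [L.Structure M]
    {φ : L.Formula α} {w w' : α → M}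
    (h : ∀ a ∈ φ.freeVarFinset, w a = w' a) : φ.Realize w ↔ φ.Realize w' := by
  have hsub : ↑φ.freeVarFinset ⊆ (↑φ.freeVarFinset : Set α) := subset_refl _
  have h1 := BoundedFormula.realize_restrictFreeVar' (M := M) hsub (v := w) (xs := default)
  have h2 := BoundedFormula.realize_restrictFreeVar' (M := M) hsub (v := w') (xs := default)
  have : w ∘ (Subtype.val : (↑φ.freeVarFinset : Set α) → α)
      = w' ∘ (Subtype.val : (↑φ.freeVarFinset : Set α) → α) := by
    funext a
    exact h a.1 (by exact_mod_cast a.2)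
  show BoundedFormula.Realize φ w default ↔ BoundedFormula.Realize φ w' default
  rw [← h1, ← h2, this]

theorem formula_realize_subst {α β : Type*} {M : Type*} [L.Structure M] {φ : L.Formula α}
    {tf : α → L.Term β} {w : β → M} :
    Formula.Realize (φ.subst tf) w ↔ Formula.Realize φ (fun a => (tf a).realize w) :=
  BoundedFormula.realize_subst

theorem subst_not {α β : Type*} (φ : L.Formula α) (tf : α → L.Term β) :
    (φ.not).subst tf = (φ.subst tf).not := rfl

/-- The existential closure (over the `Fin 1` variable) of a formula with variables
`ℕ ⊕ Fin 1`, as a formula with variables `ℕ`. -/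
noncomputable def ExF (χ : L.Formula (ℕ ⊕ Fin 1)) : L.Formula ℕ :=
  χ.iExs (Fin 1)

/-- Instantiation of the `Fin 1` variable at the variable `j`. -/
noncomputable def instF (χ : L.Formula (ℕ ⊕ Fin 1)) (j : ℕ) : L.Formula ℕ :=
  χ.relabel (Sum.elim id fun _ => j)

theorem realize_ExF {M : Type*} [L.Structure M] {χ : L.Formula (ℕ ⊕ Fin 1)} {w : ℕ → M} :
    (ExF χ).Realize w ↔ ∃ a : M, χ.Realize (Sum.elim w fun _ => a) := by
  rw [ExF, Formula.realize_iExs]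
  constructor
  · rintro ⟨i, hi⟩
    refine ⟨i 0, ?_⟩
    have he : (Sum.elim w fun _ => i 0) = fun a => Sum.elim w i (id a) := by
      funext x
      rcases x with x | x
      · rfl
      · simp [Subsingleton.elim x 0]
    rw [he]
    exact hi
  · rintro ⟨a, ha⟩
    exact ⟨fun _ => a, ha⟩

theorem realize_instF {M : Type*} [L.Structure M] {χ : L.Formula (ℕ ⊕ Fin 1)} {j : ℕ}
    {w : ℕ → M} : (instF χ j).Realize w ↔ χ.Realize (Sum.elim w fun _ => w j) := by
  rw [instF, Formula.realize_relabel]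
  have he : w ∘ (Sum.elim id fun _ : Fin 1 => j) = Sum.elim w fun _ : Fin 1 => w j := by
    funext x; rcases x with x | x <;> rfl
  rw [he]


variable {L : FirstOrder.Language.{u, v}}

/-- Finite conjunction of a list of formulas. -/
def conjList {β : Type*} : List (L.Formula β) → L.Formula β
  | [] => ⊤
  | φ :: l => φ ⊓ conjList l

theorem realize_conjList {β : Type*} {M : Type*} [L.Structure M] {v : β → M} :
    ∀ {l : List (L.Formula β)}, (conjList l).Realize v ↔ ∀ φ ∈ l, φ.Realize v
  | [] => by simp [conjList]
  | φ :: l => by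
    simp only [conjList, Formula.realize_inf, realize_conjList (l := l), List.mem_cons]
    aesop

/-- The variables occurring in a finite set of formulas together with a tuple of terms. -/
def genVars (q : Finset (L.Formula ℕ)) {nn : ℕ} (t : Fin nn → L.Term ℕ) : Finset ℕ :=
  q.sup BoundedFormula.freeVarFinset ∪ Finset.univ.sup fun i => (t i).varFinset

theorem freeVar_subset_genVars (q : Finset (L.Formula ℕ)) {nn : ℕ} (t : Fin nn → L.Term ℕ)
    {ψ : L.Formula ℕ} (hψ : ψ ∈ q) :
    ↑ψ.freeVarFinset ⊆ ((genVars q t : Finset ℕ) : Set ℕ) := by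
  intro a ha
  rw [Finset.mem_coe] at ha
  refine Finset.mem_coe.2 ?_
  rw [genVars, Finset.mem_union]
  exact Or.inl (Finset.le_sup (f := BoundedFormula.freeVarFinset) hψ ha)

theorem varFinset_subset_genVars (q : Finset (L.Formula ℕ)) {nn : ℕ} (t : Fin nn → L.Term ℕ)
    (i : Fin nn) : ↑(t i).varFinset ⊆ ((genVars q t : Finset ℕ) : Set ℕ) := by
  intro a ha
  rw [Finset.mem_coe] at ha
  refine Finset.mem_coe.2 ?_
  rw [genVars, Finset.mem_union]
  exact Or.inr (Finset.le_sup (f := fun i => (t i).varFinset) (Finset.mem_univ i) ha)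

/-- The "generator" formula `∃ ȳ (⋀ q(ȳ) ∧ x̄ = t̄(ȳ))` of a finite set of formulas `q` at a
tuple of terms `t`. -/
noncomputable def gen (q : Finset (L.Formula ℕ)) {nn : ℕ} (t : Fin nn → L.Term ℕ) :
    L.Formula (Fin nn) :=
  (conjList
    ((q.attach.toList.map fun ψ =>
      (Formula.relabel Sum.inr
        (ψ.1.restrictFreeVar (Set.inclusion (freeVar_subset_genVars q t ψ.2))) :
        L.Formula (Fin nn ⊕ ((genVars q t : Finset ℕ) : Set ℕ)))) ++
    ((List.finRange nn).map fun i =>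
      Term.equal (Term.var (Sum.inl i))
        (((t i).restrictVar (Set.inclusion (varFinset_subset_genVars q t i))).relabel
          Sum.inr)))).iExs ((genVars q t : Finset ℕ) : Set ℕ)

theorem gen_of {q : Finset (L.Formula ℕ)} {nn : ℕ} {t : Fin nn → L.Term ℕ}
    {M : Type*} [L.Structure M] {w : ℕ → M} (hq : ∀ ψ ∈ q, Formula.Realize ψ w) :
    (gen q t).Realize fun i => (t i).realize w := by
  rw [gen, Formula.realize_iExs]
  refine ⟨fun x => w x.1, ?_⟩
  rw [realize_conjList]
  intro φ hφ
  rw [List.mem_append] at hφ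
  rcases hφ with hφ | hφ
  · rw [List.mem_map] at hφ
    obtain ⟨ψ, _, rfl⟩ := hφ
    rw [Formula.realize_relabel]
    have : ((Sum.elim (fun i => (t i).realize w) (fun x => w x.1)) ∘ Sum.inr)
        = w ∘ (Subtype.val : ((genVars q t : Finset ℕ) : Set ℕ) → ℕ) := by
      funext a; rfl
    rw [this]
    exact (BoundedFormula.realize_restrictFreeVar' _).2 (hq ψ.1 ψ.2)
  · rw [List.mem_map] at hφ
    obtain ⟨i, _, rfl⟩ := hφ
    rw [Formula.realize_equal, Term.realize_relabel]
    have : ((Sum.elim (fun i => (t i).realize w) (fun x => w x.1)) ∘ Sum.inr)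
        = w ∘ (Subtype.val : ((genVars q t : Finset ℕ) : Set ℕ) → ℕ) := by
      funext a; rfl
    rw [this, Term.realize_restrictVar']
    rfl

theorem gen_to {q : Finset (L.Formula ℕ)} {nn : ℕ} {t : Fin nn → L.Term ℕ}
    {M : Type*} [L.Structure M] [Nonempty M] {a : Fin nn → M} (h : (gen q t).Realize a) :
    ∃ w : ℕ → M, (∀ ψ ∈ q, Formula.Realize ψ w) ∧ ∀ i, (t i).realize w = a i := by
  rw [gen, Formula.realize_iExs] at h
  obtain ⟨x, hx⟩ := h
  rw [realize_conjList] at hx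
  refine ⟨fun b => if hb : b ∈ genVars q t then x ⟨b, hb⟩ else Classical.arbitrary M, ?_, ?_⟩
  · intro ψ hψ
    have h1 := hx _ (List.mem_append_left _ (List.mem_map.2 ⟨⟨ψ, hψ⟩, Finset.mem_toList.2
      (Finset.mem_attach _ _), rfl⟩))
    rw [Formula.realize_relabel] at h1
    have he : ((Sum.elim a x) ∘ Sum.inr)
        = (fun b => if hb : b ∈ genVars q t then x ⟨b, hb⟩ else Classical.arbitrary M) ∘
          (Subtype.val : ((genVars q t : Finset ℕ) : Set ℕ) → ℕ) := by
      funext c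
      simp only [Function.comp_apply, Sum.elim_inr, id]
      rw [dif_pos (Finset.mem_coe.1 c.2)]
    rw [he] at h1
    exact (BoundedFormula.realize_restrictFreeVar' _).1 h1
  · intro i
    have h1 := hx _ (List.mem_append_right _ (List.mem_map.2 ⟨i, List.mem_finRange i, rfl⟩))
    rw [Formula.realize_equal, Term.realize_relabel] at h1
    have he : ((Sum.elim a x) ∘ Sum.inr)
        = (fun b => if hb : b ∈ genVars q t then x ⟨b, hb⟩ else Classical.arbitrary M) ∘
          (Subtype.val : ((genVars q t : Finset ℕ) : Set ℕ) → ℕ) := by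
      funext c
      simp only [Function.comp_apply, Sum.elim_inr, id]
      rw [dif_pos (Finset.mem_coe.1 c.2)]
    rw [he, Term.realize_restrictVar'] at h1
    exact h1.symm


section Construction

/-- One step of the "splitting" fold: try to split the pair of finite theories by a formula
applied to the tuple of terms `s`. -/
noncomputable def foldStep (T : L.Theory) (s : Σ m : ℕ, Fin m → L.Term ℕ)
    (pq : Finset (L.Formula ℕ) × Finset (L.Formula ℕ)) :
    Finset (L.Formula ℕ) × Finset (L.Formula ℕ) :=
  if h : ∃ γ : L.Formula (Fin s.1), VSat T (insert (γ.subst s.2) pq.1)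
      ∧ VSat T (insert ((γ.subst s.2).not) pq.2) then
    (insert ((Classical.choose h).subst s.2) pq.1,
     insert (((Classical.choose h).subst s.2).not) pq.2)
  else pq

/-- Iterating the splitting fold over the term tuples `te 0, …, te (m-1)`. -/
noncomputable def foldAux (T : L.Theory) (te : ℕ → Σ m : ℕ, Fin m → L.Term ℕ)
    (Θ : Finset (L.Formula ℕ)) :
    ℕ → Finset (L.Formula ℕ) × Finset (L.Formula ℕ)
  | 0 => (Θ, Θ)
  | m + 1 => foldStep T (te m) (foldAux T te Θ m)

/-- Deciding the `k`-th formula. -/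
noncomputable def decStep (T : L.Theory) (de : ℕ → L.Formula ℕ) (k : ℕ)
    (c : Finset (L.Formula ℕ)) : Finset (L.Formula ℕ) :=
  if VSat T (insert (de k) c) then insert (de k) c else insert ((de k).not) c

/-- A variable fresh for `c` and for (the `ℕ`-part of) `χ`. -/
def fresh (c : Finset (L.Formula ℕ)) (χ : L.Formula (ℕ ⊕ Fin 1)) : ℕ :=
  (c.sup fun φ => φ.freeVarFinset.sup id) +
    (χ.freeVarFinset.sup fun x => Sum.elim id (fun _ => 0) x) + 1

theorem fresh_not_mem_c {c : Finset (L.Formula ℕ)} {χ : L.Formula (ℕ ⊕ Fin 1)}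
    {φ : L.Formula ℕ} (hφ : φ ∈ c) {b : ℕ} (hb : b ∈ φ.freeVarFinset) : b < fresh c χ := by
  have h1 : b ≤ φ.freeVarFinset.sup id := Finset.le_sup (f := id) hb
  have h2 : φ.freeVarFinset.sup id ≤ c.sup fun φ => φ.freeVarFinset.sup id :=
    Finset.le_sup (f := fun φ => φ.freeVarFinset.sup id) hφ
  unfold fresh
  omega

theorem fresh_not_mem_chi {c : Finset (L.Formula ℕ)} {χ : L.Formula (ℕ ⊕ Fin 1)}
    {b : ℕ} (hb : Sum.inl b ∈ χ.freeVarFinset) : b < fresh c χ := by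
  have h1 : (Sum.elim id (fun _ => 0) (Sum.inl b) : ℕ) ≤
      χ.freeVarFinset.sup fun x => Sum.elim id (fun _ => 0) x :=
    Finset.le_sup (f := fun x => Sum.elim id (fun _ => 0) x) hb
  simp only [Sum.elim_inl, id] at h1
  unfold fresh
  omega

/-- The Henkin witness step. -/
noncomputable def henStep (T : L.Theory) (he : ℕ → L.Formula (ℕ ⊕ Fin 1)) (k : ℕ)
    (c : Finset (L.Formula ℕ)) : Finset (L.Formula ℕ) :=
  if VSat T (insert (ExF (he k)) c)
  then insert (ExF (he k)) (insert (instF (he k) (fresh c (he k))) c)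
  else c

/-- Everything done when extending a node at level `k`, producing the two children. -/
noncomputable def levelStep (T : L.Theory) (de : ℕ → L.Formula ℕ)
    (he : ℕ → L.Formula (ℕ ⊕ Fin 1)) (te : ℕ → Σ m : ℕ, Fin m → L.Term ℕ) (k : ℕ)
    (Θ : Finset (L.Formula ℕ)) :
    Finset (L.Formula ℕ) × Finset (L.Formula ℕ) :=
  (henStep T he k (decStep T de k (foldAux T te Θ (k + 1)).1),
   henStep T he k (decStep T de k (foldAux T te Θ (k + 1)).2))

/-- The node of the tree along branch `f` at level `k`. -/
noncomputable def node (T : L.Theory) (de : ℕ → L.Formula ℕ)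
    (he : ℕ → L.Formula (ℕ ⊕ Fin 1)) (te : ℕ → Σ m : ℕ, Fin m → L.Term ℕ)
    (f : ℕ → Bool) : ℕ → Finset (L.Formula ℕ)
  | 0 => ∅
  | k + 1 =>
    if f k then (levelStep T de he te k (node T de he te f k)).2
    else (levelStep T de he te k (node T de he te f k)).1

variable (T : L.Theory) (de : ℕ → L.Formula ℕ) (he : ℕ → L.Formula (ℕ ⊕ Fin 1))
  (te : ℕ → Σ m : ℕ, Fin m → L.Term ℕ)

/- ### Subset lemmas -/

theorem foldStep_subset (s) (pq : Finset (L.Formula ℕ) × Finset (L.Formula ℕ)) :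
    pq.1 ⊆ (foldStep T s pq).1 ∧ pq.2 ⊆ (foldStep T s pq).2 := by
  unfold foldStep
  split
  · exact ⟨Finset.subset_insert _ _, Finset.subset_insert _ _⟩
  · exact ⟨subset_rfl, subset_rfl⟩

theorem foldAux_subset (Θ : Finset (L.Formula ℕ)) {m m' : ℕ} (h : m ≤ m') :
    (foldAux T te Θ m).1 ⊆ (foldAux T te Θ m').1 ∧
      (foldAux T te Θ m).2 ⊆ (foldAux T te Θ m').2 := by
  induction m' with
  | zero =>
    have : m = 0 := by omega
    subst this
    exact ⟨subset_rfl, subset_rfl⟩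
  | succ m' ih =>
    rcases Nat.lt_or_ge m (m' + 1) with h' | h'
    · have h0 := ih (by omega)
      have h2 := foldStep_subset T (te m') (foldAux T te Θ m')
      exact ⟨h0.1.trans h2.1, h0.2.trans h2.2⟩
    · have : m = m' + 1 := by omega
      subst this
      exact ⟨subset_rfl, subset_rfl⟩

theorem subset_foldAux (Θ : Finset (L.Formula ℕ)) (m : ℕ) :
    Θ ⊆ (foldAux T te Θ m).1 ∧ Θ ⊆ (foldAux T te Θ m).2 :=
  foldAux_subset T te Θ (Nat.zero_le m)

theorem decStep_subset (k : ℕ) (c : Finset (L.Formula ℕ)) : c ⊆ decStep T de k c := by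
  unfold decStep; split <;> exact Finset.subset_insert _ _

theorem henStep_subset (k : ℕ) (c : Finset (L.Formula ℕ)) : c ⊆ henStep T he k c := by
  unfold henStep; split
  · exact (Finset.subset_insert _ _).trans (Finset.subset_insert _ _)
  · exact subset_rfl

theorem levelStep_subset (k : ℕ) (Θ : Finset (L.Formula ℕ)) :
    Θ ⊆ (levelStep T de he te k Θ).1 ∧ Θ ⊆ (levelStep T de he te k Θ).2 :=
  ⟨(subset_foldAux T te Θ (k+1)).1.trans ((decStep_subset T de k _).trans
      (henStep_subset T he k _)),
   (subset_foldAux T te Θ (k+1)).2.trans ((decStep_subset T de k _).trans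
      (henStep_subset T he k _))⟩

theorem node_subset_succ (f : ℕ → Bool) (k : ℕ) :
    node T de he te f k ⊆ node T de he te f (k + 1) := by
  rw [node]
  split
  · exact (levelStep_subset T de he te k _).2
  · exact (levelStep_subset T de he te k _).1

theorem node_mono (f : ℕ → Bool) {k k' : ℕ} (h : k ≤ k') :
    node T de he te f k ⊆ node T de he te f k' := by
  induction k' with
  | zero =>
    have : k = 0 := by omega
    subst this; exact subset_rfl
  | succ k' ih =>
    rcases Nat.lt_or_ge k (k' + 1) with h' | h'
    · exact (ih (by omega)).trans (node_subset_succ T de he te f k')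
    · have : k = k' + 1 := by omega
      subst this; exact subset_rfl

/- ### Satisfiability lemmas -/

theorem foldStep_sat (s) {pq : Finset (L.Formula ℕ) × Finset (L.Formula ℕ)}
    (h1 : VSat T pq.1) (h2 : VSat T pq.2) :
    VSat T (foldStep T s pq).1 ∧ VSat T (foldStep T s pq).2 := by
  unfold foldStep
  split_ifs with h
  · exact ⟨(Classical.choose_spec h).1, (Classical.choose_spec h).2⟩
  · exact ⟨h1, h2⟩

theorem foldAux_sat (Θ : Finset (L.Formula ℕ)) (hΘ : VSat T Θ) (m : ℕ) :
    VSat T (foldAux T te Θ m).1 ∧ VSat T (foldAux T te Θ m).2 := by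
  induction m with
  | zero => exact ⟨hΘ, hΘ⟩
  | succ m ih => exact foldStep_sat T (te m) ih.1 ih.2

theorem decStep_sat (k : ℕ) {c : Finset (L.Formula ℕ)} (hc : VSat T c) :
    VSat T (decStep T de k c) := by
  unfold decStep
  split_ifs with h
  · exact h
  · obtain ⟨M, w, hw⟩ := hc
    by_cases hr : (de k).Realize w
    · exact absurd ⟨M, w, by
        intro φ hφ
        rcases Finset.mem_insert.1 hφ with rfl | hφ
        · exact hr
        · exact hw φ hφ⟩ h
    · refine ⟨M, w, ?_⟩
      intro φ hφ
      rcases Finset.mem_insert.1 hφ with rfl | hφ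
      · exact Formula.realize_not.2 hr
      · exact hw φ hφ

theorem henStep_sat (k : ℕ) {c : Finset (L.Formula ℕ)} (hc : VSat T c) :
    VSat T (henStep T he k c) := by
  unfold henStep
  split_ifs with h
  · obtain ⟨M, w, hw⟩ := h
    have hex : (ExF (he k)).Realize w := hw _ (Finset.mem_insert_self _ _)
    obtain ⟨a, ha⟩ := realize_ExF.1 hex
    set j := fresh c (he k) with hj
    refine ⟨M, Function.update w j a, ?_⟩
    intro φ hφ
    rcases Finset.mem_insert.1 hφ with rfl | hφ
    · refine realize_ExF.2 ⟨a, ?_⟩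
      refine (realize_congr_freeVar' (w := Sum.elim w fun _ => a) ?_).1 ha
      intro x hx
      rcases x with b | b
      · simp only [Sum.elim_inl]
        rw [Function.update_of_ne]
        intro hbj
        subst hbj
        exact absurd hx fun hc' => lt_irrefl _ (fresh_not_mem_chi (c := c) hc')
      · rfl
    rcases Finset.mem_insert.1 hφ with rfl | hφ
    · refine realize_instF.2 ?_
      rw [Function.update_self]
      refine (realize_congr_freeVar' (w := Sum.elim w fun _ => a) ?_).1 ha
      intro x hx
      rcases x with b | b
      · simp only [Sum.elim_inl]
        rw [Function.update_of_ne]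
        intro hbj
        subst hbj
        exact absurd hx fun hc' => lt_irrefl _ (fresh_not_mem_chi (c := c) hc')
      · rfl
    · refine (realize_congr_freeVar (w := w) ?_).1 (hw φ (Finset.mem_insert_of_mem hφ))
      intro b hb
      rw [Function.update_of_ne]
      intro hbj
      subst hbj
      exact lt_irrefl _ (fresh_not_mem_c hφ hb)
  · exact hc

theorem node_sat (hT : T.IsSatisfiable) (f : ℕ → Bool) (k : ℕ) :
    VSat T (node T de he te f k) := by
  induction k with
  | zero => exact vSat_empty hT
  | succ k ih =>
    have h := foldAux_sat T te _ ih (k + 1)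
    rw [node]
    split
    · exact henStep_sat T he k (decStep_sat T de k h.2)
    · exact henStep_sat T he k (decStep_sat T de k h.1)

theorem node_prefix {f g : ℕ → Bool} (k : ℕ) (h : ∀ j < k, f j = g j) :
    node T de he te f k = node T de he te g k := by
  induction k with
  | zero => rfl
  | succ k ih =>
    have h1 : node T de he te f k = node T de he te g k := ih fun j hj => h j (by omega)
    rw [node, node, h k (by omega), h1]

end Construction

section Branch

variable (T : L.Theory) (de : ℕ → L.Formula ℕ) (he : ℕ → L.Formula (ℕ ⊕ Fin 1))
  (te : ℕ → Σ m : ℕ, Fin m → L.Term ℕ)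

/-- The branch theory along `f`. -/
def Df (f : ℕ → Bool) : Set (L.Formula ℕ) :=
  {φ | ∃ k, φ ∈ node T de he te f k}

theorem node_subset_Df (f : ℕ → Bool) (k : ℕ) :
    ↑(node T de he te f k) ⊆ Df T de he te f :=
  fun φ hφ => ⟨k, hφ⟩

theorem Df_finset_sat (hT : T.IsSatisfiable) {f : ℕ → Bool} {s : Finset (L.Formula ℕ)}
    (hs : ↑s ⊆ Df T de he te f) : VSat T s := by
  classical
  have key : ∃ K, s ⊆ node T de he te f K := by
    refine ⟨s.attach.sup fun φ => Classical.choose (hs (Finset.mem_coe.2 φ.2)), ?_⟩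
    intro φ hφ
    have h1 : φ ∈ node T de he te f (Classical.choose (hs (Finset.mem_coe.2 hφ))) :=
      Classical.choose_spec (hs (Finset.mem_coe.2 hφ))
    refine node_mono T de he te f ?_ h1
    exact Finset.le_sup (f := fun φ : {x // x ∈ s} => Classical.choose (hs (Finset.mem_coe.2 φ.2)))
      (Finset.mem_attach s ⟨φ, hφ⟩)
  obtain ⟨K, hK⟩ := key
  exact (node_sat T de he te hT f K).mono hK

theorem Df_not_both (hT : T.IsSatisfiable) {f : ℕ → Bool} {φ : L.Formula ℕ}
    (h1 : φ ∈ Df T de he te f) (h2 : φ.not ∈ Df T de he te f) : False := by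
  have : VSat T {φ, φ.not} := Df_finset_sat T de he te hT (by
    intro ψ hψ
    rcases Finset.mem_insert.1 hψ with rfl | hψ
    · exact h1
    · rw [Finset.mem_singleton] at hψ
      subst hψ
      exact h2)
  obtain ⟨M, w, hw⟩ := this
  have ha := hw φ (by simp)
  have hb := hw φ.not (by simp)
  exact Formula.realize_not.1 hb ha

theorem Df_decides (hde : Function.Surjective de) (f : ℕ → Bool) (φ : L.Formula ℕ) :
    φ ∈ Df T de he te f ∨ φ.not ∈ Df T de he te f := by
  obtain ⟨k, rfl⟩ := hde φ
  have key : ∀ c, de k ∈ decStep T de k c ∨ (de k).not ∈ decStep T de k c := by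
    intro c
    unfold decStep
    split_ifs
    · exact Or.inl (Finset.mem_insert_self _ _)
    · exact Or.inr (Finset.mem_insert_self _ _)
  rcases Bool.eq_false_or_eq_true (f k) with hfk | hfk
  · have hnode : node T de he te f (k + 1) = (levelStep T de he te k (node T de he te f k)).2 := by
      rw [node, hfk]
      simp
    rcases key (foldAux T te (node T de he te f k) (k+1)).2 with h | h
    · exact Or.inl ⟨k + 1, by rw [hnode]; exact henStep_subset T he k _ h⟩
    · exact Or.inr ⟨k + 1, by rw [hnode]; exact henStep_subset T he k _ h⟩
  · have hnode : node T de he te f (k + 1) = (levelStep T de he te k (node T de he te f k)).1 := by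
      rw [node, hfk]
      simp
    rcases key (foldAux T te (node T de he te f k) (k+1)).1 with h | h
    · exact Or.inl ⟨k + 1, by rw [hnode]; exact henStep_subset T he k _ h⟩
    · exact Or.inr ⟨k + 1, by rw [hnode]; exact henStep_subset T he k _ h⟩

theorem Df_henkin (hT : T.IsSatisfiable) (hhe : Function.Surjective he) {f : ℕ → Bool}
    {χ : L.Formula (ℕ ⊕ Fin 1)} (hχ : ExF χ ∈ Df T de he te f) :
    ∃ j : ℕ, instF χ j ∈ Df T de he te f := by
  obtain ⟨k, rfl⟩ := hhe χ
  rcases Bool.eq_false_or_eq_true (f k) with hfk | hfk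
  · set c := decStep T de k (foldAux T te (node T de he te f k) (k+1)).2 with hc
    have hnode : node T de he te f (k + 1) = henStep T he k c := by
      rw [node, hfk]; simp [levelStep, hc]
    have hcd : ↑c ⊆ Df T de he te f := by
      refine subset_trans ?_ (node_subset_Df T de he te f (k+1))
      rw [hnode]
      exact_mod_cast henStep_subset T he k c
    have hsat : VSat T (insert (ExF (he k)) c) := by
      refine Df_finset_sat T de he te hT (f := f) ?_
      intro ψ hψ
      rcases Finset.mem_insert.1 hψ with rfl | hψ
      · exact hχ
      · exact hcd hψ
    refine ⟨fresh c (he k), ⟨k + 1, ?_⟩⟩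
    rw [hnode]
    unfold henStep
    rw [if_pos hsat]
    exact Finset.mem_insert_of_mem (Finset.mem_insert_self _ _)
  · set c := decStep T de k (foldAux T te (node T de he te f k) (k+1)).1 with hc
    have hnode : node T de he te f (k + 1) = henStep T he k c := by
      rw [node, hfk]; simp [levelStep, hc]
    have hcd : ↑c ⊆ Df T de he te f := by
      refine subset_trans ?_ (node_subset_Df T de he te f (k+1))
      rw [hnode]
      exact_mod_cast henStep_subset T he k c
    have hsat : VSat T (insert (ExF (he k)) c) := by
      refine Df_finset_sat T de he te hT (f := f) ?_
      intro ψ hψ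
      rcases Finset.mem_insert.1 hψ with rfl | hψ
      · exact hχ
      · exact hcd hψ
    refine ⟨fresh c (he k), ⟨k + 1, ?_⟩⟩
    rw [hnode]
    unfold henStep
    rw [if_pos hsat]
    exact Finset.mem_insert_of_mem (Finset.mem_insert_self _ _)

end Branch

section Key

variable (T : L.Theory) (de : ℕ → L.Formula ℕ) (he : ℕ → L.Formula (ℕ ⊕ Fin 1))
  (te : ℕ → Σ m : ℕ, Fin m → L.Term ℕ)

/-- The key divergence lemma: if two branches diverge at level `k ≥ m`, they cannot both
realize a complete non-principal type at the tuple of terms `te m`. -/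
theorem key_div (hT : T.IsSatisfiable) {f g : ℕ → Bool} {k : ℕ}
    (hpre : ∀ j < k, f j = g j) (hfk : f k = false) (hgk : g k = true)
    {m : ℕ} (hm : m ≤ k) {nn : ℕ} {t : Fin nn → L.Term ℕ} (hte : te m = ⟨nn, t⟩)
    {Γ : Set (L.Formula (Fin nn))} (hcomp : ∀ ψ : L.Formula (Fin nn), ψ ∈ Γ ∨ ψ.not ∈ Γ)
    (hnp : NonPrincipal T Γ)
    (hf : ∀ γ ∈ Γ, (γ.subst t) ∈ Df T de he te f)
    (hg : ∀ γ ∈ Γ, (γ.subst t) ∈ Df T de he te g) : False := by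
  have hΘ : node T de he te g k = node T de he te f k :=
    node_prefix T de he te k fun j hj => (hpre j hj).symm
  set Θ := node T de he te f k with hΘdef
  set p := (foldAux T te Θ m).1 with hp
  set q := (foldAux T te Θ m).2 with hq
  -- the two children after the fold step `m` are inside the respective branches
  have hsub1 : ↑(foldStep T (te m) (foldAux T te Θ m)).1 ⊆ Df T de he te f := by
    refine subset_trans ?_ (node_subset_Df T de he te f (k+1))
    have e1 : foldStep T (te m) (foldAux T te Θ m) = foldAux T te Θ (m+1) := rfl
    rw [e1]
    have h2 : (foldAux T te Θ (m+1)).1 ⊆ (foldAux T te Θ (k+1)).1 :=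
      (foldAux_subset T te Θ (by omega)).1
    refine subset_trans h2 ?_
    rw [node, hfk]
    simp only [Bool.false_eq_true, if_false]
    exact_mod_cast (decStep_subset T de k _).trans (henStep_subset T he k _)
  have hsub2 : ↑(foldStep T (te m) (foldAux T te Θ m)).2 ⊆ Df T de he te g := by
    refine subset_trans ?_ (node_subset_Df T de he te g (k+1))
    have e1 : foldStep T (te m) (foldAux T te Θ m) = foldAux T te Θ (m+1) := rfl
    rw [e1]
    have h2 : (foldAux T te Θ (m+1)).2 ⊆ (foldAux T te Θ (k+1)).2 :=
      (foldAux_subset T te Θ (by omega)).2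
    refine subset_trans h2 ?_
    rw [node, hgk]
    simp only [if_true]
    rw [hΘ]
    exact_mod_cast (decStep_subset T de k _).trans (henStep_subset T he k _)
  rw [hte] at hsub1 hsub2
  by_cases hsplit : ∃ γ : L.Formula (Fin nn),
      VSat T (insert (γ.subst t) p) ∧ VSat T (insert ((γ.subst t).not) q)
  · -- the split case
    have he1 : (foldStep T ⟨nn, t⟩ (foldAux T te Θ m)) =
        (insert ((Classical.choose hsplit).subst t) p,
         insert (((Classical.choose hsplit).subst t).not) q) := by
      rw [foldStep, dif_pos hsplit]
    rw [he1] at hsub1 hsub2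
    set γ₀ := Classical.choose hsplit with hγ₀
    have h1 : γ₀.subst t ∈ Df T de he te f := hsub1 (Finset.mem_insert_self _ _)
    have h2 : (γ₀.subst t).not ∈ Df T de he te g := hsub2 (Finset.mem_insert_self _ _)
    rcases hcomp γ₀ with hγΓ | hγΓ
    · exact Df_not_both T de he te hT (hg γ₀ hγΓ) h2
    · have h3 : (γ₀.not).subst t ∈ Df T de he te f := hf γ₀.not hγΓ
      rw [subst_not] at h3
      exact Df_not_both T de he te hT h1 h3
  · -- the non-split case: use non-principality
    have hpf : ↑p ⊆ Df T de he te f := by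
      refine subset_trans ?_ hsub1
      rw [foldStep, dif_neg hsplit]
    have hqg : ↑q ⊆ Df T de he te g := by
      refine subset_trans ?_ hsub2
      rw [foldStep, dif_neg hsplit]
    -- for every γ ∈ Γ, every model of q realizes γ at t
    have hsem : ∀ γ ∈ Γ, ∀ (M : Theory.ModelType.{u, v, max u v} T) (w : ℕ → M),
        (∀ ψ ∈ q, Formula.Realize ψ w) → Formula.Realize γ fun i => (t i).realize w := by
      intro γ hγ M w hw
      by_contra hnot
      refine hsplit ⟨γ, ?_, ?_⟩
      · refine Df_finset_sat T de he te hT (f := f) ?_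
        intro ψ hψ
        rcases Finset.mem_insert.1 hψ with rfl | hψ
        · exact hf γ hγ
        · exact hpf hψ
      · refine ⟨M, w, ?_⟩
        intro ψ hψ
        rcases Finset.mem_insert.1 hψ with rfl | hψ
        · refine Formula.realize_not.2 ?_
          intro hcon
          exact hnot (formula_realize_subst.1 hcon)
        · exact hw ψ hψ
    -- the generator formula is consistent with T
    have hcons : ConsistentWith T (gen q t) := by
      obtain ⟨M, w, hw⟩ := Df_finset_sat T de he te hT hqg
      exact ⟨M, fun i => (t i).realize w, gen_of hw⟩
    obtain ⟨γ₁, hγ₁, M₁, a₁, hre⟩ := hnp (gen q t) hcons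
    rw [Formula.realize_inf] at hre
    obtain ⟨w₁, hw₁, hta⟩ := gen_to hre.1
    have hγre : Formula.Realize γ₁ fun i => (t i).realize w₁ := hsem γ₁ hγ₁ M₁ w₁ hw₁
    have : Formula.Realize γ₁ a₁ := by
      have : (fun i => (t i).realize w₁) = a₁ := funext hta
      rwa [this] at hγre
    exact Formula.realize_not.1 hre.2 this

/-- Two branches which both realize a complete non-principal type at `te m` agree from `m` on,
hence are equal if they agree below `m`. -/
theorem bad_eq (hT : T.IsSatisfiable)
    {m : ℕ} {nn : ℕ} {t : Fin nn → L.Term ℕ} (hte : te m = ⟨nn, t⟩)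
    {Γ : Set (L.Formula (Fin nn))} (hcomp : ∀ ψ : L.Formula (Fin nn), ψ ∈ Γ ∨ ψ.not ∈ Γ)
    (hnp : NonPrincipal T Γ) {f g : ℕ → Bool}
    (hf : ∀ γ ∈ Γ, (γ.subst t) ∈ Df T de he te f)
    (hg : ∀ γ ∈ Γ, (γ.subst t) ∈ Df T de he te g)
    (hfg : ∀ j < m, f j = g j) : f = g := by
  by_contra hne
  have hex : ∃ k, f k ≠ g k := by
    by_contra hex
    push_neg at hex
    exact hne (funext hex)
  classical
  set k := Nat.find hex with hk
  have hkne : f k ≠ g k := Nat.find_spec hex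
  have hpre : ∀ j < k, f j = g j := fun j hj => not_not.1 (Nat.find_min hex hj)
  have hmk : m ≤ k := by
    by_contra hmk
    exact hkne (hfg k (by omega))
  rcases Bool.eq_false_or_eq_true (f k) with hfk | hfk
  · have hgk : g k = false := by
      rcases Bool.eq_false_or_eq_true (g k) with h | h
      · exact absurd (hfk.trans h.symm) hkne
      · exact h
    exact key_div T de he te hT (fun j hj => (hpre j hj).symm) hgk hfk hmk hte hcomp hnp hg hf
  · have hgk : g k = true := by
      rcases Bool.eq_false_or_eq_true (g k) with h | h
      · exact h
      · exact absurd (hfk.trans h.symm) hkne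
    exact key_div T de he te hT hpre hfk hgk hmk hte hcomp hnp hf hg

end Key

section FinalModel

variable (T : L.Theory) (de : ℕ → L.Formula ℕ) (he : ℕ → L.Formula (ℕ ⊕ Fin 1))
  (te : ℕ → Σ m : ℕ, Fin m → L.Term ℕ)

/-- The formula with variables `ℕ ⊕ Fin 1` expressing `φ(t₀, …, t_{n-1}, ·)`. -/
noncomputable def tvFormula {n : ℕ} (φ : L.BoundedFormula Empty (n + 1))
    (t : Fin n → L.Term ℕ) : L.Formula (ℕ ⊕ Fin 1) :=
  (Formula.relabel (Sum.elim Empty.elim id) φ.toFormula).subst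
    (Fin.snoc (fun i => (t i).relabel Sum.inl) (Term.var (Sum.inr 0)))

theorem realize_snoc_term {NN : Type*} [L.Structure NN] {n : ℕ} (t : Fin n → L.Term ℕ)
    (u : ℕ ⊕ Fin 1 → NN) (i : Fin (n + 1)) :
    Term.realize u (Fin.snoc (α := fun _ => L.Term (ℕ ⊕ Fin 1)) (fun i => (t i).relabel Sum.inl)
      (Term.var (Sum.inr 0)) i)
      = Fin.snoc (α := fun _ => NN) (fun i => (t i).realize (u ∘ Sum.inl)) (u (Sum.inr 0)) i := by
  refine Fin.lastCases ?_ (fun j => ?_) i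
  · rw [Fin.snoc_last, Fin.snoc_last]
    rfl
  · rw [Fin.snoc_castSucc, Fin.snoc_castSucc, Term.realize_relabel]

theorem realize_tvFormula {NN : Type*} [L.Structure NN] {n : ℕ}
    {φ : L.BoundedFormula Empty (n + 1)} {t : Fin n → L.Term ℕ} {w : ℕ → NN} {b : NN} :
    (tvFormula φ t).Realize (Sum.elim w fun _ => b) ↔
      φ.Realize default (Fin.snoc (fun i => (t i).realize w) b) := by
  rw [tvFormula, formula_realize_subst, Formula.realize_relabel]
  have e : (fun i : Fin (n + 1) => Term.realize (Sum.elim w fun _ => b)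
      (Fin.snoc (α := fun _ => L.Term (ℕ ⊕ Fin 1)) (fun i => (t i).relabel Sum.inl)
        (Term.var (Sum.inr 0)) i))
      = Fin.snoc (α := fun _ => NN) (fun i => (t i).realize w) b := by
    funext i
    rw [realize_snoc_term]
    rfl
  rw [e, BoundedFormula.realize_toFormula]
  have e1 : (Fin.snoc (α := fun _ => NN) (fun i => (t i).realize w) b ∘
      Sum.elim Empty.elim id) ∘ Sum.inl = (default : Empty → NN) := by
    funext z; exact z.elim
  have e2 : (Fin.snoc (α := fun _ => NN) (fun i => (t i).realize w) b ∘
      Sum.elim Empty.elim id) ∘ Sum.inr = Fin.snoc (fun i => (t i).realize w) b := by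
    funext i; rfl
  rw [e1, e2]

/-- From a "good" branch we extract a model of `T` in which the type of every tuple is
decided by the branch theory. -/
theorem good_model (hT : T.IsSatisfiable) (hde : Function.Surjective de)
    (hhe : Function.Surjective he) (f : ℕ → Bool) :
    ∃ M : Theory.ModelType.{u, v, max u v} T, ∀ (nn : ℕ) (x : Fin nn → M),
      ∃ t : Fin nn → L.Term ℕ, ∀ γ : L.Formula (Fin nn),
        Formula.Realize γ x → γ.subst t ∈ Df T de he te f := by
  classical
  -- the branch theory as a theory with constants
  set T' : (L[[ℕ]]).Theory :=
    (L.lhomWithConstants ℕ).onTheory T ∪ (Formula.equivSentence '' Df T de he te f) with hT'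
  have hsat : T'.IsSatisfiable := by
    have hUnion : T' = ⋃ k, ((L.lhomWithConstants ℕ).onTheory T ∪
        (Formula.equivSentence '' ↑(node T de he te f k))) := by
      rw [hT']
      ext φ
      simp only [Set.mem_iUnion, Set.mem_union, Set.mem_image, Finset.mem_coe, Df,
        Set.mem_setOf_eq]
      constructor
      · rintro (h | ⟨ψ, ⟨k, hk⟩, rfl⟩)
        · exact ⟨0, Or.inl h⟩
        · exact ⟨k, Or.inr ⟨ψ, hk, rfl⟩⟩
      · rintro ⟨k, h | ⟨ψ, hk, rfl⟩⟩
        · exact Or.inl h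
        · exact Or.inr ⟨ψ, ⟨k, hk⟩, rfl⟩
    rw [hUnion]
    rw [Theory.isSatisfiable_directed_union_iff]
    · intro k
      obtain ⟨M, w, hw⟩ := node_sat T de he te hT f k
      letI : (constantsOn ℕ).Structure M := constantsOn.structure w
      haveI : M ⊨ (L.lhomWithConstants ℕ).onTheory T ∪
          (Formula.equivSentence '' ↑(node T de he te f k)) := by
        refine Theory.Model.union ((LHom.onTheory_model _ _).2 inferInstance) ?_
        rw [Theory.model_iff]
        rintro φ hφ
        obtain ⟨ψ, hψ, rfl⟩ := hφ
        rw [Formula.realize_equivSentence]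
        have : (fun a => ((L.con a : (L[[ℕ]]).Constants) : M)) = w := rfl
        rw [this]
        exact hw ψ hψ
      exact Theory.Model.isSatisfiable M
    · refine Monotone.directed_le ?_
      intro k k' hk
      exact Set.union_subset_union_right _
        (Set.image_mono (by exact_mod_cast node_mono T de he te f hk))
  obtain ⟨N⟩ := hsat
  set NN := N.Carrier with hNN
  letI : L.Structure NN := Theory.ModelType.leftStructure N
  -- the constants interpretation
  set v : ℕ → NN := fun a => ((L.con a : (L[[ℕ]]).Constants) : NN) with hv
  haveI hexp : (L.lhomWithConstants ℕ).IsExpansionOn NN := ⟨fun _ _ => rfl, fun _ _ => rfl⟩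
  -- truth lemma
  have hDfTrue : ∀ ψ ∈ Df T de he te f, Formula.Realize ψ v := by
    intro ψ hψ
    have h1 : Formula.equivSentence ψ ∈ T' := Set.mem_union_right _ ⟨ψ, hψ, rfl⟩
    have h2 : NN ⊨ Formula.equivSentence ψ := Theory.realize_sentence_of_mem T' h1
    rwa [Formula.realize_equivSentence] at h2
  have hTruth : ∀ ψ : L.Formula ℕ, Formula.Realize ψ v ↔ ψ ∈ Df T de he te f := by
    intro ψ
    constructor
    · intro h
      rcases Df_decides T de he te hde f ψ with h1 | h1
      · exact h1
      · exact absurd h (Formula.realize_not.1 (hDfTrue _ h1))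
    · exact hDfTrue ψ
  -- term for each element of the closure of the range of v
  have hterm : ∀ z : NN, z ∈ Substructure.closure L (Set.range v) →
      ∃ t : L.Term ℕ, t.realize v = z := by
    intro z hz
    obtain ⟨t, ht⟩ := (Substructure.mem_closure_iff_exists_term).1 hz
    refine ⟨t.relabel fun y => Classical.choose y.2, ?_⟩
    rw [Term.realize_relabel]
    rw [show (v ∘ fun y : ↥(Set.range v) => Classical.choose y.2)
        = (Subtype.val : ↥(Set.range v) → NN) from
      funext fun y => Classical.choose_spec y.2]
    exact ht
  -- Tarski-Vaught
  have htv : ∀ (n : ℕ) (φ : L.BoundedFormula Empty (n + 1))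
      (x : Fin n → Substructure.closure L (Set.range v)) (a : NN),
      φ.Realize default (Fin.snoc (Subtype.val ∘ x) a : _ → NN) →
        ∃ b : Substructure.closure L (Set.range v),
          φ.Realize default (Fin.snoc (Subtype.val ∘ x) b : _ → NN) := by
    intro n φ x a hre
    choose t ht using fun i => hterm (x i).1 (x i).2
    have hsnoc : (fun i => (t i).realize v) = Subtype.val ∘ x := funext ht
    have h1 : (tvFormula φ t).Realize (Sum.elim v fun _ => a) := by
      rw [realize_tvFormula, hsnoc]
      exact hre
    have h2 : (ExF (tvFormula φ t)).Realize v := realize_ExF.2 ⟨a, h1⟩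
    have h3 : ExF (tvFormula φ t) ∈ Df T de he te f := (hTruth _).1 h2
    obtain ⟨j, hj⟩ := Df_henkin T de he te hT hhe h3
    have h4 : (instF (tvFormula φ t) j).Realize v := hDfTrue _ hj
    have h5 := realize_instF.1 h4
    rw [realize_tvFormula, hsnoc] at h5
    exact ⟨⟨v j, Substructure.subset_closure (Set.mem_range_self j)⟩, h5⟩
  set ES : L.ElementarySubstructure NN :=
    (Substructure.closure L (Set.range v)).toElementarySubstructure htv with hES
  haveI hNT : NN ⊨ T := (LHom.onTheory_model (L.lhomWithConstants ℕ) T).1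
    (Theory.Model.mono N.is_model Set.subset_union_left)
  refine ⟨Theory.ModelType.of T ES, ?_⟩
  intro nn x
  choose t ht using fun i => hterm (x i).1 (x i).2
  refine ⟨t, ?_⟩
  intro γ hγ
  have h1 : Formula.Realize γ (Subtype.val ∘ x) := (ES.subtype.map_formula γ x).2 hγ
  have h2 : Formula.Realize γ fun i => (t i).realize v := by
    rwa [show (fun i => (t i).realize v) = Subtype.val ∘ x from funext ht]
  have h3 : Formula.Realize (γ.subst t) v := formula_realize_subst.2 h2
  exact (hTruth _).1 h3

end FinalModel

section Count
open Cardinal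

theorem countable_formula_aux (hL : L.card ≤ Cardinal.aleph0) (α : Type) [Countable α] :
    Countable (L.Formula α) := by
  have h : #(Σ n, L.BoundedFormula α n) ≤ Cardinal.aleph0 := by
    refine (BoundedFormula.card_le).trans ?_
    refine max_le le_rfl (Cardinal.add_le_aleph0.2 ⟨?_, ?_⟩)
    · rw [Cardinal.lift_le_aleph0]
      exact Cardinal.mk_le_aleph0
    · rw [Cardinal.lift_le_aleph0]
      exact hL
  haveI := Cardinal.mk_le_aleph0_iff.1 h
  exact Function.Injective.countable
    (f := fun φ : L.Formula α => (⟨0, φ⟩ : Σ n, L.BoundedFormula α n))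
    (fun a b hab => by
      have := (Sigma.mk.inj_iff.1 hab).2
      exact eq_of_heq this)

theorem countable_term_aux (hL : L.card ≤ Cardinal.aleph0) : Countable (L.Term ℕ) := by
  have h : #L.Symbols ≤ Cardinal.aleph0 := hL
  haveI : Countable L.Symbols := Cardinal.mk_le_aleph0_iff.1 h
  haveI : Countable (Σ l, L.Functions l) := Function.Injective.countable
    (f := (Sum.inl : (Σ l, L.Functions l) → L.Symbols)) Sum.inl_injective
  infer_instance

end Count
end OmitAux

open OmitAux Cardinal in
/-- When the non-principal types to be omitted are maximal (complete), any family of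
fewer than `2^ℵ₀` of them can be omitted in a model of a consistent theory in a
countable language. -/
theorem omitting_complete_types_below_continuum {L : FirstOrder.Language.{u, v}}
    (hL : L.card ≤ Cardinal.aleph0)
    (T : L.Theory) (hT : T.IsSatisfiable)
    (ι : Type) (hι : Cardinal.mk ι < 2 ^ Cardinal.aleph0)
    (n : ι → ℕ) (Γ : (i : ι) → Set (L.Formula (Fin (n i))))
    (hΓ : ∀ i, NonPrincipal T (Γ i)) (hΓc : ∀ i, IsCompleteType T (Γ i)) :
    ∃ M : Theory.ModelType.{u, v, max u v} T,
      ∀ i, ¬ ∃ v : Fin (n i) → M, ∀ γ ∈ Γ i, γ.Realize v := by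
  classical
  haveI : Countable (L.Formula ℕ) := countable_formula_aux hL ℕ
  haveI : Countable (L.Formula (ℕ ⊕ Fin 1)) := countable_formula_aux hL (ℕ ⊕ Fin 1)
  haveI : Countable (L.Term ℕ) := countable_term_aux hL
  haveI : Nonempty (L.Formula ℕ) := ⟨⊤⟩
  haveI : Nonempty (L.Formula (ℕ ⊕ Fin 1)) := ⟨⊤⟩
  haveI : Nonempty (Σ m : ℕ, Fin m → L.Term ℕ) := ⟨⟨0, Fin.elim0⟩⟩
  obtain ⟨de, hde⟩ := exists_surjective_nat (L.Formula ℕ)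
  obtain ⟨he, hhe⟩ := exists_surjective_nat (L.Formula (ℕ ⊕ Fin 1))
  obtain ⟨te, hte⟩ := exists_surjective_nat (Σ m : ℕ, Fin m → L.Term ℕ)
  -- enumerations of the tuples of terms of each arity
  have hσ' : ∀ i : ι, ∃ σ : ℕ → (Fin (n i) → L.Term ℕ), Function.Surjective σ := by
    intro i
    haveI : Nonempty (Fin (n i) → L.Term ℕ) := ⟨fun _ => Term.var 0⟩
    exact exists_surjective_nat _
  choose σ hσ using hσ'
  -- the set of "bad" branches
  set Bad : Set (ℕ → Bool) :=
    ⋃ z : ι × ℕ, {f | ∀ γ ∈ Γ z.1, γ.subst (σ z.1 z.2) ∈ Df T de he te f} with hBad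
  have hBfin : ∀ (i : ι) (t : Fin (n i) → L.Term ℕ),
      {f : ℕ → Bool | ∀ γ ∈ Γ i, γ.subst t ∈ Df T de he te f}.Finite := by
    intro i t
    obtain ⟨m, hm⟩ := hte ⟨n i, t⟩
    rw [← Set.finite_coe_iff]
    refine Finite.of_injective (fun f (j : Fin m) => (f : ℕ → Bool) j) ?_
    intro f g hfg
    refine Subtype.ext ?_
    refine bad_eq T de he te hT hm (hΓc i).2 (hΓ i) f.2 g.2 ?_
    intro j hj
    exact congrFun hfg ⟨j, hj⟩
  have hBadlt : #Bad < 2 ^ Cardinal.aleph0 := by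
    refine lt_of_le_of_lt Cardinal.mk_iUnion_le_sum_mk ?_
    refine lt_of_le_of_lt (Cardinal.sum_le_sum _ (fun _ => Cardinal.aleph0) ?_) ?_
    · intro z
      exact (hBfin z.1 (σ z.1 z.2)).lt_aleph0.le
    · rw [Cardinal.sum_const']
      refine Cardinal.mul_lt_of_lt (Cardinal.cantor Cardinal.aleph0).le ?_
        (Cardinal.cantor Cardinal.aleph0)
      rw [Cardinal.mk_prod, Cardinal.lift_id, Cardinal.lift_id, Cardinal.mk_nat]
      exact Cardinal.mul_lt_of_lt (Cardinal.cantor Cardinal.aleph0).le hι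
        (Cardinal.cantor Cardinal.aleph0)
  have hgood : ∃ f : ℕ → Bool, f ∉ Bad := by
    by_contra h
    push_neg at h
    have hBu : Bad = Set.univ := Set.eq_univ_of_forall h
    rw [hBu, Cardinal.mk_univ] at hBadlt
    have h2 : #(ℕ → Bool) = 2 ^ Cardinal.aleph0 := by
      rw [← Cardinal.mk_bool, ← Cardinal.mk_nat, Cardinal.power_def]
    rw [h2] at hBadlt
    exact lt_irrefl _ hBadlt
  obtain ⟨f, hf⟩ := hgood
  obtain ⟨M, hM⟩ := good_model T de he te hT hde hhe f
  refine ⟨M, ?_⟩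
  rintro i ⟨x, hx⟩
  obtain ⟨t, ht⟩ := hM (n i) x
  obtain ⟨m, hm⟩ := hσ i t
  refine hf (Set.mem_iUnion.2 ⟨(i, m), ?_⟩)
  intro γ hγ
  rw [hm]
  exact ht γ (hx γ hγ)
end

section
/- Let T be a consistent theory in a countable first-order language. Then there exists a family (M_i : i < 2^ℵ₀) of countable models of T such that for all i ≠ j, all n ∈ ℕ, and all tuples ā ∈ (M_i)ⁿ and b̄ ∈ (M_j)ⁿ: if ā and b̄ satisfy exactly the same formulas in n free variables (in M_i and M_j respectively), then the set of formulas they satisfy is a principal type over T. That is, there are continuum many countable models of T that overlap only on principal types. -/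
open FirstOrder FirstOrder.Language

universe u v

/-- A set `Γ` of formulas in the free variables `x₀,…,x_{n−1}` is principal over `T`
if there is a formula `φ` consistent with `T` such that in every model of `T` every
`n`-tuple satisfying `φ` satisfies every member of `Γ`. -/
def Principal {L : FirstOrder.Language.{u, v}} (T : L.Theory) {n : ℕ}
    (Γ : Set (L.Formula (Fin n))) : Prop :=
  ∃ φ : L.Formula (Fin n), ConsistentWith T φ ∧
    ∀ (M : Theory.ModelType.{u, v, max u v} T) (v : Fin n → M),
      φ.Realize v → ∀ γ ∈ Γ, Formula.Realize γ v

namespace ShelahProof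

attribute [local instance] Classical.propDecidable

open Cardinal

variable {L : FirstOrder.Language.{u, v}}

/-- Abstract an `L[[ℕ]]`-sentence into an `L`-formula with free variables from `ℕ`. -/
noncomputable def ab (s : (L[[ℕ]]).Sentence) : L.Formula ℕ :=
  Formula.equivSentence.symm s

/-- A finite list of `L[[ℕ]]`-sentences is "consistent with `T`" if some model of `T`
with some interpretation of the constants realizes all of them. -/
def Sat (T : L.Theory) (p : List ((L[[ℕ]]).Sentence)) : Prop :=
  ∃ (M : Theory.ModelType.{u, v, max u v} T) (vc : ℕ → M), ∀ s ∈ p, (ab s).Realize vc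

/-- Substitute constants (with indices given by `e`) for the variables of a formula. -/
noncomputable def subc {m : ℕ} (χ : L.Formula (Fin m)) (e : Fin m → ℕ) :
    (L[[ℕ]]).Sentence :=
  Formula.equivSentence (χ.relabel e)

@[simp] lemma ab_subc {m : ℕ} (χ : L.Formula (Fin m)) (e : Fin m → ℕ) :
    ab (subc χ e) = χ.relabel e :=
  Equiv.symm_apply_apply _ _

/-- Realization of `ab (subc χ e)`. -/
lemma realize_ab_subc {m : ℕ} (χ : L.Formula (Fin m)) (e : Fin m → ℕ)
    {M : Type (max u v)} [L.Structure M] (vc : ℕ → M) :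
    (ab (subc χ e)).Realize vc ↔ χ.Realize (vc ∘ e) := by
  rw [ab_subc, Formula.realize_relabel]

/-- `s` is supported below `K` : realization depends only on constants with index `< K`. -/
def Supp (T : L.Theory) (s : (L[[ℕ]]).Sentence) (K : ℕ) : Prop :=
  ∀ (M : Theory.ModelType.{u, v, max u v} T) (vc w : ℕ → M),
    (∀ i < K, vc i = w i) → ((ab s).Realize vc ↔ (ab s).Realize w)

lemma Supp.mono {T : L.Theory} {s : (L[[ℕ]]).Sentence} {K K' : ℕ}
    (h : Supp T s K) (hK : K ≤ K') : Supp T s K' :=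
  fun M vc w hvw => h M vc w fun i hi => hvw i (lt_of_lt_of_le hi hK)

lemma exists_fvBound {k : ℕ} (φ : L.BoundedFormula ℕ k) :
    ∃ K : ℕ, ∀ (M : Type (max u v)) (_ : L.Structure M) (vc w : ℕ → M) (xs : Fin k → M),
      (∀ i < K, vc i = w i) → (φ.Realize vc xs ↔ φ.Realize w xs) := by
  classical
  refine ⟨(φ.freeVarFinset.sup id) + 1, ?_⟩
  intro M _ vc w xs h
  have hsub : ↑φ.freeVarFinset ⊆ (↑φ.freeVarFinset : Set ℕ) := subset_rfl
  rw [← BoundedFormula.realize_restrictFreeVar' hsub (v := vc) (xs := xs),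
      ← BoundedFormula.realize_restrictFreeVar' hsub (v := w) (xs := xs)]
  have hvw : vc ∘ (Subtype.val : (↑φ.freeVarFinset : Set ℕ) → ℕ) = w ∘ Subtype.val := by
    funext i
    exact h i (Nat.lt_succ_of_le (Finset.le_sup (f := id) i.2))
  rw [hvw]

/-- A bound on the free variables of a bounded formula over `ℕ`. -/
noncomputable def fvB {k : ℕ} (φ : L.BoundedFormula ℕ k) : ℕ :=
  (exists_fvBound φ).choose

lemma fvB_spec {k : ℕ} (φ : L.BoundedFormula ℕ k) {M : Type (max u v)} [iS : L.Structure M]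
    {vc w : ℕ → M} {xs : Fin k → M} (h : ∀ i < fvB φ, vc i = w i) :
    φ.Realize vc xs ↔ φ.Realize w xs :=
  (exists_fvBound φ).choose_spec M iS vc w xs h

lemma supp_fvB (T : L.Theory) (s : (L[[ℕ]]).Sentence) : Supp T s (fvB (ab s)) :=
  fun _M vc w h => fvB_spec (ab s) (vc := vc) (w := w) (xs := default) h



/-- The Henkin witness formula: `(∃ x θ) → θ(c)`. -/
noncomputable def hkF (θ : L.BoundedFormula ℕ 1) (c : ℕ) : L.Formula ℕ :=
  θ.ex.imp (θ.toFormula.relabel (Sum.elim id fun _ => c))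

lemma realize_hkF {θ : L.BoundedFormula ℕ 1} {c : ℕ}
    {M : Type w} [L.Structure M] {vc : ℕ → M} :
    (hkF θ c).Realize vc ↔
      ((∃ a : M, θ.Realize vc (fun _ => a)) → θ.Realize vc (fun _ => vc c)) := by
  have hsnoc : ∀ (a : M), (Fin.snoc (default : Fin 0 → M) a : Fin 1 → M) = fun _ => a := by
    intro a
    funext i
    have : i = Fin.last 0 := Fin.ext (by omega)
    rw [this, Fin.snoc_last]
  rw [hkF, Formula.realize_imp, Formula.realize_relabel,
    BoundedFormula.realize_toFormula]
  constructor
  · rintro h ⟨a, ha⟩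
    have h1 : Formula.Realize (L := L) θ.ex vc := by
      rw [Formula.Realize, BoundedFormula.realize_ex]
      exact ⟨a, by rwa [hsnoc]⟩
    exact h h1
  · intro h h1
    apply h
    rw [Formula.Realize, BoundedFormula.realize_ex] at h1
    obtain ⟨a, ha⟩ := h1
    rw [hsnoc] at ha
    exact ⟨a, ha⟩

/-- The Henkin witness sentence. -/
noncomputable def hkS (θ : L.BoundedFormula ℕ 1) (c : ℕ) : (L[[ℕ]]).Sentence :=
  Formula.equivSentence (hkF θ c)

@[simp] lemma ab_hkS (θ : L.BoundedFormula ℕ 1) (c : ℕ) : ab (hkS θ c) = hkF θ c :=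
  Equiv.symm_apply_apply _ _

/-- Consistently adding a Henkin witness sentence with a fresh constant. -/
lemma sat_append_hkS {T : L.Theory} {p : List ((L[[ℕ]]).Sentence)} {K : ℕ}
    (hp : Sat T p) (hS : ∀ s ∈ p, Supp T s K) (θ : L.BoundedFormula ℕ 1) {c : ℕ}
    (hcK : K ≤ c) (hcθ : fvB θ ≤ c) : Sat T (p ++ [hkS θ c]) := by
  classical
  obtain ⟨M, vc, hvc⟩ := hp
  by_cases hex : ∃ a : (M : Type (max u v)), θ.Realize vc (fun _ => a)
  · obtain ⟨a, ha⟩ := hex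
    refine ⟨M, Function.update vc c a, ?_⟩
    have hagree : ∀ i < K, vc i = Function.update vc c a i :=
      fun i hi => (Function.update_of_ne (show i ≠ c by omega) a vc).symm
    intro s hs
    rcases List.mem_append.1 hs with hs | hs
    · exact (hS s hs M vc _ hagree).1 (hvc s hs)
    · have hseq : s = hkS θ c := by simpa using hs
      subst hseq
      rw [ab_hkS, realize_hkF]
      intro _
      have h1 : Function.update vc c a c = a := Function.update_self c a vc
      rw [h1]
      have hagree2 : ∀ i < fvB θ, vc i = Function.update vc c a i :=
        fun i hi => (Function.update_of_ne (show i ≠ c by omega) a vc).symm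
      exact (fvB_spec θ (fun i hi => (hagree2 i hi).symm)).2 ha
  · refine ⟨M, vc, ?_⟩
    intro s hs
    rcases List.mem_append.1 hs with hs | hs
    · exact hvc s hs
    · have hseq : s = hkS θ c := by simpa using hs
      subst hseq
      rw [ab_hkS, realize_hkF]
      intro hcon
      exact absurd hcon hex


/-! ### Finite conjunctions -/

/-- Finite conjunction of a list of formulas. -/
def conjF {α : Type} (l : List (L.Formula α)) : L.Formula α :=
  l.foldr (· ⊓ ·) ⊤

lemma realize_conjF {α : Type} {l : List (L.Formula α)} {M : Type w} [L.Structure M]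
    {vc : α → M} : (conjF l).Realize vc ↔ ∀ φ ∈ l, φ.Realize vc := by
  induction l with
  | nil => simp [conjF]
  | cons φ l ih =>
      simp only [conjF, List.foldr_cons, Formula.realize_inf, List.mem_cons]
      rw [show List.foldr (· ⊓ ·) ⊤ l = conjF l from rfl] at *
      constructor
      · rintro ⟨h1, h2⟩ ψ (rfl | hψ)
        · exact h1
        · exact ih.1 h2 ψ hψ
      · intro h
        exact ⟨h φ (Or.inl rfl), ih.2 fun ψ hψ => h ψ (Or.inr hψ)⟩

/-- The formula expressing that variables with equal constant-indices are equal. -/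
noncomputable def eqsF {m : ℕ} (e : Fin m → ℕ) : L.Formula (Fin m) :=
  conjF ((((List.finRange m) ×ˢ (List.finRange m)).filter
    (fun kk => e kk.1 == e kk.2)).map fun kk => Term.equal (Term.var kk.1) (Term.var kk.2))

lemma realize_eqsF {m : ℕ} {e : Fin m → ℕ} {M : Type w} [L.Structure M] {va : Fin m → M} :
    (eqsF (L := L) e).Realize va ↔ ∀ k k' : Fin m, e k = e k' → va k = va k' := by
  rw [eqsF, realize_conjF]
  constructor
  · intro h k k' hkk
    have hmem : (k, k') ∈ ((List.finRange m) ×ˢ (List.finRange m)).filter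
        (fun kk => e kk.1 == e kk.2) := by
      rw [List.mem_filter]
      exact ⟨List.mem_product.2 ⟨List.mem_finRange _, List.mem_finRange _⟩,
        by simpa using hkk⟩
    have := h _ (List.mem_map.2 ⟨(k, k'), hmem, rfl⟩)
    simpa [Formula.realize_equal] using this
  · intro h φ hφ
    obtain ⟨⟨k, k'⟩, hmem, rfl⟩ := List.mem_map.1 hφ
    rw [List.mem_filter] at hmem
    have : e k = e k' := by simpa using hmem.2
    simpa [Formula.realize_equal] using h k k' this

/-! ### The principal formula extracted from a finite condition -/

/-- Variable-classifying map used to existentially quantify all constants not in `e`. -/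
noncomputable def gMap {m : ℕ} (e : Fin m → ℕ) (K : ℕ) (i : ℕ) : Fin m ⊕ Fin (K + 1) :=
  if h : ∃ k, e k = i then Sum.inl h.choose
  else if h2 : i < K + 1 then Sum.inr ⟨i, h2⟩ else Sum.inr ⟨0, Nat.succ_pos K⟩

/-- The candidate principal formula: the condition `p` with the constants `e` replaced by
free variables, all other constants quantified existentially. -/
noncomputable def phiA {m : ℕ} (p : List ((L[[ℕ]]).Sentence)) (e : Fin m → ℕ) (K : ℕ) :
    L.Formula (Fin m) :=
  eqsF e ⊓ Formula.iExs (Fin (K + 1)) ((conjF (p.map ab)).relabel (gMap e K))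

lemma phiA_spec1 {T : L.Theory} {m : ℕ} {p : List ((L[[ℕ]]).Sentence)} {e : Fin m → ℕ}
    {K : ℕ} {M : Theory.ModelType.{u, v, max u v} T} {w : Fin m → M}
    (h : (phiA p e K).Realize w) :
    ∃ vc : ℕ → M, (∀ k, vc (e k) = w k) ∧ ∀ s ∈ p, (ab s).Realize vc := by
  rw [phiA, Formula.realize_inf] at h
  obtain ⟨heq, hex⟩ := h
  rw [Formula.realize_iExs] at hex
  simp only [Formula.realize_relabel] at hex
  obtain ⟨g', hg⟩ := hex
  rw [realize_conjF] at hg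
  refine ⟨fun i => Sum.elim w g' (gMap e K i), ?_, ?_⟩
  · intro k
    have h1 : ∃ k', e k' = e k := ⟨k, rfl⟩
    simp only [gMap, dif_pos h1, Sum.elim_inl]
    exact (realize_eqsF.1 heq) h1.choose k h1.choose_spec
  · intro s hs
    exact hg (ab s) (List.mem_map.2 ⟨s, hs, rfl⟩)

lemma phiA_spec2 {T : L.Theory} {m : ℕ} {p : List ((L[[ℕ]]).Sentence)} {e : Fin m → ℕ}
    {K : ℕ} (hS : ∀ s ∈ p, Supp T s K) {M : Theory.ModelType.{u, v, max u v} T}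
    {w : Fin m → M} (vc : ℕ → M) (hv : ∀ k, vc (e k) = w k)
    (hp : ∀ s ∈ p, (ab s).Realize vc) : (phiA p e K).Realize w := by
  rw [phiA, Formula.realize_inf]
  constructor
  · rw [realize_eqsF]
    intro k k' hkk
    rw [← hv k, ← hv k', hkk]
  · rw [Formula.realize_iExs]
    simp only [Formula.realize_relabel]
    refine ⟨fun j => vc j, ?_⟩
    rw [realize_conjF]
    intro φ hφ
    obtain ⟨s, hs, rfl⟩ := List.mem_map.1 hφ
    have hagree : ∀ i < K, vc i = Sum.elim w (fun j : Fin (K+1) => vc j) (gMap e K i) := by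
      intro i hi
      by_cases h1 : ∃ k, e k = i
      · simp only [gMap, dif_pos h1, Sum.elim_inl]
        have h2 := hv h1.choose
        rw [h1.choose_spec] at h2
        exact h2
      · simp only [gMap, dif_neg h1, dif_pos (Nat.lt_succ_of_lt hi), Sum.elim_inr]
    exact (hS s hs M vc _ hagree).1 (hp s hs)


/-! ### Binary tree combinatorics -/

/-- The first `l` bits of a branch, as a list. -/
def trunc : ℕ → (ℕ → Bool) → List Bool
  | 0, _ => []
  | l + 1, η => trunc l η ++ [η l]

/-- Extend a node to a branch (by `false`s). -/
def extB (s : List Bool) : ℕ → Bool := fun k => s.getD k false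

@[simp] lemma trunc_length (l : ℕ) (η : ℕ → Bool) : (trunc l η).length = l := by
  induction l with
  | zero => rfl
  | succ l ih => simp [trunc, ih]

lemma trunc_getD (l : ℕ) (η : ℕ → Bool) {k : ℕ} (h : k < l) :
    (trunc l η).getD k false = η k := by
  induction l with
  | zero => omega
  | succ l ih =>
      rcases Nat.lt_succ_iff_lt_or_eq.1 h with h | h
      · rw [trunc, List.getD_append _ _ _ _ (by simp [h]), ih h]
      · subst h
        rw [trunc, List.getD_append_right _ _ _ _ (by simp)]
        simp
lemma extB_trunc (l : ℕ) (η : ℕ → Bool) {k : ℕ} (h : k < l) :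
    extB (trunc l η) k = η k := trunc_getD l η h

lemma trunc_congr {l : ℕ} {η ν : ℕ → Bool} (h : ∀ k < l, η k = ν k) :
    trunc l η = trunc l ν := by
  induction l with
  | zero => rfl
  | succ l ih =>
      rw [trunc, trunc, ih fun k hk => h k (Nat.lt_succ_of_lt hk), h l (Nat.lt_succ_self l)]

lemma trunc_prefix {l₁ l₂ : ℕ} (h : l₁ ≤ l₂) (η : ℕ → Bool) :
    trunc l₁ η <+: trunc l₂ η := by
  induction l₂ with
  | zero =>
      have : l₁ = 0 := by omega
      subst this; exact List.prefix_refl _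
  | succ l ih =>
      rcases Nat.lt_succ_iff_lt_or_eq.1 (Nat.lt_succ_of_le h) with h1 | h1
      · exact (ih (by omega)).trans (List.prefix_append _ _)
      · subst h1; exact List.prefix_refl _

/-- All nodes of the binary tree at depth `l`. -/
def allNodes : ℕ → List (List Bool)
  | 0 => [([] : List Bool)]
  | l + 1 => (allNodes l).flatMap fun s => [s ++ [false], s ++ [true] ]

lemma trunc_mem_allNodes (l : ℕ) (η : ℕ → Bool) : trunc l η ∈ allNodes l := by
  induction l with
  | zero => simp [trunc, allNodes]
  | succ l ih =>
      rw [allNodes, List.mem_flatMap]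
      refine ⟨trunc l η, ih, ?_⟩
      cases h : η l <;> simp [trunc, h]

/-- All pairs of distinct depth-`l` nodes extending `s₀` and `t₀` respectively. -/
def pairsList (l : ℕ) (s₀ t₀ : List Bool) : List (List Bool × List Bool) :=
  ((allNodes l) ×ˢ (allNodes l)).filter
    fun xy => s₀.isPrefixOf xy.1 && t₀.isPrefixOf xy.2 && !(xy.1 == xy.2)

lemma mem_pairsList {l : ℕ} {s₀ t₀ x y : List Bool} :
    (x, y) ∈ pairsList l s₀ t₀ ↔
      (x ∈ allNodes l ∧ y ∈ allNodes l) ∧ s₀ <+: x ∧ t₀ <+: y ∧ x ≠ y := by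
  rw [pairsList, List.mem_filter, List.mem_product]
  simp [List.isPrefixOf_iff_prefix, and_assoc]

/-- The data of a pair requirement: a length and two tuples of constant indices. -/
def Tup : Type := Σ m : ℕ, (Fin m → ℕ) × (Fin m → ℕ)

instance : Countable Tup := by
  unfold Tup; infer_instance

instance : Nonempty Tup := ⟨⟨0, Fin.elim0, Fin.elim0⟩⟩

/-- The type of pair tasks. -/
def TaskT : Type := List Bool × List Bool × Tup

instance : Countable TaskT := by
  unfold TaskT; infer_instance

instance : Nonempty TaskT := ⟨([], [], Classical.arbitrary _)⟩


/-! ### The forcing construction -/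

/-- The state of the construction: a finite condition on each branch, and a support bound. -/
structure StG (L : FirstOrder.Language.{u, v}) where
  psi : (ℕ → Bool) → List ((L[[ℕ]]).Sentence)
  bnd : ℕ

variable (T : L.Theory)

/-- The invariant of the construction at level `l`. -/
def InvL (l : ℕ) (st : StG L) : Prop :=
  (∀ η ν : ℕ → Bool, (∀ k < l, η k = ν k) → st.psi η = st.psi ν) ∧
  (∀ η, Sat T (st.psi η)) ∧
  (∀ η, ∀ s ∈ st.psi η, Supp T s st.bnd)

/-- One pair step: try to force the types of the two tuples apart at the two nodes. -/
noncomputable def pairStep (dat : Tup) (l : ℕ) (xy : List Bool × List Bool)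
    (st : StG L) : StG L :=
  if h : ∃ χ : L.Formula (Fin dat.1),
      Sat T (st.psi (extB xy.1) ++ [subc χ dat.2.1]) ∧
      Sat T (st.psi (extB xy.2) ++ [subc χ.not dat.2.2]) then
    { psi := fun η =>
        if trunc l η = xy.1 then st.psi η ++ [subc h.choose dat.2.1]
        else if trunc l η = xy.2 then st.psi η ++ [subc h.choose.not dat.2.2]
        else st.psi η,
      bnd := max st.bnd (max (fvB (ab (subc h.choose dat.2.1)))
        (fvB (ab (subc h.choose.not dat.2.2)))) }
  else st

lemma pairStep_prefix (dat : Tup) (l : ℕ) (xy : List Bool × List Bool) (st : StG L)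
    (η : ℕ → Bool) : st.psi η <+: (pairStep T dat l xy st).psi η := by
  rw [pairStep]
  split
  · dsimp only
    split
    · exact List.prefix_append _ _
    · split
      · exact List.prefix_append _ _
      · exact List.prefix_refl _
  · exact List.prefix_refl _

lemma pairStep_inv (dat : Tup) (l : ℕ) (xy : List Bool × List Bool) (st : StG L)
    (hst : InvL T l st) : InvL T l (pairStep T dat l xy st) := by
  obtain ⟨h1, h2, h3⟩ := hst
  rw [pairStep]
  split
  · rename_i h
    refine ⟨?_, ?_, ?_⟩
    · intro η ν hk
      dsimp only
      rw [trunc_congr hk, h1 η ν hk]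
    · intro η
      dsimp only
      split
      · rename_i ht
        have heq : st.psi η = st.psi (extB xy.1) :=
          h1 _ _ fun k hk => by rw [← extB_trunc l η hk, ht]
        rw [heq]
        exact h.choose_spec.1
      · split
        · rename_i ht
          have heq : st.psi η = st.psi (extB xy.2) :=
            h1 _ _ fun k hk => by rw [← extB_trunc l η hk, ht]
          rw [heq]
          exact h.choose_spec.2
        · exact h2 η
    · intro η s hs
      dsimp only at hs ⊢
      have hb1 : st.bnd ≤ max st.bnd (max (fvB (ab (subc h.choose dat.2.1)))
          (fvB (ab (subc h.choose.not dat.2.2)))) := le_max_left _ _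
      split at hs
      · rcases List.mem_append.1 hs with hs | hs
        · exact (h3 η s hs).mono hb1
        · have : s = subc h.choose dat.2.1 := by simpa using hs
          subst this
          exact (supp_fvB T _).mono ((le_max_left _ _).trans (le_max_right _ _))
      · split at hs
        · rcases List.mem_append.1 hs with hs | hs
          · exact (h3 η s hs).mono hb1
          · have : s = subc h.choose.not dat.2.2 := by simpa using hs
            subst this
            exact (supp_fvB T _).mono ((le_max_right _ _).trans (le_max_right _ _))
        · exact (h3 η s hs).mono hb1
  · exact ⟨h1, h2, h3⟩

lemma foldl_pairStep_prefix (dat : Tup) (l : ℕ) (PL : List (List Bool × List Bool))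
    (st : StG L) (η : ℕ → Bool) :
    st.psi η <+: (PL.foldl (fun s xy => pairStep T dat l xy s) st).psi η := by
  induction PL generalizing st with
  | nil => exact List.prefix_refl _
  | cons xy PL ih =>
      rw [List.foldl_cons]
      exact (pairStep_prefix T dat l xy st η).trans (ih _)

lemma foldl_pairStep_inv (dat : Tup) (l : ℕ) (PL : List (List Bool × List Bool))
    (st : StG L) (hst : InvL T l st) :
    InvL T l (PL.foldl (fun s xy => pairStep T dat l xy s) st) := by
  induction PL generalizing st with
  | nil => exact hst
  | cons xy PL ih =>
      rw [List.foldl_cons]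
      exact ih _ (pairStep_inv T dat l xy st hst)

/-- One Henkin step: add a Henkin witness sentence (with a fresh constant) on all branches. -/
noncomputable def hkStep (θ : L.BoundedFormula ℕ 1) (st : StG L) : StG L :=
  { psi := fun η => st.psi η ++ [hkS θ (max st.bnd (fvB θ))],
    bnd := max (max st.bnd (fvB θ) + 1)
      (max st.bnd (fvB (ab (hkS θ (max st.bnd (fvB θ)))))) }

lemma hkStep_prefix (θ : L.BoundedFormula ℕ 1) (st : StG L) (η : ℕ → Bool) :
    st.psi η <+: (hkStep θ st).psi η :=
  List.prefix_append _ _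

lemma hkStep_inv (θ : L.BoundedFormula ℕ 1) (st : StG L) (l : ℕ) (hst : InvL T l st) :
    InvL T l (hkStep θ st) := by
  obtain ⟨h1, h2, h3⟩ := hst
  refine ⟨?_, ?_, ?_⟩
  · intro η ν hk
    rw [hkStep]
    dsimp only
    rw [h1 η ν hk]
  · intro η
    exact sat_append_hkS (h2 η) (h3 η) θ (le_max_left _ _) (le_max_right _ _)
  · intro η s hs
    rw [hkStep] at hs
    dsimp only at hs ⊢
    rcases List.mem_append.1 hs with hs | hs
    · exact (h3 η s hs).mono ((le_max_left _ _).trans (le_max_right _ _))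
    · have : s = hkS θ (max st.bnd (fvB θ)) := by simpa using hs
      subst this
      exact (supp_fvB T _).mono ((le_max_right _ _).trans (le_max_right _ _))

variable (hEnum : ℕ → L.BoundedFormula ℕ 1) (tEnum : ℕ → TaskT)

/-- One full level of the construction. -/
noncomputable def levelStep (n : ℕ) (st : StG L) : StG L :=
  hkStep (hEnum n)
    ((pairsList n (tEnum (Nat.unpair n).1).1 (tEnum (Nat.unpair n).1).2.1).foldl
      (fun s xy => pairStep T (tEnum (Nat.unpair n).1).2.2 n xy s) st)

/-- The sequence of states of the construction. -/
noncomputable def states (hT : T.IsSatisfiable) : ℕ → StG L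
  | 0 => ⟨fun _ => [], 0⟩
  | n + 1 => levelStep T hEnum tEnum n (states hT n)

variable (hT : T.IsSatisfiable)

lemma states_inv (n : ℕ) : InvL T n (states T hEnum tEnum hT n) := by
  induction n with
  | zero =>
      refine ⟨fun _ _ _ => rfl, fun η => ?_, fun η s hs => absurd hs List.not_mem_nil⟩
      exact ⟨hT.some, fun _ => Classical.choice inferInstance, fun s hs => absurd hs
        List.not_mem_nil⟩
  | succ n ih =>
      have h2 : InvL T n (levelStep T hEnum tEnum n (states T hEnum tEnum hT n)) :=
        hkStep_inv T _ _ _ (foldl_pairStep_inv T _ _ _ _ ih)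
      rw [states]
      exact ⟨fun η ν hk => h2.1 η ν fun k hk2 => hk k (Nat.lt_succ_of_lt hk2), h2.2.1, h2.2.2⟩

lemma states_prefix {n n' : ℕ} (h : n ≤ n') (η : ℕ → Bool) :
    (states T hEnum tEnum hT n).psi η <+: (states T hEnum tEnum hT n').psi η := by
  induction n' with
  | zero =>
      have : n = 0 := by omega
      subst this; exact List.prefix_refl _
  | succ n' ih =>
      rcases Nat.lt_succ_iff_lt_or_eq.1 (Nat.lt_succ_of_le h) with h1 | h1
      · refine (ih (by omega)).trans ?_
        rw [states, levelStep]
        exact (foldl_pairStep_prefix T _ _ _ _ η).trans (hkStep_prefix _ _ η)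
      · subst h1; exact List.prefix_refl _

/-- The limit condition on branch `η`. -/
def Pbr (η : ℕ → Bool) : Set ((L[[ℕ]]).Sentence) :=
  { s | ∃ n, s ∈ (states T hEnum tEnum hT n).psi η }

lemma mem_Pbr_of_mem {η : ℕ → Bool} {n : ℕ} {s : (L[[ℕ]]).Sentence}
    (h : s ∈ (states T hEnum tEnum hT n).psi η) : s ∈ Pbr T hEnum tEnum hT η :=
  ⟨n, h⟩


lemma henkin_available (hhE : Function.Surjective hEnum) (η : ℕ → Bool)
    (θ : L.BoundedFormula ℕ 1) : ∃ c, hkS θ c ∈ Pbr T hEnum tEnum hT η := by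
  obtain ⟨n, rfl⟩ := hhE θ
  refine ⟨max ((pairsList n (tEnum (Nat.unpair n).1).1 (tEnum (Nat.unpair n).1).2.1).foldl
      (fun s xy => pairStep T (tEnum (Nat.unpair n).1).2.2 n xy s)
      (states T hEnum tEnum hT n)).bnd (fvB (hEnum n)), ⟨n + 1, ?_⟩⟩
  rw [states, levelStep, hkStep]
  simp

lemma mem_Pbr_of_list {η : ℕ → Bool} (l : List ((L[[ℕ]]).Sentence))
    (hl : ∀ s ∈ l, s ∈ Pbr T hEnum tEnum hT η) :
    ∃ n, ∀ s ∈ l, s ∈ (states T hEnum tEnum hT n).psi η := by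
  induction l with
  | nil => exact ⟨0, fun s hs => absurd hs List.not_mem_nil⟩
  | cons s l ih =>
      obtain ⟨n₁, hn₁⟩ := ih fun s hs => hl s (List.mem_cons_of_mem _ hs)
      obtain ⟨n₂, hn₂⟩ := hl s List.mem_cons_self
      refine ⟨max n₁ n₂, ?_⟩
      intro s' hs'
      rcases List.mem_cons.1 hs' with rfl | hs'
      · exact (states_prefix T hEnum tEnum hT (le_max_right n₁ n₂) η).subset hn₂
      · exact (states_prefix T hEnum tEnum hT (le_max_left n₁ n₂) η).subset (hn₁ s' hs')

lemma finite_sat (η : ℕ → Bool) (T0 : Finset ((L[[ℕ]]).Sentence))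
    (hT0 : ↑T0 ⊆ Pbr T hEnum tEnum hT η) :
    ∃ (M : Theory.ModelType.{u, v, max u v} T) (vc : ℕ → M),
      ∀ s ∈ T0, (ab s).Realize vc := by
  obtain ⟨n, hn⟩ := mem_Pbr_of_list T hEnum tEnum hT T0.toList
    fun s hs => hT0 (Finset.mem_coe.2 (Finset.mem_toList.1 hs))
  obtain ⟨M, vc, hvc⟩ := (states_inv T hEnum tEnum hT n).2.1 η
  exact ⟨M, vc, fun s hs => hvc s (hn s (Finset.mem_toList.2 hs))⟩

/-- The key extraction lemma: for two distinct branches and a pair of tuples, either the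
construction forced their types apart, or it certified that their common type is principal. -/
lemma extraction (htE : Function.Surjective tEnum) {η ν : ℕ → Bool} (hne : η ≠ ν)
    (dat : Tup) :
    (∃ χ : L.Formula (Fin dat.1),
        subc χ dat.2.1 ∈ Pbr T hEnum tEnum hT η ∧
        subc χ.not dat.2.2 ∈ Pbr T hEnum tEnum hT ν) ∨
    (∃ (p q : List ((L[[ℕ]]).Sentence)) (K : ℕ),
        (∀ s ∈ p, s ∈ Pbr T hEnum tEnum hT η) ∧ (∀ s ∈ q, s ∈ Pbr T hEnum tEnum hT ν) ∧
        (∀ s ∈ p, Supp T s K) ∧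
        ∀ χ : L.Formula (Fin dat.1),
          ¬ Sat T (p ++ [subc χ dat.2.1]) ∨ ¬ Sat T (q ++ [subc χ.not dat.2.2])) := by
  have hk : ∃ k, η k ≠ ν k := by
    by_contra hcon
    push_neg at hcon
    exact hne (funext hcon)
  obtain ⟨l₀, hl₀⟩ := hk
  obtain ⟨j, hj⟩ := htE (trunc (l₀ + 1) η, trunc (l₀ + 1) ν, dat)
  have hun : (Nat.unpair (Nat.pair j (l₀ + 1))).1 = j := by rw [Nat.unpair_pair]
  have hln : l₀ + 1 ≤ Nat.pair j (l₀ + 1) := Nat.right_le_pair j (l₀ + 1)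
  set n := Nat.pair j (l₀ + 1) with hn
  have hl₀n : l₀ < n := by omega
  have hxy : trunc n η ≠ trunc n ν := by
    intro hcon
    apply hl₀
    have h2 : (trunc n η).getD l₀ false = (trunc n ν).getD l₀ false := by rw [hcon]
    rwa [trunc_getD n η hl₀n, trunc_getD n ν hl₀n] at h2
  have hmem : (trunc n η, trunc n ν) ∈ pairsList n (trunc (l₀ + 1) η) (trunc (l₀ + 1) ν) := by
    rw [mem_pairsList]
    exact ⟨⟨trunc_mem_allNodes n η, trunc_mem_allNodes n ν⟩,
      trunc_prefix hln η, trunc_prefix hln ν, hxy⟩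
  obtain ⟨L₁, L₂, hPL⟩ := List.append_of_mem hmem
  have hInvA : InvL T n (List.foldl (fun s xy => pairStep T dat n xy s)
      (states T hEnum tEnum hT n) L₁) :=
    foldl_pairStep_inv T dat n L₁ _ (states_inv T hEnum tEnum hT n)
  -- the state after the crucial pair step
  have hpersist : ∀ β,
      (pairStep T dat n (trunc n η, trunc n ν)
        (List.foldl (fun s xy => pairStep T dat n xy s)
          (states T hEnum tEnum hT n) L₁)).psi β
        <+: (states T hEnum tEnum hT (n + 1)).psi β := by
    intro β
    have h0 : states T hEnum tEnum hT (n + 1) =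
        levelStep T hEnum tEnum n (states T hEnum tEnum hT n) := rfl
    rw [h0, levelStep, hun, hj]
    have h1 := foldl_pairStep_prefix T dat n L₂
      (pairStep T dat n (trunc n η, trunc n ν)
        (List.foldl (fun s xy => pairStep T dat n xy s) (states T hEnum tEnum hT n) L₁)) β
    rw [hPL, List.foldl_append, List.foldl_cons]
    exact h1.trans (hkStep_prefix _ _ β)
  have hpersistA : ∀ β,
      (List.foldl (fun s xy => pairStep T dat n xy s)
          (states T hEnum tEnum hT n) L₁).psi β
        <+: (states T hEnum tEnum hT (n + 1)).psi β := by
    intro β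
    exact (pairStep_prefix T dat n (trunc n η, trunc n ν) _ β).trans (hpersist β)
  by_cases h : ∃ χ : L.Formula (Fin dat.1),
      Sat T ((List.foldl (fun s xy => pairStep T dat n xy s)
          (states T hEnum tEnum hT n) L₁).psi (extB (trunc n η)) ++ [subc χ dat.2.1]) ∧
      Sat T ((List.foldl (fun s xy => pairStep T dat n xy s)
          (states T hEnum tEnum hT n) L₁).psi (extB (trunc n ν)) ++ [subc χ.not dat.2.2])
  · left
    refine ⟨h.choose, ?_, ?_⟩
    · refine ⟨n + 1, (hpersist η).subset ?_⟩
      rw [pairStep, dif_pos h]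
      dsimp only
      rw [if_pos (show trunc n η = (trunc n η, trunc n ν).1 from rfl)]
      exact List.mem_append_right _ (List.mem_singleton_self _)
    · refine ⟨n + 1, (hpersist ν).subset ?_⟩
      rw [pairStep, dif_pos h]
      dsimp only
      rw [if_neg (show ¬ trunc n ν = (trunc n η, trunc n ν).1 from fun hc => hxy hc.symm),
        if_pos (show trunc n ν = (trunc n η, trunc n ν).2 from rfl)]
      exact List.mem_append_right _ (List.mem_singleton_self _)
  · right
    refine ⟨(List.foldl (fun s xy => pairStep T dat n xy s)
        (states T hEnum tEnum hT n) L₁).psi η,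
      (List.foldl (fun s xy => pairStep T dat n xy s)
        (states T hEnum tEnum hT n) L₁).psi ν,
      (List.foldl (fun s xy => pairStep T dat n xy s)
        (states T hEnum tEnum hT n) L₁).bnd, ?_, ?_, ?_, ?_⟩
    · exact fun s hs => ⟨n + 1, (hpersistA η).subset hs⟩
    · exact fun s hs => ⟨n + 1, (hpersistA ν).subset hs⟩
    · exact fun s hs => hInvA.2.2 η s hs
    · intro χ
      rw [← not_and_or]
      intro hcon
      apply h
      refine ⟨χ, ?_, ?_⟩
      · rw [hInvA.1 (extB (trunc n η)) η fun k hk => extB_trunc n η hk]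
        exact hcon.1
      · rw [hInvA.1 (extB (trunc n ν)) ν fun k hk => extB_trunc n ν hk]
        exact hcon.2


/-! ### Building the model on a branch -/

section Wit

variable (P : Set ((L[[ℕ]]).Sentence))

/-- The full theory of a branch. -/
def Tfull : (L[[ℕ]]).Theory := (L.lhomWithConstants ℕ).onTheory T ∪ P

lemma Tfull_isSatisfiable
    (hfin : ∀ T0 : Finset ((L[[ℕ]]).Sentence), ↑T0 ⊆ P →
      ∃ (M : Theory.ModelType.{u, v, max u v} T) (vc : ℕ → M), ∀ s ∈ T0, (ab s).Realize vc) :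
    (Tfull T P).IsSatisfiable := by
  classical
  rw [Theory.isSatisfiable_iff_isFinitelySatisfiable]
  intro T0 hT0
  obtain ⟨M, vc, hvc⟩ := hfin (T0.filter (· ∈ P)) (by
    intro s hs
    rw [Finset.coe_filter] at hs
    exact hs.2)
  letI : (constantsOn ℕ).Structure M := constantsOn.structure vc
  have hM : (M : Type (max u v)) ⊨ (T0 : (L[[ℕ]]).Theory) := by
    rw [Theory.model_iff]
    intro φ hφ
    rcases hT0 hφ with hφ2 | hφ2
    · obtain ⟨ψ, hψ, rfl⟩ := hφ2
      rw [LHom.realize_onSentence]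
      exact Theory.realize_sentence_of_mem T hψ
    · have hmem : φ ∈ T0.filter (· ∈ P) := Finset.mem_filter.2 ⟨hφ, hφ2⟩
      have := hvc φ hmem
      exact (Formula.realize_equivSentence_symm (M : Type (max u v)) φ vc).1 this
  exact Theory.Model.isSatisfiable (M : Type (max u v))


/-- The formula `f(c_{e 0}, …) = x`. -/
def funTermF {k : ℕ} (f₀ : L.Functions k) (e : Fin k → ℕ) : L.BoundedFormula ℕ 1 :=
  Term.bdEqual (Term.func f₀ fun j => Term.var (Sum.inl (e j)))
    (Term.var (Sum.inr (0 : Fin 1)))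

lemma realize_funTermF {k : ℕ} {f₀ : L.Functions k} {e : Fin k → ℕ}
    {M : Type w} [L.Structure M] {vc : ℕ → M} {a : M} :
    (funTermF f₀ e).Realize vc (fun _ => a) ↔
      Structure.funMap f₀ (fun j => vc (e j)) = a := by
  rw [funTermF, BoundedFormula.realize_bdEqual]
  simp

lemma exists_wit
    (hfin : ∀ T0 : Finset ((L[[ℕ]]).Sentence), ↑T0 ⊆ P →
      ∃ (M : Theory.ModelType.{u, v, max u v} T) (vc : ℕ → M), ∀ s ∈ T0, (ab s).Realize vc)
    (hhk : ∀ θ : L.BoundedFormula ℕ 1, ∃ c, hkS θ c ∈ P) :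
    ∃ (MT : Theory.ModelType.{u, v, max u v} T) (co : ℕ → MT)
      (Msat : Theory.ModelType.{u, v, max u v} T) (vv : ℕ → Msat),
      Function.Surjective co ∧ Countable MT ∧
      (∀ s ∈ P, (ab s).Realize vv) ∧
      (∀ (m : ℕ) (χ : L.Formula (Fin m)) (e : Fin m → ℕ),
        χ.Realize (co ∘ e) ↔ χ.Realize (vv ∘ e)) := by
  classical
  obtain ⟨N⟩ := Tfull_isSatisfiable T P hfin
  haveI : (N : Type (max u v)) ⊨ (L.lhomWithConstants ℕ).onTheory T :=
    N.is_model.mono Set.subset_union_left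
  have hNP : ∀ s ∈ P, (N : Type (max u v)) ⊨ s := fun s hs =>
    Theory.realize_sentence_of_mem (Tfull T P) (Set.mem_union_right _ hs)
  letI : L.Structure (N : Type (max u v)) := (L.lhomWithConstants ℕ).reduct N
  haveI hexp : (L.lhomWithConstants ℕ).IsExpansionOn (N : Type (max u v)) :=
    LHom.isExpansionOn_reduct _ _
  set cval : ℕ → (N : Type (max u v)) := fun i => ((L.con i : (L[[ℕ]]).Constants) : N)
    with hcval
  -- bridge between `ab` and truth in `N`
  have hab1 : ∀ s : (L[[ℕ]]).Sentence, (ab s).Realize cval ↔ (N : Type (max u v)) ⊨ s :=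
    fun s => Formula.realize_equivSentence_symm_con (N : Type (max u v)) s
  -- the Henkin property of `N`
  have hHk : ∀ (θ : L.BoundedFormula ℕ 1) (c : ℕ), hkS θ c ∈ P →
      (∃ a : (N : Type (max u v)), θ.Realize cval (fun _ => a)) →
      θ.Realize cval (fun _ => cval c) := by
    intro θ c hc hex
    have h1 := (hab1 (hkS θ c)).2 (hNP _ hc)
    rw [ab_hkS, realize_hkF] at h1
    exact h1 hex
  -- the substructure of constants
  have hfun : ∀ {k : ℕ} (f : (L[[ℕ]]).Functions k) (x : Fin k → (N : Type (max u v))),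
      (∀ j, x j ∈ Set.range cval) → Structure.funMap f x ∈ Set.range cval := by
    intro k f x hx
    rcases f with f₀ | c
    · -- a function symbol of `L`
      choose e he using fun j => hx j
      obtain ⟨c, hc⟩ := hhk (funTermF f₀ e)
      have hwit : ∃ a : (N : Type (max u v)), (funTermF f₀ e).Realize cval (fun _ => a) :=
        ⟨Structure.funMap f₀ (fun j => cval (e j)), realize_funTermF.2 rfl⟩
      have hcon := realize_funTermF.1 (hHk (funTermF f₀ e) c hc hwit)
      have hxe : x = fun j => cval (e j) := funext fun j => (he j).symm
      rw [hxe]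
      exact ⟨c, by rw [← hcon]; rfl⟩
    · -- a constant symbol
      match k, c with
      | 0, (c : ℕ) =>
          refine ⟨c, ?_⟩
          rw [show x = default from Subsingleton.elim x default]
          rfl
      | (k + 1), c => exact isEmptyElim c
  set S : (L[[ℕ]]).Substructure (N : Type (max u v)) :=
    { carrier := Set.range cval
      fun_mem := fun f x hx => hfun f x hx } with hS
  -- the Tarski–Vaught test
  have htv : ∀ (k : ℕ) (φ : (L[[ℕ]]).BoundedFormula Empty (k + 1)) (x : Fin k → S)
      (a : (N : Type (max u v))),
      φ.Realize default (Fin.snoc ((↑) ∘ x) a : _ → (N : Type (max u v))) →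
      ∃ b : S, φ.Realize default (Fin.snoc ((↑) ∘ x) b : _ → (N : Type (max u v))) := by
    intro k φ x a ha
    choose e he using fun j => (x j).2
    -- the corresponding `L`-formula with constants as variables
    set ψF : L.Formula ((ℕ ⊕ Empty) ⊕ Fin (k + 1)) :=
      (BoundedFormula.constantsVarsEquiv φ).toFormula with hψF
    set g : ((ℕ ⊕ Empty) ⊕ Fin (k + 1)) → ℕ ⊕ Fin 1 :=
      Sum.elim (Sum.elim Sum.inl (fun o => o.elim))
        (fun j => if h : (j : ℕ) < k then Sum.inl (e ⟨j, h⟩) else Sum.inr 0) with hg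
    set θ : L.BoundedFormula ℕ 1 := BoundedFormula.relabel g ψF with hθ
    have TVsem : ∀ w : (N : Type (max u v)), θ.Realize cval (fun _ => w) ↔
        φ.Realize default (Fin.snoc ((↑) ∘ x) w : _ → (N : Type (max u v))) := by
      intro w
      rw [hθ, BoundedFormula.realize_relabel]
      rw [show (Sum.elim cval ((fun (_ : Fin 1) => w) ∘ Fin.castAdd 0) ∘ g) =
        (Sum.elim cval (fun _ => w) ∘ g) from rfl]
      rw [show ((fun (_ : Fin 1) => w) ∘ Fin.natAdd 1) = (default : Fin 0 → (N : Type (max u v)))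
        from Subsingleton.elim _ _]
      rw [show BoundedFormula.Realize ψF (Sum.elim cval (fun _ => w) ∘ g) default =
        ψF.Realize (Sum.elim cval (fun _ => w) ∘ g) from rfl]
      rw [hψF, BoundedFormula.realize_toFormula]
      have hinl : (Sum.elim cval (fun _ => w) ∘ g) ∘ Sum.inl =
          Sum.elim (fun i => ((L.con i : (L[[ℕ]]).Constants) : (N : Type (max u v))))
            (fun o : Empty => o.elim) := by
        funext i
        rcases i with i | o
        · rfl
        · exact o.elim
      have hinr : (Sum.elim cval (fun _ => w) ∘ g) ∘ Sum.inr =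
          (Fin.snoc ((↑) ∘ x) w : _ → (N : Type (max u v))) := by
        funext j
        refine Fin.lastCases ?_ ?_ j
        · have h1 : ¬ ((Fin.last k : Fin (k + 1)) : ℕ) < k := by simp
          simp only [Function.comp_apply, hg, Sum.elim_inr, dif_neg h1, Fin.snoc_last]
        · intro i
          have h1 : ((Fin.castSucc i : Fin (k + 1)) : ℕ) < k := i.2
          simp only [Function.comp_apply, hg, Sum.elim_inr, dif_pos h1, Fin.snoc_castSucc,
            Sum.elim_inl]
          have h2 : (⟨((Fin.castSucc i : Fin (k + 1)) : ℕ), h1⟩ : Fin k) = i := by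
            apply Fin.ext
            rfl
          rw [h2]
          exact he i
      rw [hinl, hinr]
      rw [BoundedFormula.realize_constantsVarsEquiv]
      have hde : (fun o : Empty => (o.elim : (N : Type (max u v)))) = default :=
        Subsingleton.elim _ _
      rw [hde]
    obtain ⟨c, hc⟩ := hhk θ
    have hwit : ∃ b : (N : Type (max u v)), θ.Realize cval (fun _ => b) :=
      ⟨a, (TVsem a).2 ha⟩
    have := (TVsem (cval c)).1 (hHk θ c hc hwit)
    exact ⟨⟨cval c, Set.mem_range_self c⟩, this⟩
  -- the elementary substructure of constants
  have isElem : S.IsElementary := S.isElementary_of_exists htv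
  set ES : (L[[ℕ]]).ElementarySubstructure (N : Type (max u v)) := ⟨S, isElem⟩ with hES
  haveI hEST : (ES : Type (max u v)) ⊨ Tfull T P := inferInstance
  haveI hESonT : (ES : Type (max u v)) ⊨ (L.lhomWithConstants ℕ).onTheory T :=
    hEST.mono Set.subset_union_left
  letI : L.Structure (ES : Type (max u v)) := (L.lhomWithConstants ℕ).reduct ES
  haveI hexpS : (L.lhomWithConstants ℕ).IsExpansionOn (ES : Type (max u v)) :=
    LHom.isExpansionOn_reduct _ _
  haveI hMT : (ES : Type (max u v)) ⊨ T :=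
    ((L.lhomWithConstants ℕ).onTheory_model T).1 hESonT
  haveI hNT : (N : Type (max u v)) ⊨ T :=
    ((L.lhomWithConstants ℕ).onTheory_model T).1 ‹(N : Type (max u v)) ⊨
      (L.lhomWithConstants ℕ).onTheory T›
  refine ⟨Theory.ModelType.of T (ES : Type (max u v)),
    fun i => ⟨cval i, Set.mem_range_self i⟩,
    Theory.ModelType.of T (N : Type (max u v)), cval, ?_, ?_, ?_, ?_⟩
  · rintro ⟨b, hb⟩
    obtain ⟨i, hi⟩ := hb
    exact ⟨i, Subtype.ext hi⟩
  · exact Function.Surjective.countable (f := fun i => (⟨cval i, Set.mem_range_self i⟩ : ES))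
      (by rintro ⟨b, hb⟩; obtain ⟨i, hi⟩ := hb; exact ⟨i, Subtype.ext hi⟩)
  · exact fun s hs => (hab1 s).2 (hNP s hs)
  · intro m χ e
    have h1 : ((L.lhomWithConstants ℕ).onFormula χ).Realize
        ((fun i => (⟨cval i, Set.mem_range_self i⟩ : ES)) ∘ e) ↔
        χ.Realize ((fun i => (⟨cval i, Set.mem_range_self i⟩ : ES)) ∘ e) :=
      LHom.realize_onFormula _ _
    have h2 : ((L.lhomWithConstants ℕ).onFormula χ).Realize
        ((Subtype.val : _ → (N : Type (max u v))) ∘ ((fun i => (⟨cval i, Set.mem_range_self i⟩ : ES)) ∘ e)) ↔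
        ((L.lhomWithConstants ℕ).onFormula χ).Realize
        ((fun i => (⟨cval i, Set.mem_range_self i⟩ : ES)) ∘ e) :=
      isElem _ _
    have h3 : ((L.lhomWithConstants ℕ).onFormula χ).Realize
        ((Subtype.val : _ → (N : Type (max u v))) ∘ ((fun i => (⟨cval i, Set.mem_range_self i⟩ : ES)) ∘ e)) ↔
        χ.Realize ((Subtype.val : _ → (N : Type (max u v))) ∘ ((fun i => (⟨cval i, Set.mem_range_self i⟩ : ES)) ∘ e)) :=
      LHom.realize_onFormula _ _
    have h4 : ((Subtype.val : _ → (N : Type (max u v))) ∘ ((fun i => (⟨cval i, Set.mem_range_self i⟩ : ES)) ∘ e)) = cval ∘ e := rfl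
    exact h1.symm.trans (h2.symm.trans (h3.trans (by rw [h4]; exact Iff.rfl)))

end Wit

/-! ### Enumerations -/

lemma exists_enums (hL : L.card ≤ Cardinal.aleph0) :
    ∃ (hEnum : ℕ → L.BoundedFormula ℕ 1) (tEnum : ℕ → TaskT),
      Function.Surjective hEnum ∧ Function.Surjective tEnum := by
  haveI hc1 : Countable (Σ n, L.BoundedFormula ℕ n) := by
    rw [← Cardinal.mk_le_aleph0_iff]
    refine (BoundedFormula.card_le).trans ?_
    rw [max_le_iff]
    refine ⟨le_refl _, ?_⟩
    have h1 : Cardinal.lift.{max u v} (Cardinal.mk ℕ) = Cardinal.aleph0 := by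
      simp
    rw [h1]
    have h2 : Cardinal.lift.{0} L.card ≤ Cardinal.aleph0 := by
      rw [Cardinal.lift_uzero]
      exact hL
    calc Cardinal.aleph0 + Cardinal.lift.{0} L.card
        ≤ Cardinal.aleph0 + Cardinal.aleph0 := by
          exact add_le_add le_rfl h2
      _ = Cardinal.aleph0 := Cardinal.aleph0_add_aleph0
  haveI hc2 : Countable (L.BoundedFormula ℕ 1) :=
    Function.Injective.countable (f := fun φ : L.BoundedFormula ℕ 1 =>
      (⟨1, φ⟩ : Σ n, L.BoundedFormula ℕ n)) fun a b h => by
        simpa using h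
  haveI hne : Nonempty (L.BoundedFormula ℕ 1) := ⟨⊥⟩
  obtain ⟨h1, hs1⟩ := exists_surjective_nat (L.BoundedFormula ℕ 1)
  obtain ⟨h2, hs2⟩ := exists_surjective_nat TaskT
  exact ⟨h1, h2, hs1, hs2⟩

/-! ### The main construction -/

theorem main (hL : L.card ≤ Cardinal.aleph0) (hT : T.IsSatisfiable) :
    ∃ Mfam : (ℕ → Bool) → Theory.ModelType.{u, v, max u v} T,
      (∀ η, Countable (Mfam η)) ∧
      ∀ η ν, η ≠ ν → ∀ (n : ℕ) (a : Fin n → Mfam η) (b : Fin n → Mfam ν),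
        (∀ φ : L.Formula (Fin n), φ.Realize a ↔ φ.Realize b) →
        Principal T {φ : L.Formula (Fin n) | φ.Realize a} := by
  classical
  obtain ⟨hEnum, tEnum, hhE, htE⟩ := exists_enums hL
  have hwit := fun η => exists_wit T (Pbr T hEnum tEnum hT η)
    (fun T0 hT0 => finite_sat T hEnum tEnum hT η T0 hT0)
    (fun θ => henkin_available T hEnum tEnum hT hhE η θ)
  choose MT co Msat vv hsurj hcount hreal htrans using hwit
  refine ⟨MT, hcount, ?_⟩
  intro η ν hne n a b hab
  choose e he using fun k => hsurj η (a k)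
  choose d hd using fun k => hsurj ν (b k)
  rcases extraction T hEnum tEnum hT htE hne ⟨n, e, d⟩ with
    ⟨χ, h1, h2⟩ | ⟨p, q, K, hp, hq, hK, hFC⟩
  · exfalso
    have hχa : χ.Realize a := by
      have h3 := hreal η _ h1
      rw [realize_ab_subc] at h3
      have h4 := (htrans η n χ e).2 h3
      rwa [show (co η) ∘ e = a from funext he] at h4
    have hχb : ¬ χ.Realize b := by
      have h3 := hreal ν _ h2
      rw [realize_ab_subc] at h3
      have h4 := (htrans ν n χ.not d).2 h3
      rw [show (co ν) ∘ d = b from funext hd] at h4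
      rw [Formula.realize_not] at h4
      exact h4
    exact hχb ((hab χ).1 hχa)
  · refine ⟨phiA p e K, ⟨Msat η, (vv η) ∘ e, ?_⟩, ?_⟩
    · exact phiA_spec2 hK (vv η) (fun k => rfl) (fun s hs => hreal η s (hp s hs))
    · intro M w hw γ hγ
      rw [Set.mem_setOf_eq] at hγ
      by_contra hng
      obtain ⟨vc, hvc, hvp⟩ := phiA_spec1 hw
      have hSat1 : Sat T (p ++ [subc γ.not e]) := by
        refine ⟨M, vc, ?_⟩
        intro s hs
        rcases List.mem_append.1 hs with hs | hs
        · exact hvp s hs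
        · have hseq : s = subc γ.not e := by simpa using hs
          subst hseq
          rw [realize_ab_subc, show vc ∘ e = w from funext hvc, Formula.realize_not]
          exact hng
      rcases hFC γ.not with hc | hc
      · exact hc hSat1
      · apply hc
        refine ⟨Msat ν, vv ν, ?_⟩
        intro s hs
        rcases List.mem_append.1 hs with hs | hs
        · exact hreal ν s (hq s hs)
        · have hseq : s = subc γ.not.not d := by simpa using hs
          subst hseq
          rw [realize_ab_subc, Formula.realize_not, Formula.realize_not, not_not]
          exact (htrans ν n γ d).1
            (by rw [show (co ν) ∘ d = b from funext hd]; exact (hab γ).1 hγ)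

end ShelahProof

/-- (Shelah) A consistent theory in a countable language has `2^ℵ₀` many countable
models that overlap only on principal types: tuples from distinct models realizing
the same type only realize principal types. -/
theorem continuum_many_models_overlapping_on_principal_types
    {L : FirstOrder.Language.{u, v}} (hL : L.card ≤ Cardinal.aleph0)
    (T : L.Theory) (hT : T.IsSatisfiable) :
    ∃ (ι : Type) (M : ι → Theory.ModelType.{u, v, max u v} T),
      Cardinal.mk ι = 2 ^ Cardinal.aleph0 ∧
      (∀ i, Countable (M i)) ∧
      ∀ i j, i ≠ j → ∀ (n : ℕ) (a : Fin n → M i) (b : Fin n → M j),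
        (∀ φ : L.Formula (Fin n), φ.Realize a ↔ φ.Realize b) →
        Principal T {φ : L.Formula (Fin n) | φ.Realize a} := by
  obtain ⟨Mfam, hcount, hmain⟩ := ShelahProof.main T hL hT
  refine ⟨ℕ → Bool, Mfam, ?_, hcount, hmain⟩
  rw [← Cardinal.power_def, Cardinal.mk_bool, Cardinal.mk_nat]
end

section
/- (Erdős–Rado) Define exp_0(κ) = κ and exp_{r+1}(κ) = 2^{exp_r(κ)} for cardinals κ and natural numbers r. Then for every infinite cardinal κ and every natural number r, the partition relation (exp_r(κ))⁺ → (κ⁺)^{r+1}_κ holds: for every set S of cardinality at least (exp_r(κ))⁺, every set C of cardinality at most κ, and every coloring c of the (r+1)-element subsets of S by elements of C, there is a subset H ⊆ S of cardinality κ⁺ such that c is constant on the (r+1)-element subsets of H. -/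
/-- Iterated exponentiation of cardinals: `exp_0(κ) = κ`,
`exp_{r+1}(κ) = 2 ^ exp_r(κ)`. -/
noncomputable def expIter : ℕ → Cardinal → Cardinal
  | 0, κ => κ
  | r + 1, κ => 2 ^ expIter r κ

open Cardinal Set Order

namespace ErdosRadoAux

section Helpers

lemma kappa_le_expIter (κ : Cardinal) (r : ℕ) : κ ≤ expIter r κ := by
  induction r with
  | zero => exact le_rfl
  | succ r ih => exact ih.trans (Cardinal.cantor _).le

/-- Pigeonhole: a map into a small type has a big fiber. -/
lemma pigeon {α β : Type} {ν : Cardinal} (hν : ℵ₀ ≤ ν) (hα : Order.succ ν ≤ #α)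
    (hβ : #β ≤ ν) (g : α → β) : ∃ b : β, Order.succ ν ≤ #{a : α | g a = b} := by
  by_contra h
  push_neg at h
  have h' : ∀ b, #{a : α | g a = b} ≤ ν := fun b => Order.lt_succ_iff.mp (h b)
  have e : #α = #(Σ b : β, {a : α // g a = b}) :=
    (Cardinal.mk_congr (Equiv.sigmaFiberEquiv g)).symm
  have hle : #α ≤ ν := by
    rw [e, Cardinal.mk_sigma]
    calc Cardinal.sum (fun b => #{a : α // g a = b})
        ≤ Cardinal.sum (fun _ : β => ν) := Cardinal.sum_le_sum _ _ (fun b => h' b)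
      _ = #β * ν := Cardinal.sum_const' β ν
      _ ≤ ν * ν := mul_le_mul_left hβ ν
      _ = ν := Cardinal.mul_eq_self hν
  exact ((Order.lt_succ ν).trans_le hα).not_ge hle

/-- Shrink a set to an exact cardinality. -/
lemma shrink {S : Type} {ν : Cardinal} (H₀ : Set S) (h : ν ≤ #H₀) :
    ∃ H : Set S, H ⊆ H₀ ∧ #H = ν := by
  obtain ⟨P, hP⟩ := Cardinal.le_mk_iff_exists_set.mp h
  refine ⟨Subtype.val '' P, ?_, ?_⟩
  · rintro x ⟨y, _, rfl⟩; exact y.2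
  · rw [Cardinal.mk_image_eq Subtype.val_injective, hP]

/-- From a cardinality bound, get a surjection onto a nonempty set as a range. -/
lemma exists_range_eq {α I : Type} {B : Set α} (hB : B.Nonempty) (hI : #B ≤ #I) :
    ∃ g : I → α, Set.range g = B := by
  obtain ⟨f⟩ := (Cardinal.le_def _ _).mp hI
  classical
  refine ⟨fun i => if h : ∃ b : B, f b = i then (h.choose : B).1 else hB.some, ?_⟩
  ext x
  constructor
  · rintro ⟨i, rfl⟩
    dsimp only
    split_ifs with h
    · exact (h.choose).2
    · exact hB.some_mem
  · intro hx
    refine ⟨f ⟨x, hx⟩, ?_⟩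
    have h : ∃ b : B, f b = f ⟨x, hx⟩ := ⟨⟨x, hx⟩, rfl⟩
    dsimp only
    rw [dif_pos h]
    have := f.injective h.choose_spec
    rw [this]

/-- If every `Iic` is small and the order is big, every `I`-indexed family is
strictly bounded. -/
lemma bounded_family {W I : Type} [LinearOrder W] {μ : Cardinal} (hμ : ℵ₀ ≤ μ)
    (hW : Order.succ μ ≤ #W) (hIic : ∀ w : W, #(Iic w) ≤ μ) (hI : #I ≤ μ)
    (h : I → W) : ∃ w : W, ∀ i, h i < w := by
  by_contra hcon
  push_neg at hcon
  have hcover : (univ : Set W) = ⋃ i : I, Iic (h i) := by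
    apply Set.eq_univ_of_forall ?_ |>.symm
    intro w
    obtain ⟨i, hi⟩ := hcon w
    exact Set.mem_iUnion.mpr ⟨i, hi⟩
  have : #W ≤ μ := by
    calc #W = #(univ : Set W) := mk_univ.symm
      _ = #(⋃ i : I, Iic (h i)) := by rw [hcover]
      _ ≤ #I * ⨆ i : I, #(Iic (h i)) := Cardinal.mk_iUnion_le _
      _ ≤ μ * μ := mul_le_mul' hI (ciSup_le' (fun i => hIic (h i)))
      _ = μ := Cardinal.mul_eq_self hμ
  exact ((Order.lt_succ μ).trans_le hW).not_ge this

end Helpers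

section Step

attribute [local instance] Classical.propDecidable

variable {S C I : Type}

/-- The finset arising from a tuple of indices. -/
noncomputable def tupleFinset (n : ℕ) (g : I → S) (v : Fin n → I) : Finset S :=
  Finset.image (fun i => g (v i)) Finset.univ

/-- Pick a realizer of the type `τ` over `range g`, if one exists. -/
noncomputable def pickReal (c : Finset S → C) (n : ℕ) (s₀ : S) (g : I → S)
    (τ : (Fin n → I) → C) : S :=
  if h : ∃ y : S, y ∉ Set.range g ∧ ∀ v, c (insert y (tupleFinset n g v)) = τ v then
    h.choose else s₀

/-- One saturation step: add realizers of all types over all small subsets. -/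
noncomputable def satur (I : Type) (c : Finset S → C) (n : ℕ) (s₀ : S) (X : Set S) : Set S :=
  insert s₀ X ∪ ⋃ g : {g : I → S // Set.range g ⊆ X}, Set.range (pickReal c n s₀ g.1)

variable {W : Type} [LinearOrder W] [WellFoundedLT W]

/-- Transfinite iteration of the saturation step. -/
noncomputable def Achain (I : Type) (c : Finset S → C) (n : ℕ) (s₀ : S) : W → Set S :=
  (IsWellFounded.wf (α := W) (r := (· < ·))).fix
    (fun w ih => satur I c n s₀ (⋃ v : {v : W // v < w}, ih v.1 v.2))

lemma Achain_eq (I : Type) (c : Finset S → C) (n : ℕ) (s₀ : S) (w : W) :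
    Achain (W := W) I c n s₀ w
      = satur I c n s₀ (⋃ v : {v : W // v < w}, Achain I c n s₀ v.1) := by
  exact WellFounded.fix_eq _ _ w

/-- The saturated set. -/
noncomputable def bigA (W I : Type) [LinearOrder W] [WellFoundedLT W]
    (c : Finset S → C) (n : ℕ) (s₀ : S) : Set S :=
  ⋃ w : W, Achain I c n s₀ w

lemma s₀_mem_bigA (W I : Type) [LinearOrder W] [WellFoundedLT W] [Nonempty W]
    (c : Finset S → C) (n : ℕ) (s₀ : S) : s₀ ∈ bigA (S := S) W I c n s₀ := by
  obtain ⟨w⟩ := ‹Nonempty W›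
  refine Set.mem_iUnion.mpr ⟨w, ?_⟩
  rw [Achain_eq]
  exact Or.inl (Set.mem_insert _ _)

/-- The saturated set contains realizers for every function with small range. -/
lemma bigA_closed (c : Finset S → C) (n : ℕ) (s₀ : S)
    (hbdd : ∀ h : I → W, ∃ w : W, ∀ i, h i < w)
    (g : I → S) (hg : Set.range g ⊆ bigA W I c n s₀) (x : S) (hx : x ∉ Set.range g) :
    ∃ y, y ∈ bigA W I c n s₀ ∧ y ∉ Set.range g ∧
      ∀ v : Fin n → I, c (insert y (tupleFinset n g v)) = c (insert x (tupleFinset n g v)) := by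
  have hlev : ∀ i : I, ∃ w : W, g i ∈ Achain I c n s₀ w := fun i =>
    Set.mem_iUnion.mp (hg (Set.mem_range_self i))
  choose lev hlev using hlev
  obtain ⟨w, hw⟩ := hbdd lev
  set X := ⋃ v : {v : W // v < w}, Achain (W := W) I c n s₀ v.1 with hX
  have hgX : Set.range g ⊆ X := by
    rintro _ ⟨i, rfl⟩
    exact Set.mem_iUnion.mpr ⟨⟨lev i, hw i⟩, hlev i⟩
  set τ : (Fin n → I) → C := fun v => c (insert x (tupleFinset n g v)) with hτ
  have hex : ∃ y : S, y ∉ Set.range g ∧ ∀ v, c (insert y (tupleFinset n g v)) = τ v :=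
    ⟨x, hx, fun v => rfl⟩
  have hmem : pickReal c n s₀ g τ ∈ Achain (W := W) I c n s₀ w := by
    rw [Achain_eq]
    exact Or.inr (Set.mem_iUnion.mpr ⟨⟨g, hgX⟩, Set.mem_range_self τ⟩)
  have hspec : pickReal c n s₀ g τ ∉ Set.range g ∧
      ∀ v, c (insert (pickReal c n s₀ g τ) (tupleFinset n g v)) = τ v := by
    rw [pickReal, dif_pos hex]
    exact hex.choose_spec
  exact ⟨pickReal c n s₀ g τ, Set.mem_iUnion.mpr ⟨w, hmem⟩, hspec.1, hspec.2⟩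

/-- Cardinality bound on the saturated set. -/
lemma mk_bigA_le (c : Finset S → C) (n : ℕ) (s₀ : S) (lam : Cardinal) (hlam : ℵ₀ ≤ lam)
    (hW : #W ≤ lam) (hIio : ∀ w : W, #(Iio w) ≤ lam)
    (hfun : ∀ X : Set S, #X ≤ lam → #{g : I → S // Set.range g ⊆ X} ≤ lam)
    (hτ : #((Fin n → I) → C) ≤ lam) :
    #(bigA W I c n s₀) ≤ lam := by
  have key : ∀ w : W, #(Achain (W := W) I c n s₀ w) ≤ lam := by
    intro w
    refine WellFounded.induction (IsWellFounded.wf (α := W) (r := (· < ·)))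
      (C := fun w => #(Achain (W := W) I c n s₀ w) ≤ lam) w ?_
    intro w ih
    rw [Achain_eq]
    set X := ⋃ v : {v : W // v < w}, Achain (W := W) I c n s₀ v.1 with hXdef
    have hXle : #X ≤ lam := by
      calc #X ≤ #{v : W // v < w} * ⨆ v : {v : W // v < w}, #(Achain (W := W) I c n s₀ v.1) :=
            Cardinal.mk_iUnion_le _
        _ ≤ lam * lam := mul_le_mul' (hIio w) (ciSup_le' (fun v => ih v.1 v.2))
        _ = lam := Cardinal.mul_eq_self hlam
    have h1 : #(insert s₀ X : Set S) ≤ lam := by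
      refine (Cardinal.mk_insert_le).trans ?_
      calc #X + 1 ≤ lam + lam := add_le_add hXle (one_le_aleph0.trans hlam)
        _ = lam := Cardinal.add_eq_self hlam
    have h2 : #(⋃ g : {g : I → S // Set.range g ⊆ X}, Set.range (pickReal c n s₀ g.1)) ≤ lam := by
      calc #(⋃ g : {g : I → S // Set.range g ⊆ X}, Set.range (pickReal c n s₀ g.1))
          ≤ #{g : I → S // Set.range g ⊆ X} *
            ⨆ g : {g : I → S // Set.range g ⊆ X}, #(Set.range (pickReal c n s₀ g.1)) :=
            Cardinal.mk_iUnion_le _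
        _ ≤ lam * lam := by
            refine mul_le_mul' (hfun X hXle) (ciSup_le' (fun g => ?_))
            exact Cardinal.mk_range_le.trans hτ
        _ = lam := Cardinal.mul_eq_self hlam
    calc #(satur I c n s₀ X) ≤ #(insert s₀ X : Set S) +
          #(⋃ g : {g : I → S // Set.range g ⊆ X}, Set.range (pickReal c n s₀ g.1)) :=
          Cardinal.mk_union_le _ _
      _ ≤ lam + lam := add_le_add h1 h2
      _ = lam := Cardinal.add_eq_self hlam
  calc #(bigA W I c n s₀) ≤ #W * ⨆ w : W, #(Achain (W := W) I c n s₀ w) :=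
        Cardinal.mk_iUnion_le _
    _ ≤ lam * lam := mul_le_mul' hW (ciSup_le' key)
    _ = lam := Cardinal.mul_eq_self hlam

/-- Any finset inside the range of `g` with the right cardinality is a `tupleFinset`. -/
lemma exists_tuple {n : ℕ} {g : I → S} {t : Finset S} (ht : ↑t ⊆ Set.range g)
    (hc : t.card = n) : ∃ v : Fin n → I, tupleFinset n g v = t := by
  classical
  have e : {x // x ∈ t} ≃ Fin n := Fintype.equivFinOfCardEq (by rw [Fintype.card_coe, hc])
  have hex : ∀ j : Fin n, ∃ i : I, g i = (e.symm j : S) := fun j => ht (e.symm j).2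
  choose v hv using hex
  refine ⟨v, ?_⟩
  unfold tupleFinset
  ext x
  simp only [Finset.mem_image, Finset.mem_univ, true_and]
  constructor
  · rintro ⟨j, rfl⟩
    rw [hv]
    exact (e.symm j).2
  · intro hx
    exact ⟨e ⟨x, hx⟩, by rw [hv, Equiv.symm_apply_apply]⟩

/-- The end-homogeneous sequence: at each stage pick an element of the saturated
set realizing the type of `a` over the previous elements. -/
noncomputable def aseq (I : Type) (c : Finset S → C) (n : ℕ) (s₀ : S) (a : S) : W → S :=
  (IsWellFounded.wf (α := W) (r := (· < ·))).fix
    (fun w ih =>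
      if h : ∃ y : S, y ∈ bigA W I c n s₀ ∧
          y ∉ (Set.range (fun v : {v : W // v < w} => ih v.1 v.2) ∪ {s₀}) ∧
          ∀ t : Finset S, ↑t ⊆ (Set.range (fun v : {v : W // v < w} => ih v.1 v.2) ∪ {s₀}) →
            t.card = n → c (insert y t) = c (insert a t) then
        h.choose else s₀)

/-- The set of previously chosen elements (together with `s₀`). -/
noncomputable def prevSet (I : Type) (c : Finset S → C) (n : ℕ) (s₀ : S) (a : S) (w : W) :
    Set S :=
  Set.range (fun v : {v : W // v < w} => aseq (W := W) I c n s₀ a v.1) ∪ {s₀}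

lemma aseq_eq (I : Type) (c : Finset S → C) (n : ℕ) (s₀ : S) (a : S) (w : W) :
    aseq (W := W) I c n s₀ a w =
      (if h : ∃ y : S, y ∈ bigA W I c n s₀ ∧ y ∉ prevSet I c n s₀ a w ∧
          ∀ t : Finset S, ↑t ⊆ prevSet I c n s₀ a w →
            t.card = n → c (insert y t) = c (insert a t) then
        h.choose else s₀) := by
  exact WellFounded.fix_eq _ _ w

/-- The specification of `aseq`, assuming the relevant hypotheses. -/
lemma aseq_spec (c : Finset S → C) (n : ℕ) (s₀ : S) (a : S) {μ : Cardinal} (hμ : ℵ₀ ≤ μ)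
    (hI : #I = μ) (hIio : ∀ w : W, #(Iio w) ≤ μ)
    (hbdd : ∀ h : I → W, ∃ w : W, ∀ i, h i < w)
    (ha : a ∉ bigA W I c n s₀) (hs₀ : s₀ ∈ bigA (S := S) W I c n s₀) :
    ∀ w : W, aseq (W := W) I c n s₀ a w ∈ bigA W I c n s₀ ∧
      aseq (W := W) I c n s₀ a w ∉ prevSet I c n s₀ a w ∧
      ∀ t : Finset S, ↑t ⊆ prevSet I c n s₀ a w →
        t.card = n → c (insert (aseq (W := W) I c n s₀ a w) t) = c (insert a t) := by
  intro w
  refine WellFounded.induction (IsWellFounded.wf (α := W) (r := (· < ·)))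
    (C := fun w => aseq (W := W) I c n s₀ a w ∈ bigA W I c n s₀ ∧
      aseq (W := W) I c n s₀ a w ∉ prevSet I c n s₀ a w ∧
      ∀ t : Finset S, ↑t ⊆ prevSet I c n s₀ a w →
        t.card = n → c (insert (aseq (W := W) I c n s₀ a w) t) = c (insert a t)) w ?_
  intro w ih
  -- the previous set is contained in bigA and is small
  have hprev_sub : prevSet (W := W) I c n s₀ a w ⊆ bigA W I c n s₀ := by
    rintro x (⟨v, rfl⟩ | hx)
    · exact (ih v.1 v.2).1
    · rw [Set.mem_singleton_iff.mp hx]; exact hs₀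
  have hprev_card : #(prevSet (W := W) I c n s₀ a w) ≤ #I := by
    rw [hI]
    calc #(prevSet (W := W) I c n s₀ a w)
        ≤ #(Set.range (fun v : {v : W // v < w} => aseq (W := W) I c n s₀ a v.1))
          + #({s₀} : Set S) := Cardinal.mk_union_le _ _
      _ ≤ #{v : W // v < w} + 1 := by
          refine add_le_add Cardinal.mk_range_le ?_
          rw [Cardinal.mk_singleton]
      _ ≤ μ + μ := add_le_add (hIio w) (one_le_aleph0.trans hμ)
      _ = μ := Cardinal.add_eq_self hμ
  have hprev_ne : (prevSet (W := W) I c n s₀ a w).Nonempty :=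
    ⟨s₀, Or.inr rfl⟩
  obtain ⟨g, hgr⟩ := exists_range_eq hprev_ne hprev_card
  have hgsub : Set.range g ⊆ bigA W I c n s₀ := by rw [hgr]; exact hprev_sub
  have hag : a ∉ Set.range g := by
    rw [hgr]; intro hmem; exact ha (hprev_sub hmem)
  obtain ⟨y, hy1, hy2, hy3⟩ := bigA_closed c n s₀ hbdd g hgsub a hag
  have hex : ∃ y : S, y ∈ bigA W I c n s₀ ∧ y ∉ prevSet I c n s₀ a w ∧
      ∀ t : Finset S, ↑t ⊆ prevSet I c n s₀ a w → t.card = n →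
        c (insert y t) = c (insert a t) := by
    refine ⟨y, hy1, by rw [← hgr]; exact hy2, ?_⟩
    intro t ht htc
    rw [← hgr] at ht
    obtain ⟨v, hv⟩ := exists_tuple ht htc
    rw [← hv]
    exact hy3 v
  rw [aseq_eq I c n s₀ a w]
  rw [dif_pos hex]
  exact hex.choose_spec

end Step

end ErdosRadoAux

/-- (Erdős–Rado) `(exp_r(κ))⁺ → (κ⁺)^{r+1}_κ`: if `κ` is infinite, `S` has
cardinality at least `(exp_r(κ))⁺`, `C` has cardinality at most `κ`, and `c` colours
the `(r+1)`-element subsets of `S` by elements of `C`, then there is `H ⊆ S` of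
cardinality `κ⁺` all of whose `(r+1)`-element subsets get the same colour. -/
theorem erdos_rado (κ : Cardinal) (hκ : Cardinal.aleph0 ≤ κ) (r : ℕ)
    (S : Type) (hS : Order.succ (expIter r κ) ≤ Cardinal.mk S)
    (C : Type) (hC : Cardinal.mk C ≤ κ)
    (c : Finset S → C) :
    ∃ H : Set S, Cardinal.mk H = Order.succ κ ∧
      ∀ t₁ t₂ : Finset S, ↑t₁ ⊆ H → ↑t₂ ⊆ H →
        t₁.card = r + 1 → t₂.card = r + 1 → c t₁ = c t₂ := by
  classical
  suffices haux : ∀ (r : ℕ) (S : Type), Order.succ (expIter r κ) ≤ #S →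
      ∀ c : Finset S → C, ∃ H : Set S, Order.succ κ ≤ #H ∧
      ∀ t₁ t₂ : Finset S, ↑t₁ ⊆ H → ↑t₂ ⊆ H → t₁.card = r + 1 → t₂.card = r + 1 →
        c t₁ = c t₂ by
    obtain ⟨H₀, hH₀, hhom⟩ := haux r S hS c
    obtain ⟨H, hsub, hcard⟩ := ErdosRadoAux.shrink H₀ hH₀
    exact ⟨H, hcard, fun t₁ t₂ h1 h2 hc1 hc2 =>
      hhom t₁ t₂ (h1.trans hsub) (h2.trans hsub) hc1 hc2⟩
  intro r
  induction r with
  | zero =>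
    intro S hS c
    simp only [expIter] at hS
    obtain ⟨b, hb⟩ := ErdosRadoAux.pigeon (α := S) (β := C) hκ hS hC (fun x => c {x})
    refine ⟨{x | c {x} = b}, hb, ?_⟩
    intro t₁ t₂ h1 h2 hc1 hc2
    obtain ⟨x, rfl⟩ := Finset.card_eq_one.mp hc1
    obtain ⟨y, rfl⟩ := Finset.card_eq_one.mp hc2
    have hx : c {x} = b := h1 (by simp)
    have hy : c {y} = b := h2 (by simp)
    rw [hx, hy]
  | succ r IH =>
    intro S hS c
    simp only [expIter] at hS
    set μ := expIter r κ with hμdef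
    have hκμ : κ ≤ μ := ErdosRadoAux.kappa_le_expIter κ r
    have hμinf : ℵ₀ ≤ μ := hκ.trans hκμ
    have hμlam : μ ≤ 2 ^ μ := (Cardinal.cantor μ).le
    have hκlam : κ ≤ 2 ^ μ := hκμ.trans hμlam
    have hlaminf : ℵ₀ ≤ (2 : Cardinal) ^ μ := hμinf.trans hμlam
    -- index types
    set I := μ.ord.ToType with hIdef
    set W := (Order.succ μ).ord.ToType with hWdef
    have hIcard : #I = μ := by rw [hIdef, Cardinal.mk_toType, Cardinal.card_ord]
    have hWcard : #W = Order.succ μ := by rw [hWdef, Cardinal.mk_toType, Cardinal.card_ord]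
    have hWIio : ∀ w : W, #(Iio w) ≤ μ := fun w =>
      Order.lt_succ_iff.mp (Cardinal.mk_Iio_ord_toType w)
    have hWIic : ∀ w : W, #(Iic w) ≤ μ := by
      intro w
      rw [← Set.Iio_insert]
      calc #(insert w (Iio w) : Set W) ≤ #(Iio w) + 1 := Cardinal.mk_insert_le
        _ ≤ μ + μ := add_le_add (hWIio w) (one_le_aleph0.trans hμinf)
        _ = μ := Cardinal.add_eq_self hμinf
    have hbdd : ∀ h : I → W, ∃ w : W, ∀ i, h i < w :=
      ErdosRadoAux.bounded_family hμinf hWcard.ge hWIic hIcard.le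
    haveI : Nonempty S := Cardinal.mk_ne_zero_iff.mp
      (fun h0 => by rw [h0] at hS; exact (lt_of_le_of_lt zero_le (Order.lt_succ _)).not_ge hS)
    haveI : Nonempty W := Cardinal.mk_ne_zero_iff.mp
      (fun h0 => by rw [h0] at hWcard; exact ((lt_of_le_of_lt zero_le (Order.lt_succ μ)).ne' hWcard.symm))
    obtain ⟨s₀⟩ := ‹Nonempty S›
    have hs₀A : s₀ ∈ ErdosRadoAux.bigA (S := S) W I c (r + 1) s₀ :=
      ErdosRadoAux.s₀_mem_bigA W I c (r + 1) s₀
    -- cardinality of the saturated set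
    have hAcard : #(ErdosRadoAux.bigA (S := S) W I c (r + 1) s₀) ≤ 2 ^ μ := by
      refine ErdosRadoAux.mk_bigA_le c (r + 1) s₀ (2 ^ μ) hlaminf
        (hWcard.le.trans (Order.succ_le_of_lt (Cardinal.cantor μ)))
        (fun w => (hWIio w).trans hμlam) ?_ ?_
      · intro X hX
        have emb : {g : I → S // Set.range g ⊆ X} ↪ (I → X) :=
          ⟨fun p i => ⟨p.1 i, p.2 (Set.mem_range_self i)⟩, by
            intro p q h
            apply Subtype.ext
            funext i
            exact congrArg Subtype.val (congrFun h i)⟩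
        calc #{g : I → S // Set.range g ⊆ X} ≤ #(I → X) := Cardinal.mk_le_of_injective emb.2
          _ = #X ^ #I := (Cardinal.power_def _ _).symm
          _ ≤ (2 ^ μ) ^ μ := by rw [hIcard]; exact Cardinal.power_le_power_right hX
          _ = 2 ^ μ := by rw [← Cardinal.power_mul, Cardinal.mul_eq_self hμinf]
      · have hfin : #(Fin (r + 1) → I) = μ := by
          rw [← Cardinal.power_def, Cardinal.mk_fin, hIcard, Cardinal.power_natCast]
          exact Cardinal.power_nat_eq hμinf (by omega)
        calc #((Fin (r + 1) → I) → C) = #C ^ #(Fin (r + 1) → I) :=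
              (Cardinal.power_def _ _).symm
          _ = #C ^ μ := by rw [hfin]
          _ ≤ (2 ^ μ) ^ μ := Cardinal.power_le_power_right (hC.trans hκlam)
          _ = 2 ^ μ := by rw [← Cardinal.power_mul, Cardinal.mul_eq_self hμinf]
    -- a point outside the saturated set
    have hexa : ∃ a : S, a ∉ ErdosRadoAux.bigA (S := S) W I c (r + 1) s₀ := by
      by_contra h
      push_neg at h
      have huniv : ErdosRadoAux.bigA (S := S) W I c (r + 1) s₀ = Set.univ :=
        Set.eq_univ_of_forall h
      rw [huniv, Cardinal.mk_univ] at hAcard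
      exact ((Order.lt_succ ((2 : Cardinal) ^ μ)).trans_le hS).not_ge hAcard
    obtain ⟨a, ha⟩ := hexa
    have haseq := ErdosRadoAux.aseq_spec c (r + 1) s₀ a hμinf hIcard hWIio hbdd ha hs₀A
    set f := ErdosRadoAux.aseq (W := W) I c (r + 1) s₀ a with hfdef
    -- injectivity
    have hinj : Function.Injective f := by
      intro u v huv
      by_contra hne
      rcases lt_or_gt_of_ne hne with h | h
      · exact (haseq v).2.1 (Or.inl ⟨⟨u, h⟩, huv⟩)
      · exact (haseq u).2.1 (Or.inl ⟨⟨v, h⟩, huv.symm⟩)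
    -- end-homogeneity
    have hend : ∀ (s : Finset W) (w : W), s.card = r + 1 → (∀ u ∈ s, u < w) →
        c (insert (f w) (s.image f)) = c (insert a (s.image f)) := by
      intro s w hcard hlt
      refine (haseq w).2.2 (s.image f) ?_ ?_
      · intro x hx
        obtain ⟨u, hu, rfl⟩ := Finset.mem_image.mp hx
        exact Or.inl ⟨⟨u, hlt u hu⟩, rfl⟩
      · rw [Finset.card_image_of_injective _ hinj, hcard]
    -- upper bounds exist for finsets
    haveI : NoMaxOrder W := Cardinal.noMaxOrder (hμinf.trans (Order.le_succ μ))
    have hub : ∀ s : Finset W, ∃ w : W, ∀ u ∈ s, u < w := by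
      intro s
      rcases s.eq_empty_or_nonempty with rfl | hne
      · obtain ⟨w⟩ := ‹Nonempty W›
        exact ⟨w, fun u hu => absurd hu (Finset.notMem_empty u)⟩
      · obtain ⟨w, hw⟩ := exists_gt (s.max' hne)
        exact ⟨w, fun u hu => (Finset.le_max' s u hu).trans_lt hw⟩
    -- the derived colouring on W
    set ct : Finset W → C := fun s =>
      if h : ∃ w : W, ∀ u ∈ s, u < w then c (insert (f h.choose) (s.image f)) else c ∅
      with hctdef
    have hct : ∀ (s : Finset W) (w : W), s.card = r + 1 → (∀ u ∈ s, u < w) →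
        ct s = c (insert (f w) (s.image f)) := by
      intro s w hcard hlt
      have h := hub s
      rw [hctdef]
      dsimp only
      rw [dif_pos h, hend s h.choose hcard h.choose_spec, hend s w hcard hlt]
    -- apply the induction hypothesis on W
    obtain ⟨H', hH'card, hH'hom⟩ := IH W hWcard.ge ct
    refine ⟨f '' H', by rwa [Cardinal.mk_image_eq hinj], ?_⟩
    -- reduce (r+2)-subsets of the image to (r+1)-subsets of H'
    have hkey : ∀ t : Finset S, ↑t ⊆ f '' H' → t.card = r + 1 + 1 →
        ∃ s : Finset W, ↑s ⊆ H' ∧ s.card = r + 1 ∧ c t = ct s := by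
      intro t ht htc
      have hinjOn : Set.InjOn f (f ⁻¹' ↑t) := Function.Injective.injOn hinj
      set t' := t.preimage f hinjOn with ht'def
      have himg : t'.image f = t := by
        ext x
        simp only [Finset.mem_image, ht'def, Finset.mem_preimage]
        constructor
        · rintro ⟨u, hu, rfl⟩
          exact hu
        · intro hx
          obtain ⟨u, _, rfl⟩ := ht hx
          exact ⟨u, hx, rfl⟩
      have ht'c : t'.card = r + 1 + 1 := by
        rw [← htc, ← himg, Finset.card_image_of_injective _ hinj]
      have ht'sub : ↑t' ⊆ H' := by
        intro u hu
        have hmem : f u ∈ t := Finset.mem_preimage.mp hu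
        obtain ⟨u', hu', he⟩ := ht hmem
        rwa [← hinj he]
      have hne : t'.Nonempty := Finset.card_pos.mp (by rw [ht'c]; omega)
      set w := t'.max' hne with hwdef
      set s := t'.erase w with hsdef
      have hsc : s.card = r + 1 := by
        rw [hsdef, Finset.card_erase_of_mem (t'.max'_mem hne), ht'c]
        omega
      have hslt : ∀ u ∈ s, u < w := fun u hu =>
        lt_of_le_of_ne (Finset.le_max' t' u (Finset.mem_of_mem_erase hu))
          (Finset.ne_of_mem_erase hu)
      have hins : t = insert (f w) (s.image f) := by
        rw [← himg]
        conv_lhs => rw [← Finset.insert_erase (t'.max'_mem hne)]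
        rw [Finset.image_insert]
      refine ⟨s, fun u hu => ht'sub (Finset.mem_of_mem_erase hu), hsc, ?_⟩
      rw [hins, hct s w hsc hslt]
    intro t₁ t₂ h1 h2 hc1 hc2
    obtain ⟨s₁, hs₁sub, hs₁c, he₁⟩ := hkey t₁ h1 hc1
    obtain ⟨s₂, hs₂sub, hs₂c, he₂⟩ := hkey t₂ h2 hc2
    rw [he₁, he₂]
    exact hH'hom s₁ s₂ hs₁sub hs₂sub hs₁c hs₂c
end
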